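/- arXiv:math/0611956 — 4 statements merged into one kernel-verified Lean document; each statement's English description precedes it below -/
import Mathlib

section
/- Let a and b be non-adjacent vertices of P, and let D = ∏ x_i, the product taken over all diagonals T_i of T that cross M_{a,b}. Then D · (∑_{α ∈ 𝒫_T(a,b)} x(α)) is (the image in F of) a polynomial in x_1,…,x_{2n+3} each of whose coefficients is 0 or 1; in particular all coefficients are non-negative integers. (Positivity, Corollary 1.) -/
open scoped BigOperators Classical

noncomputable section

/-- The `k`-th vertex of the regular `(n+3)`-gon inscribed in the unit circle. -/
def vtx (n : ℕ) (k : Fin (n + 3)) : EuclideanSpace ℝ (Fin 2) :=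
  (WithLp.equiv 2 (Fin 2 → ℝ)).symm
    ![Real.cos (2 * Real.pi * k / (n + 3)), Real.sin (2 * Real.pi * k / (n + 3))]

/-- `u` and `v` are cyclically adjacent vertices of the `(n+3)`-gon. -/
def Adj (n : ℕ) (u v : Fin (n + 3)) : Prop :=
  (u.val + 1) % (n + 3) = v.val ∨ (v.val + 1) % (n + 3) = u.val

/-- The pair `(u, v)` is a diagonal of the polygon. -/
def IsDiag (n : ℕ) (u v : Fin (n + 3)) : Prop :=
  u ≠ v ∧ ¬ Adj n u v

/-- The open segments joining `u,v` and `w,z` intersect (the two edges cross). -/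
def Cross (n : ℕ) (u v w z : Fin (n + 3)) : Prop :=
  (openSegment ℝ (vtx n u) (vtx n v) ∩ openSegment ℝ (vtx n w) (vtx n z)).Nonempty

/-- `(u,v)` and `(w,z)` are the same unordered pair of vertices. -/
def SamePair (n : ℕ) (u v w z : Fin (n + 3)) : Prop :=
  (u = w ∧ v = z) ∨ (u = z ∧ v = w)

/-- A triangulation of the `(n+3)`-gon: `2n+3` edges, the first `n` of which are
pairwise noncrossing diagonals (a maximal such family), and the remaining `n+3`
are the boundary edges. -/
structure Triangulation (n : ℕ) where
  src : Fin (2 * n + 3) → Fin (n + 3)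
  tgt : Fin (2 * n + 3) → Fin (n + 3)
  diag : ∀ i : Fin (2 * n + 3), i.val < n → IsDiag n (src i) (tgt i)
  bdry : ∀ i : Fin (2 * n + 3), n ≤ i.val → Adj n (src i) (tgt i)
  inj : ∀ i j : Fin (2 * n + 3), SamePair n (src i) (tgt i) (src j) (tgt j) → i = j
  noncross : ∀ i j : Fin (2 * n + 3), i ≠ j → ¬ Cross n (src i) (tgt i) (src j) (tgt j)
  bdry_complete : ∀ u v : Fin (n + 3), Adj n u v →
    ∃ i : Fin (2 * n + 3), n ≤ i.val ∧ SamePair n (src i) (tgt i) u v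
  maximal : ∀ u v : Fin (n + 3), IsDiag n u v →
    (∀ i : Fin (2 * n + 3), i.val < n → ¬ Cross n u v (src i) (tgt i)) →
    ∃ i : Fin (2 * n + 3), i.val < n ∧ SamePair n (src i) (tgt i) u v

/-- The edge `T_i` joins the vertices `u` and `v`. -/
def Joins (n : ℕ) (T : Triangulation n) (i : Fin (2 * n + 3)) (u v : Fin (n + 3)) : Prop :=
  SamePair n (T.src i) (T.tgt i) u v

/-- The edge `T_i` crosses the segment from `u` to `v`. -/
def ECross (n : ℕ) (T : Triangulation n) (i : Fin (2 * n + 3)) (u v : Fin (n + 3)) : Prop :=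
  Cross n (T.src i) (T.tgt i) u v

/-- The set of crossing points of the edge `T_i` with the segment from `u` to `v`. -/
def crossPts (n : ℕ) (T : Triangulation n) (i : Fin (2 * n + 3)) (u v : Fin (n + 3)) :
    Set (EuclideanSpace ℝ (Fin 2)) :=
  openSegment ℝ (vtx n (T.src i)) (vtx n (T.tgt i)) ∩ openSegment ℝ (vtx n u) (vtx n v)

/-- A default edge index. -/
def edef (n : ℕ) : Fin (2 * n + 3) := ⟨0, by omega⟩

/-- The data of a path: the list of vertices `a_0,…,a_ℓ` and the list of
edge indices `i_1,…,i_ℓ`. -/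
abbrev PathData (n : ℕ) := List (Fin (n + 3)) × List (Fin (2 * n + 3))

/-- `p` is a `T`-path from `a` to `b`: conditions (T1)–(T6). -/
def IsTPath (n : ℕ) (T : Triangulation n) (a b : Fin (n + 3)) (p : PathData n) : Prop :=
  -- the vertex list has one more entry than the edge list
  p.1.length = p.2.length + 1 ∧
  -- (T1)
  p.1.head? = some a ∧ p.1.getLast? = some b ∧
  -- (T2)
  (∀ k, k < p.2.length →
      Joins n T (p.2.getD k (edef n)) (p.1.getD k a) (p.1.getD (k + 1) a)) ∧
  -- (T3)
  p.2.Nodup ∧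
  -- (T4)
  Odd p.2.length ∧
  -- (T5) (list position `k` carries the `(k+1)`-st edge of the path)
  (∀ k, k < p.2.length → k % 2 = 1 → ECross n T (p.2.getD k (edef n)) a b) ∧
  -- (T6)
  (∀ j k, j < k → k < p.2.length →
      ∀ x ∈ crossPts n T (p.2.getD j (edef n)) a b,
      ∀ y ∈ crossPts n T (p.2.getD k (edef n)) a b,
        dist (vtx n a) x < dist (vtx n a) y)

/-- `𝒫_T(a,b)`: the set of `T`-paths from `a` to `b`. -/
def TPaths (n : ℕ) (T : Triangulation n) (a b : Fin (n + 3)) : Set (PathData n) :=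
  { p | IsTPath n T a b p }

/-- `𝒫_T(a,b)_j`: `T`-paths from `a` to `b` whose first edge is `T_j`. -/
def TPathsFirst (n : ℕ) (T : Triangulation n) (a b : Fin (n + 3)) (j : Fin (2 * n + 3)) :
    Set (PathData n) :=
  { p ∈ TPaths n T a b | p.2.head? = some j }

/-- `𝒫_T(a,b)_{-j}`: `T`-paths from `a` to `b` not containing the index `j`. -/
def TPathsAvoid (n : ℕ) (T : Triangulation n) (a b : Fin (n + 3)) (j : Fin (2 * n + 3)) :
    Set (PathData n) :=
  { p ∈ TPaths n T a b | j ∉ p.2 }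

/-- `𝒫_T(a,b)_{jk}`: `T`-paths from `a` to `b` whose first two edges are `T_j, T_k`. -/
def TPathsFirst2 (n : ℕ) (T : Triangulation n) (a b : Fin (n + 3))
    (j k : Fin (2 * n + 3)) : Set (PathData n) :=
  { p ∈ TPathsFirst n T a b j | p.2[1]? = some k }

/-- `𝒫_T(a,b)_{j,-k}`: `T`-paths from `a` to `b` whose first edge is `T_j` and which do
not contain the index `k`. -/
def TPathsFirstAvoid (n : ℕ) (T : Triangulation n) (a b : Fin (n + 3))
    (j k : Fin (2 * n + 3)) : Set (PathData n) :=
  { p ∈ TPathsFirst n T a b j | k ∉ p.2 }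

/-- The ambient field `F = ℚ(x_1,…,x_{2n+3})`. -/
abbrev F (n : ℕ) := FractionRing (MvPolynomial (Fin (2 * n + 3)) ℚ)

/-- The variable `x_i ∈ F` attached to the edge `T_i`. -/
def X (n : ℕ) (i : Fin (2 * n + 3)) : F n :=
  algebraMap (MvPolynomial (Fin (2 * n + 3)) ℚ) (F n) (MvPolynomial.X i)

/-- `x(α)` for a path with edge list `es = [i_1,…,i_ℓ]`: the product of the
variables of the odd edges times the inverse of the product of the variables of
the even edges (list position `k` carries the `(k+1)`-st edge). -/
def pathX (n : ℕ) (es : List (Fin (2 * n + 3))) : F n :=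
  (∏ k ∈ (Finset.range es.length).filter (fun k => k % 2 = 0), X n (es.getD k (edef n))) *
  (∏ k ∈ (Finset.range es.length).filter (fun k => k % 2 = 1), X n (es.getD k (edef n)))⁻¹

end


noncomputable section
namespace TPGeo

abbrev E2 := EuclideanSpace ℝ (Fin 2)

/-- squared norm -/
def n2 (x : E2) : ℝ := x 0 ^ 2 + x 1 ^ 2

lemma n2_nonneg (x : E2) : 0 ≤ n2 x := by unfold n2; positivity

lemma norm_sq_eq_n2 (x : E2) : ‖x‖ ^ 2 = n2 x := by
  rw [EuclideanSpace.norm_eq, Real.sq_sqrt (by positivity)]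
  simp [n2, Fin.sum_univ_two]

lemma norm_eq_one_iff_n2 (x : E2) : ‖x‖ = 1 ↔ n2 x = 1 := by
  rw [← norm_sq_eq_n2]
  constructor
  · intro h; rw [h]; norm_num
  · intro h; nlinarith [norm_nonneg x]

lemma norm_lt_one_iff_n2 (x : E2) : ‖x‖ < 1 ↔ n2 x < 1 := by
  rw [← norm_sq_eq_n2]
  constructor
  · intro h; nlinarith [norm_nonneg x]
  · intro h; nlinarith [norm_nonneg x]

@[simp] lemma add_apply (x y : E2) (i : Fin 2) : (x + y) i = x i + y i := rfl
@[simp] lemma sub_apply (x y : E2) (i : Fin 2) : (x - y) i = x i - y i := rfl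
@[simp] lemma smul_apply (c : ℝ) (x : E2) (i : Fin 2) : (c • x) i = c * x i := rfl

lemma ext2 {x y : E2} (h0 : x 0 = y 0) (h1 : x 1 = y 1) : x = y := by
  ext i; fin_cases i <;> assumption

lemma n2_sub_pos {p q : E2} (h : p ≠ q) : 0 < n2 (q - p) := by
  rcases (n2_nonneg (q - p)).lt_or_eq with h1 | h1
  · exact h1
  · exfalso
    simp only [n2] at h1
    have c0 : (q - p) 0 = 0 := by nlinarith [sq_nonneg ((q-p) 0), sq_nonneg ((q-p) 1)]
    have c1 : (q - p) 1 = 0 := by nlinarith [sq_nonneg ((q-p) 0), sq_nonneg ((q-p) 1)]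
    simp only [sub_apply] at c0 c1
    exact h (ext2 (by linarith) (by linarith))

/-- squared norm along the line through two unit points -/
lemma n2_line_param {p q : E2} (hp : n2 p = 1) (hq : n2 q = 1) (s : ℝ) :
    n2 (p + s • (q - p)) = 1 + s * (s - 1) * n2 (q - p) := by
  simp only [n2, add_apply, smul_apply, sub_apply] at *
  linear_combination (1 - s) * hp + s * hq

/-- a unit point on the line through two distinct unit points is one of them -/
lemma unit_on_line {p q : E2} (hp : n2 p = 1) (hq : n2 q = 1) (hpq : p ≠ q) {s : ℝ}
    (h : n2 (p + s • (q - p)) = 1) : s = 0 ∨ s = 1 := by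
  rw [n2_line_param hp hq] at h
  have h2 := n2_sub_pos hpq
  have : s * (s - 1) = 0 := by nlinarith
  rcases mul_eq_zero.1 this with h | h
  · left; exact h
  · right; linarith

lemma mem_openSegment_iff {p q z : E2} :
    z ∈ openSegment ℝ p q ↔ ∃ s : ℝ, 0 < s ∧ s < 1 ∧ z = p + s • (q - p) := by
  rw [openSegment_eq_image']
  constructor
  · rintro ⟨s, ⟨h0, h1⟩, rfl⟩; exact ⟨s, h0, h1, rfl⟩
  · rintro ⟨s, h0, h1, rfl⟩; exact ⟨s, ⟨h0, h1⟩, rfl⟩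

/-- points of an open chord have squared norm < 1 -/
lemma open_chord_n2_lt {p q z : E2} (hp : n2 p = 1) (hq : n2 q = 1) (hpq : p ≠ q)
    (hz : z ∈ openSegment ℝ p q) : n2 z < 1 := by
  rcases mem_openSegment_iff.1 hz with ⟨s, h0, h1, rfl⟩
  rw [n2_line_param hp hq]
  have key : s * (s - 1) * n2 (q - p) < 0 := by
    apply mul_neg_of_neg_of_pos _ (n2_sub_pos hpq)
    nlinarith
  linarith

/-- determinant functional vanishing on the line through p, q -/
def detf (p q x : E2) : ℝ := (x 0 - p 0) * (q 1 - p 1) - (x 1 - p 1) * (q 0 - p 0)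

lemma detf_self_left (p q : E2) : detf p q p = 0 := by simp [detf]
lemma detf_self_right (p q : E2) : detf p q q = 0 := by simp only [detf]; ring

lemma detf_affine (p q x y : E2) (t : ℝ) :
    detf p q (t • x + (1 - t) • y) = t * detf p q x + (1 - t) * detf p q y := by
  simp only [detf, add_apply, smul_apply]; ring

lemma detf_zero_param {p q z : E2} (hpq : p ≠ q) (h : detf p q z = 0) :
    ∃ s : ℝ, z = p + s • (q - p) := by
  have hco : ∀ (s : ℝ) (i : Fin 2), (p + s • (q - p)) i = p i + s * (q i - p i) := by
    intro s i; simp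
  simp only [detf] at h
  by_cases h0 : q 0 - p 0 = 0
  · have h1 : q 1 - p 1 ≠ 0 := by
      intro hc; exact hpq (ext2 (by linarith) (by linarith))
    have hz0 : z 0 - p 0 = 0 := by
      have hh : (z 0 - p 0) * (q 1 - p 1) = 0 := by
        rw [h0] at h; linarith
      rcases mul_eq_zero.1 hh with h' | h'
      · exact h'
      · exact absurd h' h1
    refine ⟨(z 1 - p 1) / (q 1 - p 1), ext2 ?_ ?_⟩
    · rw [hco, h0]; simp; linarith
    · rw [hco]; field_simp; ring
  · refine ⟨(z 0 - p 0) / (q 0 - p 0), ext2 ?_ ?_⟩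
    · rw [hco]; field_simp; ring
    · rw [hco]; field_simp; linear_combination -h

/-- a point on the line of a chord, strictly inside the disc, is on the open chord -/
lemma on_line_in_disc_mem {p q z : E2} (hp : n2 p = 1) (hq : n2 q = 1) (hpq : p ≠ q)
    (hline : detf p q z = 0) (hdisc : n2 z < 1) : z ∈ openSegment ℝ p q := by
  rcases detf_zero_param hpq hline with ⟨s, rfl⟩
  rw [n2_line_param hp hq] at hdisc
  have h2 := n2_sub_pos hpq
  have hs : s * (s - 1) < 0 := by nlinarith
  have h0 : 0 < s := by nlinarith
  have h1 : s < 1 := by nlinarith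
  exact mem_openSegment_iff.2 ⟨s, h0, h1, rfl⟩

/-- a unit point on the line of a chord is an endpoint -/
lemma unit_on_chord_line {p q z : E2} (hp : n2 p = 1) (hq : n2 q = 1) (hpq : p ≠ q)
    (hline : detf p q z = 0) (hz : n2 z = 1) : z = p ∨ z = q := by
  rcases detf_zero_param hpq hline with ⟨s, rfl⟩
  rcases unit_on_line hp hq hpq hz with h | h <;> subst h
  · left; apply ext2 <;> simp
  · right; apply ext2 <;> simp

end TPGeo

noncomputable section
namespace TPGeo

lemma detf_on_line (p q : E2) (s : ℝ) : detf p q (p + s • (q - p)) = 0 := by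
  simp only [detf, add_apply, smul_apply, sub_apply]; ring

lemma dist_param (a b : E2) (θ : ℝ) (hθ : 0 ≤ θ) :
    dist a (a + θ • (b - a)) = θ * dist a b := by
  rw [dist_eq_norm, dist_eq_norm]
  have : a - (a + θ • (b - a)) = (-θ) • (b - a) := by module
  rw [this, norm_smul]
  have : a - b = (-1 : ℝ) • (b - a) := by module
  rw [this, norm_smul]
  simp [abs_of_nonneg hθ]

/-- two chords sharing the endpoint `a` do not cross -/
lemma shared_endpoint_no_cross {a w b : E2} (ha : n2 a = 1) (hw : n2 w = 1) (hb : n2 b = 1)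
    (haw : a ≠ w) (hab : a ≠ b) (hwb : w ≠ b) :
    ¬ (openSegment ℝ a w ∩ openSegment ℝ a b).Nonempty := by
  rintro ⟨z, hz1, hz2⟩
  rcases mem_openSegment_iff.1 hz1 with ⟨s, hs0, hs1, hzs⟩
  rcases mem_openSegment_iff.1 hz2 with ⟨t, ht0, ht1, hzt⟩
  have hco : ∀ i : Fin 2, s * (w i - a i) = t * (b i - a i) := by
    intro i
    have := congrArg (fun y : E2 => y i) (hzs.symm.trans hzt)
    simp only [add_apply, smul_apply, sub_apply] at this
    linarith
  have hs : s ≠ 0 := ne_of_gt hs0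
  have hw' : w = a + (t / s) • (b - a) := by
    apply ext2 <;>
    · simp only [add_apply, smul_apply, sub_apply]
      field_simp
      first
      | linear_combination hco 0 | linear_combination -(hco 0)
      | linear_combination hco 1 | linear_combination -(hco 1)
  have hunit : n2 (a + (t / s) • (b - a)) = 1 := by rw [← hw']; exact hw
  rcases unit_on_line ha hb hab hunit with h | h
  · have : t = 0 := by
      rw [div_eq_zero_iff] at h
      rcases h with h | h
      · exact h
      · exact absurd h hs
    linarith
  · apply hwb
    rw [hw', h]
    module

/-- if the functional of chord f changes sign between `u` and a point `x` of chord (u,w),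
then the chords cross -/
lemma cross_of_sign {f₁ f₂ u w x : E2} (hf₁ : n2 f₁ = 1) (hf₂ : n2 f₂ = 1) (hf : f₁ ≠ f₂)
    (hu : n2 u = 1) (hw : n2 w = 1) (huw : u ≠ w)
    (hx : x ∈ openSegment ℝ u w)
    (hsign : detf f₁ f₂ u * detf f₁ f₂ x < 0) :
    (openSegment ℝ u w ∩ openSegment ℝ f₁ f₂).Nonempty := by
  set du := detf f₁ f₂ u with hdu
  set dx := detf f₁ f₂ x with hdx
  have hne : dx - du ≠ 0 := by
    intro h
    have : dx = du := by linarith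
    rw [this] at hsign; nlinarith
  set t := dx / (dx - du) with hts
  have htm : t * (dx - du) = dx := div_mul_cancel₀ dx hne
  have ht0 : 0 < t ∧ t < 1 := by
    rcases lt_trichotomy du 0 with h | h | h
    · have hdxpos : 0 < dx := by nlinarith
      constructor <;> nlinarith
    · rw [h] at hsign; nlinarith
    · have hdxneg : dx < 0 := by nlinarith
      constructor <;> nlinarith
  clear_value t
  set z := t • u + (1 - t) • x with hz
  have hdz : detf f₁ f₂ z = 0 := by
    rw [hz, detf_affine, ← hdu, ← hdx]
    linear_combination -htm
  have hzseg : z ∈ openSegment ℝ u w := by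
    rcases mem_openSegment_iff.1 hx with ⟨sx, hsx0, hsx1, hxe⟩
    apply mem_openSegment_iff.2
    refine ⟨(1 - t) * sx, by nlinarith, by nlinarith, ?_⟩
    rw [hz, hxe]; module
  have hzn2 : n2 z < 1 := open_chord_n2_lt hu hw huw hzseg
  exact ⟨z, hzseg, on_line_in_disc_mem hf₁ hf₂ hf hdz hzn2⟩

set_option maxHeartbeats 1000000 in
/-- Key lemma: a chord f whose crossing point with (a,b) lies strictly between those of two
chords sharing endpoint u must itself have u as endpoint. -/
lemma middle_chord_endpoint
    {a b u e₂ g₂ f₁ f₂ xe xf xg : E2}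
    (ha : n2 a = 1) (hb : n2 b = 1) (hu : n2 u = 1) (he₂ : n2 e₂ = 1) (hg₂ : n2 g₂ = 1)
    (hf₁ : n2 f₁ = 1) (hf₂ : n2 f₂ = 1)
    (hab : a ≠ b) (hue : u ≠ e₂) (hug : u ≠ g₂) (hf : f₁ ≠ f₂)
    (haf₁ : a ≠ f₁) (haf₂ : a ≠ f₂) (hbf₁ : b ≠ f₁) (hbf₂ : b ≠ f₂)
    (hef : ¬ (openSegment ℝ u e₂ ∩ openSegment ℝ f₁ f₂).Nonempty)
    (hgf : ¬ (openSegment ℝ u g₂ ∩ openSegment ℝ f₁ f₂).Nonempty)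
    (hxe : xe ∈ openSegment ℝ u e₂) (hxe' : xe ∈ openSegment ℝ a b)
    (hxf : xf ∈ openSegment ℝ f₁ f₂) (hxf' : xf ∈ openSegment ℝ a b)
    (hxg : xg ∈ openSegment ℝ u g₂) (hxg' : xg ∈ openSegment ℝ a b)
    (hd1 : dist a xe < dist a xf) (hd2 : dist a xf < dist a xg) :
    u = f₁ ∨ u = f₂ := by
  rcases mem_openSegment_iff.1 hxe' with ⟨θe, hθe0, hθe1, hxeq⟩
  rcases mem_openSegment_iff.1 hxf' with ⟨θf, hθf0, hθf1, hxfq⟩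
  rcases mem_openSegment_iff.1 hxg' with ⟨θg, hθg0, hθg1, hxgq⟩
  have hdab : 0 < dist a b := dist_pos.2 hab
  have hde : dist a xe = θe * dist a b := by rw [hxeq]; exact dist_param a b θe hθe0.le
  have hdf : dist a xf = θf * dist a b := by rw [hxfq]; exact dist_param a b θf hθf0.le
  have hdg : dist a xg = θg * dist a b := by rw [hxgq]; exact dist_param a b θg hθg0.le
  have hθef : θe < θf := by rw [hde, hdf] at hd1; exact lt_of_mul_lt_mul_right hd1 dist_nonneg
  have hθfg : θf < θg := by rw [hdf, hdg] at hd2; exact lt_of_mul_lt_mul_right hd2 dist_nonneg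
  set Da := detf f₁ f₂ a with hDa
  set Db := detf f₁ f₂ b with hDb
  have hDa0 : Da ≠ 0 := by
    intro h
    rcases unit_on_chord_line hf₁ hf₂ hf h ha with h' | h'
    · exact haf₁ h'
    · exact haf₂ h'
  have hDb0 : Db ≠ 0 := by
    intro h
    rcases unit_on_chord_line hf₁ hf₂ hf h hb with h' | h'
    · exact hbf₁ h'
    · exact hbf₂ h'
  have haffab : ∀ θ : ℝ, detf f₁ f₂ (a + θ • (b - a)) = (1 - θ) * Da + θ * Db := by
    intro θ
    have : a + θ • (b - a) = (1 - θ) • a + (1 - (1 - θ)) • b := by module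
    rw [this, detf_affine]; ring
  have hdzf : detf f₁ f₂ xf = 0 := by
    rcases mem_openSegment_iff.1 hxf with ⟨s, _, _, rfl⟩
    exact detf_on_line f₁ f₂ s
  have hkey : (1 - θf) * Da + θf * Db = 0 := by rw [← haffab, ← hxfq]; exact hdzf
  have hDe : detf f₁ f₂ xe = (θe - θf) * (Db - Da) := by
    rw [hxeq, haffab]; linear_combination hkey
  have hDg : detf f₁ f₂ xg = (θg - θf) * (Db - Da) := by
    rw [hxgq, haffab]; linear_combination hkey
  have hΔ : Db - Da ≠ 0 := by
    intro h
    have : Da = 0 := by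
      have : Db = Da := by linarith
      rw [this] at hkey; linarith
    exact hDa0 this
  by_contra hcon
  push_neg at hcon
  have hDu : detf f₁ f₂ u ≠ 0 := by
    intro h
    rcases unit_on_chord_line hf₁ hf₂ hf h hu with h' | h'
    · exact hcon.1 h'
    · exact hcon.2 h'
  have hsq : 0 < (Db - Da) ^ 2 := lt_of_le_of_ne (sq_nonneg _) (Ne.symm (pow_ne_zero 2 hΔ))
  have hprod : detf f₁ f₂ xe * detf f₁ f₂ xg < 0 := by
    rw [hDe, hDg]
    nlinarith [mul_pos (mul_pos (show (0:ℝ) < θf - θe by linarith)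
      (show (0:ℝ) < θg - θf by linarith)) hsq]
  rcases lt_or_gt_of_ne hDu with h | h
  · rcases lt_trichotomy (detf f₁ f₂ xe) 0 with h' | h' | h'
    · have hg' : 0 < detf f₁ f₂ xg := by nlinarith
      exact hgf (cross_of_sign hf₁ hf₂ hf hu hg₂ hug hxg (mul_neg_of_neg_of_pos h hg'))
    · rw [h', zero_mul] at hprod; exact absurd hprod (lt_irrefl 0)
    · exact hef (cross_of_sign hf₁ hf₂ hf hu he₂ hue hxe (mul_neg_of_neg_of_pos h h'))
  · rcases lt_trichotomy (detf f₁ f₂ xe) 0 with h' | h' | h'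
    · exact hef (cross_of_sign hf₁ hf₂ hf hu he₂ hue hxe (mul_neg_of_pos_of_neg h h'))
    · rw [h', zero_mul] at hprod; exact absurd hprod (lt_irrefl 0)
    · have hg' : detf f₁ f₂ xg < 0 := by nlinarith
      exact hgf (cross_of_sign hf₁ hf₂ hf hu hg₂ hug hxg (mul_neg_of_pos_of_neg h hg'))

end TPGeo

noncomputable section
open Real
namespace TPGeo

/-- core trig estimate, equality cases -/
lemma cos_key_eq (N : ℕ) (hN : 1 ≤ N) (z : ℤ) (h : z % N = 0 ∨ z % N = 1) :
    Real.cos ((2 * (z:ℝ) - 1) * π / N) = Real.cos (π / N) := by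
  have hNz : (0:ℤ) < N := by exact_mod_cast hN
  have hNpos : (0:ℝ) < N := by exact_mod_cast hN
  rcases h with h | h
  · obtain ⟨q, rfl⟩ : ∃ q, z = N * q := ⟨z / N, by
      conv_lhs => rw [← Int.mul_ediv_add_emod z N]
      rw [h, add_zero]⟩
    have : (2 * ((N * q : ℤ):ℝ) - 1) * π / N = -(π / N) + (q : ℤ) * (2 * π) := by
      push_cast; field_simp; ring
    rw [this, Real.cos_add_int_mul_two_pi, Real.cos_neg]
  · obtain ⟨q, rfl⟩ : ∃ q, z = N * q + 1 := ⟨z / N, by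
      conv_lhs => rw [← Int.mul_ediv_add_emod z N]
      rw [h]⟩
    have : (2 * ((N * q + 1 : ℤ):ℝ) - 1) * π / N = π / N + (q : ℤ) * (2 * π) := by
      push_cast; field_simp; ring
    rw [this, Real.cos_add_int_mul_two_pi]

/-- core trig estimate, strict case -/
lemma cos_key_lt (N : ℕ) (hN : 1 ≤ N) (z : ℤ) (h : ¬ (z % N = 0 ∨ z % N = 1)) :
    Real.cos ((2 * (z:ℝ) - 1) * π / N) < Real.cos (π / N) := by
  have hNz : (0:ℤ) < N := by exact_mod_cast hN
  have hNpos : (0:ℝ) < N := by exact_mod_cast hN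
  have hπ := Real.pi_pos
  set m := z % (N:ℤ) with hm
  have hm0 : 0 ≤ m := Int.emod_nonneg z hNz.ne'
  have hmN : m < N := Int.emod_lt_of_pos z hNz
  have hzq : z = N * (z / N) + m := by rw [hm]; exact (Int.mul_ediv_add_emod z N).symm
  have hred : Real.cos ((2 * (z:ℝ) - 1) * π / N) = Real.cos ((2 * (m:ℝ) - 1) * π / N) := by
    have heq : (2 * (z:ℝ) - 1) * π / N = (2 * (m:ℝ) - 1) * π / N + ((z / N : ℤ) : ℝ) * (2 * π) := by
      conv_lhs => rw [hzq]
      push_cast; field_simp; ring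
    rw [heq]
    exact_mod_cast Real.cos_add_int_mul_two_pi _ (z / N)
  rw [hred]
  push_neg at h
  have hm2 : (2:ℤ) ≤ m := by omega
  have hmN1 : m ≤ (N:ℤ) - 1 := by omega
  have hm2R : (2:ℝ) ≤ (m:ℝ) := by exact_mod_cast hm2
  have hmN1R : (m:ℝ) ≤ (N:ℝ) - 1 := by exact_mod_cast hmN1
  set c := π / N with hc
  have hcpos : 0 < c := by rw [hc]; positivity
  have hπN : π = N * c := by rw [hc]; field_simp
  have hxc : (2 * (m:ℝ) - 1) * π / N = (2 * (m:ℝ) - 1) * c := by rw [hc]; ring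
  rw [hxc]
  set x := (2 * (m:ℝ) - 1) * c with hx
  have hx3 : 3 * c ≤ x := by rw [hx]; nlinarith
  have hxN : x ≤ (2 * (N:ℝ) - 3) * c := by rw [hx]; nlinarith
  have hNR : (1:ℝ) ≤ N := by exact_mod_cast hN
  rcases le_or_gt x π with hle | hgt
  · exact Real.cos_lt_cos_of_nonneg_of_le_pi hcpos.le hle (by linarith)
  · have hcos : Real.cos x = Real.cos (2 * π - x) := (Real.cos_two_pi_sub x).symm
    rw [hcos]
    apply Real.cos_lt_cos_of_nonneg_of_le_pi hcpos.le (by linarith)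
    have : 3 * c ≤ 2 * π - x := by
      have : 2 * π = 2 * (N:ℝ) * c := by rw [hπN]; ring
      nlinarith
    linarith

end TPGeo

noncomputable section
open Real

namespace TPGeo

lemma vtx_apply0 (n : ℕ) (k : Fin (n+3)) : vtx n k 0 = Real.cos (2 * π * k / (n + 3)) := by
  simp [vtx, WithLp.equiv_symm_apply, PiLp.toLp_apply]

lemma vtx_apply1 (n : ℕ) (k : Fin (n+3)) : vtx n k 1 = Real.sin (2 * π * k / (n + 3)) := by
  simp [vtx, WithLp.equiv_symm_apply, PiLp.toLp_apply]

lemma n2_vtx (n : ℕ) (k : Fin (n+3)) : n2 (vtx n k) = 1 := by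
  simp only [n2, vtx_apply0, vtx_apply1]
  exact Real.cos_sq_add_sin_sq _

lemma vtx_inj {n : ℕ} {j k : Fin (n+3)} (h : vtx n j = vtx n k) : j = k := by
  have h0 := congrArg (fun x : E2 => x 0) h
  have h1 := congrArg (fun x : E2 => x 1) h
  simp only [vtx_apply0, vtx_apply1] at h0 h1
  have hN : (0:ℝ) < (n:ℝ) + 3 := by positivity
  set θj := 2 * π * (j:ℝ) / ((n:ℝ) + 3) with hθj
  set θk := 2 * π * (k:ℝ) / ((n:ℝ) + 3) with hθk
  have hcos : Real.cos (θj - θk) = 1 := by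
    rw [Real.cos_sub, h0, h1]
    linear_combination Real.sin_sq_add_cos_sq θk
  rcases (Real.cos_eq_one_iff _).1 hcos with ⟨z, hz⟩
  have hzN : (z:ℝ) * ((n:ℝ) + 3) = (j:ℝ) - (k:ℝ) := by
    rw [hθj, hθk] at hz
    have hπ := Real.pi_pos
    field_simp at hz
    nlinarith [hz]
  have hjb : (j:ℝ) < (n:ℝ) + 3 := by exact_mod_cast j.isLt
  have hkb : (k:ℝ) < (n:ℝ) + 3 := by exact_mod_cast k.isLt
  have hj0 : (0:ℝ) ≤ (j:ℝ) := by positivity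
  have hk0 : (0:ℝ) ≤ (k:ℝ) := by positivity
  have hz0 : z = 0 := by
    have hlt : (z:ℝ) < 1 := by nlinarith
    have hgt : (-1:ℝ) < (z:ℝ) := by nlinarith
    have hlt' : z < 1 := by exact_mod_cast hlt
    have hgt' : (-1:ℤ) < z := by exact_mod_cast hgt
    omega
  rw [hz0] at hzN
  simp at hzN
  have : (j:ℝ) = (k:ℝ) := by linarith
  have : j.val = k.val := by exact_mod_cast this
  exact Fin.ext this

end TPGeo

noncomputable section
open Real
namespace TPGeo

/-- linear functional used for separating a boundary edge -/
def Lf (φ : ℝ) (x : E2) : ℝ := x 0 * Real.cos φ + x 1 * Real.sin φ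

lemma Lf_affine (φ : ℝ) (x y : E2) (t : ℝ) :
    Lf φ (x + t • (y - x)) = (1 - t) * Lf φ x + t * Lf φ y := by
  simp only [Lf, add_apply, smul_apply, sub_apply]; ring

lemma emod_cases {N d : ℤ} (hN : 0 < N) (hlb : -N < d) (hub : d < N) {r : ℤ}
    (h : d % N = r) : d = r ∨ d = r - N := by
  rcases le_or_gt 0 d with hd | hd
  · left; rw [← h, Int.emod_eq_of_lt hd hub]
  · right
    have h2 : (d + N) % N = r := by
      rw [show (d + N) % N = d % N by simp [Int.add_emod]]; exact h
    have h3 : d + N = r := by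
      rw [← h2, Int.emod_eq_of_lt (by linarith) (by linarith)]
    linarith

lemma adj_no_cross_half {n : ℕ} {u v a b : Fin (n+3)}
    (huv : (u.val + 1) % (n + 3) = v.val) (hab : a ≠ b)
    (hnadj : ¬ Adj n a b) :
    ¬ (openSegment ℝ (vtx n u) (vtx n v) ∩ openSegment ℝ (vtx n a) (vtx n b)).Nonempty := by
  have hπ := Real.pi_pos
  have hN : 1 ≤ n + 3 := by omega
  have hNpos : (0:ℝ) < (n:ℝ) + 3 := by positivity
  have hcast : ((n + 3 : ℕ) : ℝ) = (n:ℝ) + 3 := by push_cast; ring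
  set φ := (2 * (u.val:ℝ) + 1) * π / ((n:ℝ) + 3) with hφ
  have hLvtx : ∀ j : Fin (n+3),
      Lf φ (vtx n j) =
        Real.cos ((2 * ((((j.val:ℤ) - (u.val:ℤ)):ℤ):ℝ) - 1) * π / ((n+3 : ℕ):ℝ)) := by
    intro j
    simp only [Lf, vtx_apply0, vtx_apply1, ← Real.cos_sub]
    congr 1
    rw [hφ, hcast]
    push_cast
    field_simp
    ring
  -- the boundary-edge value
  have hvu : Lf φ (vtx n u) = Real.cos (π / ((n+3 : ℕ):ℝ)) := by
    rw [hLvtx u]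
    apply cos_key_eq _ hN
    left
    simp
  have hNz : (0:ℤ) < ((n+3 : ℕ):ℤ) := by positivity
  have hvmod : ((v.val:ℤ) - (u.val:ℤ)) % ((n+3 : ℕ):ℤ) = 1 := by
    have h1 : u.val < n + 3 := u.isLt
    rcases Nat.lt_or_ge (u.val + 1) (n + 3) with h | h
    · have hv : v.val = u.val + 1 := by rw [← huv, Nat.mod_eq_of_lt h]
      have hd : (v.val:ℤ) - (u.val:ℤ) = 1 := by rw [hv]; push_cast; ring
      rw [hd]
      exact Int.emod_eq_of_lt (by norm_num) (by exact_mod_cast (by omega : 1 < n + 3))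
    · have hu' : u.val + 1 = n + 3 := by omega
      have hv : v.val = 0 := by rw [← huv, hu', Nat.mod_self]
      have hd : (v.val:ℤ) - (u.val:ℤ) = 1 - ((n+3 : ℕ):ℤ) := by
        rw [hv]; push_cast; omega
      have hrw : (1:ℤ) - ((n+3 : ℕ):ℤ) = 1 + ((n+3 : ℕ):ℤ) * (-1) := by ring
      rw [hd, hrw, Int.add_mul_emod_self_left]
      exact Int.emod_eq_of_lt (by norm_num) (by exact_mod_cast (by omega : 1 < n + 3))
  have hvv : Lf φ (vtx n v) = Real.cos (π / ((n+3 : ℕ):ℝ)) := by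
    rw [hLvtx v]
    apply cos_key_eq _ hN
    right
    exact hvmod
  have hlt : ∀ j : Fin (n+3), j ≠ u → j ≠ v → Lf φ (vtx n j) < Real.cos (π / ((n+3 : ℕ):ℝ)) := by
    intro j hju hjv
    rw [hLvtx j]
    apply cos_key_lt _ hN
    have h1 : u.val < n + 3 := u.isLt
    have h2 : v.val < n + 3 := v.isLt
    have h3 : j.val < n + 3 := j.isLt
    have hju' : j.val ≠ u.val := fun hc => hju (Fin.ext hc)
    have hjv' : j.val ≠ v.val := fun hc => hjv (Fin.ext hc)
    have hlb : -((n+3 : ℕ):ℤ) < (j.val:ℤ) - (u.val:ℤ) := by push_cast; omega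
    have hub : (j.val:ℤ) - (u.val:ℤ) < ((n+3 : ℕ):ℤ) := by push_cast; omega
    rintro (h | h)
    · rcases emod_cases hNz hlb hub h with h' | h'
      · exact hju' (by omega)
      · have : ((n+3:ℕ):ℤ) ∣ ((j.val:ℤ) - (u.val:ℤ)) := ⟨-1, by linarith⟩
        push_cast at h'
        omega
    · rcases emod_cases hNz hlb hub h with h' | h'
      · -- j = u + 1
        have hj : j.val = u.val + 1 := by omega
        apply hjv'
        rw [← huv, ← hj, Nat.mod_eq_of_lt h3]
      · -- j = u + 1 - N : so u = n+2, j = 0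
        have hu' : u.val = n + 2 ∧ j.val = 0 := by
          constructor <;> omega
        apply hjv'
        rw [← huv, hu'.1, hu'.2]
        simp [Nat.mod_self]
  have hle : ∀ j : Fin (n+3), Lf φ (vtx n j) ≤ Real.cos (π / ((n+3 : ℕ):ℝ)) := by
    intro j
    by_cases h1 : j = u
    · rw [h1, hvu]
    by_cases h2 : j = v
    · rw [h2, hvv]
    exact (hlt j h1 h2).le
  rintro ⟨z, hz1, hz2⟩
  rcases mem_openSegment_iff.1 hz1 with ⟨t, ht0, ht1, rfl⟩
  rcases mem_openSegment_iff.1 hz2 with ⟨s, hs0, hs1, heq⟩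
  have hLz : Lf φ (vtx n u + t • (vtx n v - vtx n u)) = Real.cos (π / ((n+3 : ℕ):ℝ)) := by
    rw [Lf_affine, hvu, hvv]; ring
  have hstrict : Lf φ (vtx n a) < Real.cos (π / ((n+3 : ℕ):ℝ)) ∨
      Lf φ (vtx n b) < Real.cos (π / ((n+3 : ℕ):ℝ)) := by
    by_cases ha : a = u ∨ a = v
    · right
      apply hlt b
      · intro hc
        rcases ha with h | h
        · exact hab (h.trans hc.symm)
        · exact hnadj (Or.inr (by rw [hc, h]; exact huv))
      · intro hc
        rcases ha with h | h
        · exact hnadj (Or.inl (by rw [h, hc]; exact huv))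
        · exact hab (h.trans hc.symm)
    · push_neg at ha
      exact Or.inl (hlt a ha.1 ha.2)
  have hLz2 : Lf φ (vtx n u + t • (vtx n v - vtx n u)) =
      (1 - s) * Lf φ (vtx n a) + s * Lf φ (vtx n b) := by rw [heq, Lf_affine]
  rw [hLz] at hLz2
  have hs1' : (0:ℝ) < 1 - s := by linarith
  rcases hstrict with h | h
  · have t1 := mul_lt_mul_of_pos_left h hs1'
    have t2 := mul_le_mul_of_nonneg_left (hle b) hs0.le
    nlinarith
  · have t1 := mul_le_mul_of_nonneg_left (hle a) hs1'.le
    have t2 := mul_lt_mul_of_pos_left h hs0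
    nlinarith

end TPGeo

noncomputable section
namespace TPGeo

lemma adj_no_cross {n : ℕ} {u v a b : Fin (n+3)} (huv : Adj n u v) (hab : a ≠ b)
    (hnadj : ¬ Adj n a b) :
    ¬ (openSegment ℝ (vtx n u) (vtx n v) ∩ openSegment ℝ (vtx n a) (vtx n b)).Nonempty := by
  rcases huv with h | h
  · exact adj_no_cross_half h hab hnadj
  · rw [openSegment_symm]
    exact adj_no_cross_half h hab hnadj

end TPGeo


noncomputable section
namespace TPComb
open Finset TPGeo

variable {n : ℕ}

lemma adj_ne {u v : Fin (n+3)} (h : Adj n u v) : u ≠ v := by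
  rintro rfl
  have hb := u.isLt
  rcases h with h | h <;>
  · rcases Nat.lt_or_ge (u.val + 1) (n + 3) with h' | h'
    · rw [Nat.mod_eq_of_lt h'] at h; omega
    · have : u.val + 1 = n + 3 := by omega
      rw [this, Nat.mod_self] at h; omega

lemma src_ne_tgt (T : Triangulation n) (i : Fin (2*n+3)) : T.src i ≠ T.tgt i := by
  rcases lt_or_ge i.val n with h | h
  · exact (T.diag i h).1
  · exact adj_ne (T.bdry i h)

lemma samePair_symm {u v w z : Fin (n+3)} (h : SamePair n u v w z) : SamePair n w z u v := by
  unfold SamePair at *; tauto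

lemma samePair_swap {u v w z : Fin (n+3)} (h : SamePair n u v w z) : SamePair n u v z w := by
  unfold SamePair at *; tauto

lemma samePair_mem {s t u v : Fin (n+3)} (h : SamePair n s t u v) : u = s ∨ u = t := by
  unfold SamePair at h; tauto

lemma samePair_det {s t u v v' : Fin (n+3)} (hst : s ≠ t)
    (h1 : SamePair n s t u v) (h2 : SamePair n s t u v') : v = v' := by
  unfold SamePair at h1 h2
  rcases h1 with ⟨rfl, rfl⟩ | ⟨rfl, rfl⟩ <;>
    rcases h2 with ⟨h2a, h2b⟩ | ⟨h2a, h2b⟩ <;> tauto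

lemma samePair_trans {s t u v u' v' : Fin (n+3)} (h1 : SamePair n s t u v)
    (h2 : SamePair n s t u' v') : SamePair n u v u' v' := by
  unfold SamePair at *
  rcases h1 with ⟨rfl, rfl⟩ | ⟨rfl, rfl⟩ <;> tauto

variable {T : Triangulation n} {a b : Fin (n+3)}

/-- anatomy of a T-path -/
structure PathAnat (n : ℕ) (T : Triangulation n) (a b : Fin (n+3)) (p : PathData n) : Prop where
  hlen : p.1.length = p.2.length + 1
  hvs0 : p.1.getD 0 a = a
  hvslast : p.1.getD p.2.length a = b
  hjoins : ∀ k, k < p.2.length →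
    Joins n T (p.2.getD k (edef n)) (p.1.getD k a) (p.1.getD (k+1) a)
  hnd : p.2.Nodup
  hodd : Odd p.2.length
  hT5 : ∀ k, k < p.2.length → k % 2 = 1 → ECross n T (p.2.getD k (edef n)) a b
  hT6 : ∀ j k, j < k → k < p.2.length →
      ∀ x ∈ crossPts n T (p.2.getD j (edef n)) a b,
      ∀ y ∈ crossPts n T (p.2.getD k (edef n)) a b,
        dist (vtx n a) x < dist (vtx n a) y

lemma isTPath_anat {p : PathData n} (hp : IsTPath n T a b p) : PathAnat n T a b p := by
  obtain ⟨hlen, hhead, hlast, hjoins, hnd, hodd, hT5, hT6⟩ := hp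
  have hpos : 0 < p.1.length := by omega
  refine ⟨hlen, ?_, ?_, hjoins, hnd, hodd, hT5, hT6⟩
  · rw [List.getD_eq_getElem _ _ hpos]
    have := List.head?_eq_getElem? (l := p.1)
    rw [hhead, List.getElem?_eq_getElem hpos] at this
    exact (Option.some_inj.1 this).symm
  · have hl : p.2.length < p.1.length := by omega
    rw [List.getD_eq_getElem _ _ hl]
    have := List.getLast?_eq_getElem? (l := p.1)
    rw [hlast] at this
    have h2 : p.1.length - 1 = p.2.length := by omega
    rw [h2, List.getElem?_eq_getElem hl] at this
    exact (Option.some_inj.1 this).symm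

/-- the vertex list is determined by the edge list -/
lemma vs_eq_of_es_eq {p q : PathData n} (hp : PathAnat n T a b p) (hq : PathAnat n T a b q)
    (h : p.2 = q.2) : p.1 = q.1 := by
  have hlen : p.1.length = q.1.length := by rw [hp.hlen, hq.hlen, h]
  have key : ∀ k, k ≤ p.2.length → p.1.getD k a = q.1.getD k a := by
    intro k
    induction k with
    | zero => intro _; rw [hp.hvs0, hq.hvs0]
    | succ m ih =>
      intro hm
      have hm' : m < p.2.length := by omega
      have h1 : SamePair n (T.src (p.2.getD m (edef n))) (T.tgt (p.2.getD m (edef n)))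
          (p.1.getD m a) (p.1.getD (m+1) a) := hp.hjoins m hm'
      have h2 : SamePair n (T.src (q.2.getD m (edef n))) (T.tgt (q.2.getD m (edef n)))
          (q.1.getD m a) (q.1.getD (m+1) a) := hq.hjoins m (by rw [← h]; exact hm')
      rw [← h, ← ih (by omega)] at h2
      exact samePair_det (src_ne_tgt T _) h1 h2
  apply List.ext_getElem hlen
  intro k h₁ h₂
  have hk : k ≤ p.2.length := by have := hp.hlen; omega
  have hkey := key k hk
  rwa [List.getD_eq_getElem _ _ h₁, List.getD_eq_getElem _ _ h₂] at hkey


/-! ### Finsets of odd/even positions and their edges -/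

def pos0 {n : ℕ} (es : List (Fin (2*n+3))) : Finset ℕ :=
  (Finset.range es.length).filter (fun k => k % 2 = 0)

def pos1 {n : ℕ} (es : List (Fin (2*n+3))) : Finset ℕ :=
  (Finset.range es.length).filter (fun k => k % 2 = 1)

def oddsF {n : ℕ} (es : List (Fin (2*n+3))) : Finset (Fin (2*n+3)) :=
  (pos0 es).image (fun k => es.getD k (edef n))

def evensF {n : ℕ} (es : List (Fin (2*n+3))) : Finset (Fin (2*n+3)) :=
  (pos1 es).image (fun k => es.getD k (edef n))

def Dset (n : ℕ) (T : Triangulation n) (a b : Fin (n+3)) : Finset (Fin (2*n+3)) :=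
  Finset.univ.filter (fun i : Fin (2 * n + 3) => i.val < n ∧ ECross n T i a b)

lemma getD_injOn {es : List (Fin (2*n+3))} (hnd : es.Nodup) {j k : ℕ}
    (hj : j < es.length) (hk : k < es.length)
    (h : es.getD j (edef n) = es.getD k (edef n)) : j = k := by
  rw [List.getD_eq_getElem _ _ hj, List.getD_eq_getElem _ _ hk] at h
  have hinj := List.nodup_iff_injective_get.1 hnd
  have h2 := hinj (a₁ := ⟨j, hj⟩) (a₂ := ⟨k, hk⟩) (by simpa using h)
  exact congrArg Fin.val h2

lemma mem_oddsF {es : List (Fin (2*n+3))} {i : Fin (2*n+3)} :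
    i ∈ oddsF es ↔ ∃ k, k < es.length ∧ k % 2 = 0 ∧ es.getD k (edef n) = i := by
  simp only [oddsF, pos0, Finset.mem_image, Finset.mem_filter, Finset.mem_range]
  constructor
  · rintro ⟨k, ⟨hk, hk2⟩, rfl⟩; exact ⟨k, hk, hk2, rfl⟩
  · rintro ⟨k, hk, hk2, rfl⟩; exact ⟨k, ⟨hk, hk2⟩, rfl⟩

lemma mem_evensF {es : List (Fin (2*n+3))} {i : Fin (2*n+3)} :
    i ∈ evensF es ↔ ∃ k, k < es.length ∧ k % 2 = 1 ∧ es.getD k (edef n) = i := by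
  simp only [evensF, pos1, Finset.mem_image, Finset.mem_filter, Finset.mem_range]
  constructor
  · rintro ⟨k, ⟨hk, hk2⟩, rfl⟩; exact ⟨k, hk, hk2, rfl⟩
  · rintro ⟨k, hk, hk2, rfl⟩; exact ⟨k, ⟨hk, hk2⟩, rfl⟩

lemma odds_evens_disjoint {es : List (Fin (2*n+3))} (hnd : es.Nodup) {i : Fin (2*n+3)}
    (h0 : i ∈ oddsF es) (h1 : i ∈ evensF es) : False := by
  rcases mem_oddsF.1 h0 with ⟨k0, hk0, hk02, hk0e⟩
  rcases mem_evensF.1 h1 with ⟨k1, hk1, hk12, hk1e⟩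
  have := getD_injOn hnd hk0 hk1 (hk0e.trans hk1e.symm)
  omega

/-- boundary edges never cross the diagonal (a,b) -/
lemma ecross_lt_n (hab : a ≠ b) (hnadj : ¬ Adj n a b) {i : Fin (2*n+3)}
    (h : ECross n T i a b) : i.val < n := by
  by_contra h'
  exact adj_no_cross (T.bdry i (by omega)) hab hnadj h

lemma evensF_subset_Dset {p : PathData n} (hp : PathAnat n T a b p)
    (hab : a ≠ b) (hnadj : ¬ Adj n a b) : evensF p.2 ⊆ Dset n T a b := by
  intro i hi
  rcases mem_evensF.1 hi with ⟨k, hk, hk2, rfl⟩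
  have hc := hp.hT5 k hk hk2
  exact Finset.mem_filter.2 ⟨Finset.mem_univ _, ecross_lt_n hab hnadj hc, hc⟩

/-- a list of odd length 2m+1 has m odd positions -/
lemma pos1_eq_image {l : ℕ} {m : ℕ} (h : l = 2 * m + 1) :
    (Finset.range l).filter (fun k => k % 2 = 1) =
      (Finset.range m).image (fun j => 2 * j + 1) := by
  ext k
  simp only [Finset.mem_filter, Finset.mem_range, Finset.mem_image]
  constructor
  · rintro ⟨hk, hk2⟩; exact ⟨k / 2, by omega, by omega⟩
  · rintro ⟨j, hj, rfl⟩; omega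

lemma evensF_card {p : PathData n} (hp : PathAnat n T a b p) :
    p.2.length = 2 * (evensF p.2).card + 1 := by
  rcases hp.hodd with ⟨m, hm⟩
  have hm' : p.2.length = 2 * m + 1 := by omega
  have h1 : (pos1 p.2).card = m := by
    rw [pos1, pos1_eq_image hm', Finset.card_image_of_injective _ (fun x y h => by omega),
      Finset.card_range]
  have h2 : (evensF p.2).card = (pos1 p.2).card := by
    rw [evensF]
    apply Finset.card_image_of_injOn
    intro x hx y hy hxy
    simp only [pos1, Finset.coe_filter, Set.mem_setOf_eq, Finset.mem_range] at hx hy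
    exact getD_injOn hp.hnd hx.1 hy.1 hxy
  omega

/-! ### products and monomials -/

lemma prodX_eq_monomial (s : Finset (Fin (2*n+3))) :
    (∏ i ∈ s, (MvPolynomial.X i : MvPolynomial (Fin (2*n+3)) ℚ)) =
      MvPolynomial.monomial (∑ i ∈ s, Finsupp.single i 1) 1 := by
  classical
  induction s using Finset.induction_on with
  | empty => simp
  | insert _ _ hns ih =>
    rw [Finset.prod_insert hns, Finset.sum_insert hns, ih, MvPolynomial.X,
      MvPolynomial.monomial_mul, one_mul]

lemma expv_apply (s : Finset (Fin (2*n+3))) (i : Fin (2*n+3)) :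
    (∑ j ∈ s, Finsupp.single j (1:ℕ)) i = if i ∈ s then 1 else 0 := by
  classical
  rw [Finsupp.finset_sum_apply]
  simp only [Finsupp.single_apply]
  rw [Finset.sum_ite_eq' s i (fun _ => (1:ℕ))]

/-- the (Laurent-free) monomial attached to a path -/
def monoP (n : ℕ) (T : Triangulation n) (a b : Fin (n+3)) (p : PathData n) :
    MvPolynomial (Fin (2*n+3)) ℚ :=
  (∏ i ∈ oddsF p.2, MvPolynomial.X i) *
  (∏ i ∈ Dset n T a b \ evensF p.2, MvPolynomial.X i)

lemma monoP_eq_monomial (p : PathData n) :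
    monoP n T a b p = MvPolynomial.monomial
      ((∑ i ∈ oddsF p.2, Finsupp.single i 1) +
        ∑ i ∈ Dset n T a b \ evensF p.2, Finsupp.single i 1) 1 := by
  rw [monoP, prodX_eq_monomial, prodX_eq_monomial, MvPolynomial.monomial_mul, one_mul]

/-! ### finiteness -/

lemma tpaths_finite : (TPaths n T a b).Finite := by
  apply Set.Finite.subset
    (Set.Finite.prod (List.finite_length_le (Fin (n+3)) (2*n+4))
      (List.finite_length_le (Fin (2*n+3)) (2*n+3)))
  rintro ⟨vs, es⟩ hmem
  have hp := isTPath_anat hmem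
  have h2 : es.length ≤ 2*n+3 := by
    have h3 := hp.hnd.length_le_card
    simpa using h3
  constructor
  · simp only [Set.mem_setOf_eq]
    have h4 := hp.hlen
    simp only at h4 ⊢
    omega
  · simpa using h2


/-! ### geometric path lemmas -/

lemma samePair_ne {s t u v : Fin (n+3)} (h : SamePair n s t u v) (hst : s ≠ t) : u ≠ v := by
  unfold SamePair at h
  rcases h with ⟨rfl, rfl⟩ | ⟨rfl, rfl⟩
  · exact hst
  · exact hst.symm

lemma vtx_ne {u v : Fin (n+3)} (h : u ≠ v) : vtx n u ≠ vtx n v := fun hc => h (vtx_inj hc)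

lemma openSeg_pair_eq {s t u v : Fin (n+3)} (h : SamePair n s t u v) :
    openSegment ℝ (vtx n s) (vtx n t) = openSegment ℝ (vtx n u) (vtx n v) := by
  unfold SamePair at h
  rcases h with ⟨rfl, rfl⟩ | ⟨rfl, rfl⟩
  · rfl
  · exact openSegment_symm ℝ _ _

lemma even_edge_not_ab {p : PathData n} (hp : PathAnat n T a b p) (hab : a ≠ b)
    {k : ℕ} (hk : k < p.2.length) (hk2 : k % 2 = 1) :
    ¬ SamePair n (T.src (p.2.getD k (edef n))) (T.tgt (p.2.getD k (edef n))) a b := by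
  intro hSP
  have hvab : vtx n a ≠ vtx n b := vtx_ne hab
  have hD : (0:ℝ) < dist (vtx n a) (vtx n b) := dist_pos.2 hvab
  rcases hp.hodd with ⟨m, hm⟩
  have hm' : p.2.length = 2*m+1 := by omega
  rcases Nat.lt_or_ge p.2.length 5 with hlen | hlen
  · -- length 3 case
    have hl3 : p.2.length = 3 := by omega
    have hk1 : k = 1 := by omega
    subst hk1
    have hj0 := hp.hjoins 0 (by omega)
    have hj1 := hp.hjoins 1 (by omega)
    have hj2 := hp.hjoins 2 (by omega)
    rw [hp.hvs0] at hj0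
    have hlast := hp.hvslast
    rw [hl3] at hlast
    have hne1 : a ≠ p.1.getD 1 a := samePair_ne hj0 (src_ne_tgt T _)
    have htr : SamePair n a b (p.1.getD 1 a) (p.1.getD 2 a) := samePair_trans hSP hj1
    have hv2 : p.1.getD 2 a = a := by
      unfold SamePair at htr
      rcases htr with ⟨h1, h2⟩ | ⟨h1, h2⟩
      · exact absurd h1 hne1
      · exact h1.symm
    rw [hv2, hlast] at hj2
    have := T.inj _ _ (samePair_trans (samePair_symm hSP) (samePair_symm hj2))
    have := getD_injOn hp.hnd (show 1 < p.2.length by omega) (show 2 < p.2.length by omega) this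
    omega
  · -- length ≥ 5 : there is another odd position
    set k' := if k = 1 then 3 else 1 with hk'def
    have hk'lt : k' < p.2.length := by rw [hk'def]; split <;> omega
    have hk'2 : k' % 2 = 1 := by rw [hk'def]; split <;> omega
    have hkk' : k ≠ k' := by rw [hk'def]; split <;> omega
    by_cases hSP' : SamePair n (T.src (p.2.getD k' (edef n))) (T.tgt (p.2.getD k' (edef n))) a b
    · have := T.inj _ _ (samePair_trans (samePair_symm hSP) (samePair_symm hSP'))
      have := getD_injOn hp.hnd hk'lt hk this.symm
      omega
    · obtain ⟨y, hy1, hy2⟩ := hp.hT5 k' hk'lt hk'2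
      rcases mem_openSegment_iff.1 hy2 with ⟨θ, hθ0, hθ1, hyeq⟩
      have hyd : dist (vtx n a) y = θ * dist (vtx n a) (vtx n b) := by
        rw [hyeq]; exact dist_param _ _ θ hθ0.le
      have hxmem : ∀ θx : ℝ, 0 < θx → θx < 1 →
          (vtx n a + θx • (vtx n b - vtx n a)) ∈ crossPts n T (p.2.getD k (edef n)) a b := by
        intro θx h0 h1
        have hmem : (vtx n a + θx • (vtx n b - vtx n a)) ∈
            openSegment ℝ (vtx n a) (vtx n b) := mem_openSegment_iff.2 ⟨θx, h0, h1, rfl⟩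
        exact ⟨(openSeg_pair_eq hSP).symm ▸ hmem, hmem⟩
      rcases lt_or_gt_of_ne hkk' with hlt | hgt
      · -- k < k' : every x in crossPts k is closer than y; contradiction with x beyond θ
        have hT6 := hp.hT6 k k' hlt hk'lt _ (hxmem ((θ+1)/2) (by linarith) (by linarith))
          y ⟨hy1, hy2⟩
        rw [hyd, dist_param _ _ _ (by linarith)] at hT6
        nlinarith
      · -- k' < k : y is closer than every x in crossPts k; contradiction with x before θ
        have hT6 := hp.hT6 k' k hgt hk y ⟨hy1, hy2⟩ _ (hxmem (θ/2) (by linarith) (by linarith))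
        rw [hyd, dist_param _ _ _ (by linarith)] at hT6
        nlinarith

/-- endpoints of an edge crossing (a,b), other than the pair (a,b) itself, avoid a and b -/
lemma chord_endpoint_ne {u v : Fin (n+3)} (hab : a ≠ b) (huv : u ≠ v)
    (hcross : (openSegment ℝ (vtx n u) (vtx n v) ∩
      openSegment ℝ (vtx n a) (vtx n b)).Nonempty)
    (hnotab : ¬ SamePair n u v a b) :
    u ≠ a ∧ u ≠ b ∧ v ≠ a ∧ v ≠ b := by
  refine ⟨?_, ?_, ?_, ?_⟩
  · intro h
    have hvb : v ≠ b := fun hc => hnotab (Or.inl ⟨h, hc⟩)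
    have hav : a ≠ v := by rw [← h]; exact huv
    rw [h] at hcross
    exact shared_endpoint_no_cross (n2_vtx n a) (n2_vtx n v) (n2_vtx n b)
      (vtx_ne hav) (vtx_ne hab) (vtx_ne hvb) hcross
  · intro h
    have hva : v ≠ a := fun hc => hnotab (Or.inr ⟨h, hc⟩)
    have hbv : b ≠ v := by rw [← h]; exact huv
    rw [h, openSegment_symm ℝ (vtx n a) (vtx n b)] at hcross
    exact shared_endpoint_no_cross (n2_vtx n b) (n2_vtx n v) (n2_vtx n a)
      (vtx_ne hbv) (vtx_ne (Ne.symm hab)) (vtx_ne hva) hcross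
  · intro h
    have hub : u ≠ b := fun hc => hnotab (Or.inr ⟨hc, h⟩)
    have hau : a ≠ u := by rw [← h]; exact (Ne.symm huv)
    rw [h, openSegment_symm ℝ (vtx n u) (vtx n a)] at hcross
    exact shared_endpoint_no_cross (n2_vtx n a) (n2_vtx n u) (n2_vtx n b)
      (vtx_ne hau) (vtx_ne hab) (vtx_ne hub) hcross
  · intro h
    have hua : u ≠ a := fun hc => hnotab (Or.inl ⟨hc, h⟩)
    have hbu : b ≠ u := by rw [← h]; exact (Ne.symm huv)
    rw [h, openSegment_symm ℝ (vtx n u) (vtx n b),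
      openSegment_symm ℝ (vtx n a) (vtx n b)] at hcross
    exact shared_endpoint_no_cross (n2_vtx n b) (n2_vtx n u) (n2_vtx n a)
      (vtx_ne hbu) (vtx_ne (Ne.symm hab)) (vtx_ne hua) hcross

/-- endpoints of even-position edges avoid a and b -/
lemma even_edge_vertex_ne {p : PathData n} (hp : PathAnat n T a b p) (hab : a ≠ b)
    {k : ℕ} (hk : k < p.2.length) (hk2 : k % 2 = 1) :
    T.src (p.2.getD k (edef n)) ≠ a ∧ T.src (p.2.getD k (edef n)) ≠ b ∧
    T.tgt (p.2.getD k (edef n)) ≠ a ∧ T.tgt (p.2.getD k (edef n)) ≠ b :=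
  chord_endpoint_ne hab (src_ne_tgt T _) (hp.hT5 k hk hk2) (even_edge_not_ab hp hab hk hk2)


/-- intermediate vertices of a path avoid a and b -/
lemma mid_vertex_ne {p : PathData n} (hp : PathAnat n T a b p) (hab : a ≠ b)
    {j : ℕ} (h1 : 1 ≤ j) (h2 : j < p.2.length) :
    p.1.getD j a ≠ a ∧ p.1.getD j a ≠ b := by
  rcases Nat.even_or_odd j with hje | hjo
  · have hj1 : (j-1) % 2 = 1 := by
      rcases hje with ⟨c, hc⟩; omega
    have hjoin := hp.hjoins (j-1) (by omega)
    have hrw : j - 1 + 1 = j := by omega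
    rw [hrw] at hjoin
    have hne := even_edge_vertex_ne hp hab (show j-1 < p.2.length by omega) hj1
    rcases samePair_mem (samePair_swap hjoin) with h | h
    · rw [h]; exact ⟨hne.1, hne.2.1⟩
    · rw [h]; exact ⟨hne.2.2.1, hne.2.2.2⟩
  · have hj1 : j % 2 = 1 := Nat.odd_iff.1 hjo
    have hjoin := hp.hjoins j h2
    have hne := even_edge_vertex_ne hp hab h2 hj1
    rcases samePair_mem hjoin with h | h
    · rw [h]; exact ⟨hne.1, hne.2.1⟩
    · rw [h]; exact ⟨hne.2.2.1, hne.2.2.2⟩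

/-- STEP 1: the edges at odd positions agree for two paths with the same even-edge set -/
lemma odd_pos_eq {p q : PathData n} (hp : PathAnat n T a b p) (hq : PathAnat n T a b q)
    (hE : evensF p.2 = evensF q.2) (hlen : p.2.length = q.2.length) :
    ∀ k, k < p.2.length → k % 2 = 1 → p.2.getD k (edef n) = q.2.getD k (edef n) := by
  intro k
  induction k using Nat.strong_induction_on with
  | _ k ih =>
  intro hk hk2
  by_contra hne
  have hmemq : q.2.getD k (edef n) ∈ evensF p.2 := by
    rw [hE]; exact mem_evensF.2 ⟨k, by omega, hk2, rfl⟩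
  rcases mem_evensF.1 hmemq with ⟨k₂, hk₂l, hk₂2, hk₂e⟩
  have hkk₂ : k < k₂ := by
    rcases lt_trichotomy k₂ k with h | h | h
    · rw [ih k₂ h (by omega) hk₂2] at hk₂e
      have := getD_injOn hq.hnd (by omega) (by omega) hk₂e
      omega
    · rw [h] at hk₂e; exact absurd hk₂e hne
    · exact h
  have hmemp : p.2.getD k (edef n) ∈ evensF q.2 := by
    rw [← hE]; exact mem_evensF.2 ⟨k, hk, hk2, rfl⟩
  rcases mem_evensF.1 hmemp with ⟨k₃, hk₃l, hk₃2, hk₃e⟩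
  have hkk₃ : k < k₃ := by
    rcases lt_trichotomy k₃ k with h | h | h
    · rw [← ih k₃ h (by omega) hk₃2] at hk₃e
      have := getD_injOn hp.hnd (by omega) hk hk₃e
      omega
    · rw [h] at hk₃e; exact absurd hk₃e.symm hne
    · exact h
  obtain ⟨x, hx⟩ := hp.hT5 k hk hk2
  obtain ⟨y, hy⟩ := hq.hT5 k (by omega) hk2
  have h1 := hp.hT6 k k₂ hkk₂ hk₂l x hx y (by
    show y ∈ crossPts n T (p.2.getD k₂ (edef n)) a b
    rw [hk₂e]; exact hy)
  have h2 := hq.hT6 k k₃ hkk₃ (by omega) y hy x (by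
    show x ∈ crossPts n T (q.2.getD k₃ (edef n)) a b
    rw [hk₃e]; exact hx)
  linarith


set_option maxHeartbeats 1000000 in
/-- STEP 2: two T-paths with the same odd- and even-edge sets have equal edge lists -/
lemma es_eq_of_sets_eq {p q : PathData n} (hp : PathAnat n T a b p) (hq : PathAnat n T a b q)
    (hab : a ≠ b)
    (hO : oddsF p.2 = oddsF q.2) (hE : evensF p.2 = evensF q.2) : p.2 = q.2 := by
  have hlen : p.2.length = q.2.length := by
    rw [evensF_card hp, evensF_card hq, hE]
  have hoddeq := odd_pos_eq hp hq hE hlen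
  have key : ∀ k, k < p.2.length → p.2.getD k (edef n) = q.2.getD k (edef n) := by
    intro k
    induction k using Nat.strong_induction_on with
    | _ k ih =>
    intro hk
    rcases Nat.even_or_odd k with hkeven | hkodd
    swap
    · exact hoddeq k hk (Nat.odd_iff.1 hkodd)
    have hk2 : k % 2 = 0 := Nat.even_iff.1 hkeven
    have hvs : ∀ j, j ≤ k → p.1.getD j a = q.1.getD j a := by
      intro j
      induction j with
      | zero => intro _; rw [hp.hvs0, hq.hvs0]
      | succ m ihm =>
        intro hm
        have hm' : m < p.2.length := by omega
        have h1 := hp.hjoins m hm'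
        have h2 := hq.hjoins m (by omega)
        rw [← ih m (by omega) hm', ← ihm (by omega)] at h2
        exact samePair_det (src_ne_tgt T _) h1 h2
    have hjp := hp.hjoins k hk
    have hjq0 := hq.hjoins k (by omega)
    rw [← hvs k le_rfl] at hjq0
    rcases Nat.lt_or_ge (k+1) p.2.length with hklt | hkge
    swap
    · have hkl : k + 1 = p.2.length := by omega
      have hlastp : p.1.getD (k+1) a = b := by rw [hkl]; exact hp.hvslast
      have hlastq : q.1.getD (k+1) a = b := by rw [hkl, hlen]; exact hq.hvslast
      rw [hlastp] at hjp
      rw [hlastq] at hjq0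
      exact T.inj _ _ (samePair_trans (samePair_symm hjp) (samePair_symm hjq0))
    · have he := hoddeq (k+1) hklt (by omega)
      by_contra hne
      have hp' := hp.hjoins (k+1) hklt
      have hq' := hq.hjoins (k+1) (by omega)
      rw [← he] at hq'
      have hpq' : p.1.getD (k+1) a ≠ q.1.getD (k+1) a := by
        intro hc
        apply hne
        rw [hc] at hjp
        exact T.inj _ _ (samePair_trans (samePair_symm hjp) (samePair_symm hjq0))
      have hup' : p.1.getD k a ≠ p.1.getD (k+1) a := samePair_ne hjp (src_ne_tgt T _)
      have huq' : p.1.getD k a ≠ q.1.getD (k+1) a := samePair_ne hjq0 (src_ne_tgt T _)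
      have hi₀ : q.2.getD k (edef n) ∈ oddsF p.2 := by
        rw [hO]; exact mem_oddsF.2 ⟨k, by omega, hk2, rfl⟩
      rcases mem_oddsF.1 hi₀ with ⟨k', hk'l, hk'2, hk'e⟩
      have hkk' : k < k' := by
        rcases lt_trichotomy k' k with h | h | h
        · rw [ih k' h (by omega)] at hk'e
          have := getD_injOn hq.hnd (by omega) (by omega) hk'e
          omega
        · rw [h] at hk'e; exact absurd hk'e hne
        · exact h
      have hjpk' := hp.hjoins k' hk'l
      rw [hk'e] at hjpk'
      have hpair := samePair_trans hjq0 hjpk'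
      have humem : p.1.getD k a = p.1.getD k' a ∨ p.1.getD k a = p.1.getD (k'+1) a := by
        unfold SamePair at hpair; tauto
      have hfinal : ¬ (T.src (p.2.getD (k+1) (edef n)) = p.1.getD k a ∨
          T.tgt (p.2.getD (k+1) (edef n)) = p.1.getD k a) := by
        intro hu
        have hpmem := samePair_mem hp'
        have hqmem := samePair_mem hq'
        rcases hu with hu | hu <;> rcases hpmem with h1 | h1 <;> rcases hqmem with h2 | h2 <;>
          first
          | exact hup' (hu.symm.trans h1.symm)
          | exact huq' (hu.symm.trans h2.symm)
          | exact hpq' (h1.trans h2.symm)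
      obtain ⟨j₂, hj₂l, hj₂2, hj₂ge, husp⟩ :
          ∃ j₂, j₂ < p.2.length ∧ j₂ % 2 = 1 ∧ k + 1 ≤ j₂ ∧
            (T.src (p.2.getD j₂ (edef n)) = p.1.getD k a ∨
             T.tgt (p.2.getD j₂ (edef n)) = p.1.getD k a) := by
        rcases humem with h | h
        · refine ⟨k' - 1, by omega, by omega, by omega, ?_⟩
          have hj := hp.hjoins (k'-1) (by omega)
          have hrw : k' - 1 + 1 = k' := by omega
          rw [hrw] at hj
          rcases samePair_mem (samePair_swap hj) with h' | h'
          · exact Or.inl (h'.symm.trans h.symm)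
          · exact Or.inr (h'.symm.trans h.symm)
        · rcases Nat.lt_or_ge (k'+1) p.2.length with hlt2 | hge2
          · refine ⟨k'+1, hlt2, by omega, by omega, ?_⟩
            have hj := hp.hjoins (k'+1) hlt2
            rcases samePair_mem hj with h' | h'
            · exact Or.inl (h'.symm.trans h.symm)
            · exact Or.inr (h'.symm.trans h.symm)
          · exfalso
            have hkl : k' + 1 = p.2.length := by omega
            have hlast : p.1.getD (k'+1) a = b := by rw [hkl]; exact hp.hvslast
            rcases Nat.eq_zero_or_pos k with hk0 | hkpos
            · apply hab
              have hva : p.1.getD k a = a := by rw [hk0]; exact hp.hvs0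
              rw [← hva, h, hlast]
            · exact (mid_vertex_ne hp hab (by omega) hk).2 (h.trans hlast)
      rcases eq_or_lt_of_le hj₂ge with hj₂eq | hj₂gt
      · rw [← hj₂eq] at husp
        exact hfinal husp
      · rcases Nat.eq_zero_or_pos k with hk0 | hkpos
        · have hne2 := even_edge_vertex_ne hp hab hj₂l hj₂2
          have hva : p.1.getD k a = a := by rw [hk0]; exact hp.hvs0
          rcases husp with h | h
          · exact hne2.1 (h.trans hva)
          · exact hne2.2.2.1 (h.trans hva)
        · -- geometric case : Lemma middle_chord_endpoint
          have hj₁l : k - 1 < p.2.length := by omega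
          have hj₁2 : (k-1) % 2 = 1 := by omega
          have hj := hp.hjoins (k-1) hj₁l
          have hrw : k - 1 + 1 = k := by omega
          rw [hrw] at hj
          have hchord1 : openSegment ℝ (vtx n (T.src (p.2.getD (k-1) (edef n))))
              (vtx n (T.tgt (p.2.getD (k-1) (edef n)))) =
              openSegment ℝ (vtx n (p.1.getD k a)) (vtx n (p.1.getD (k-1) a)) :=
            openSeg_pair_eq (samePair_swap hj)
          obtain ⟨w₂, hw₂ne, hchord2⟩ : ∃ w₂, p.1.getD k a ≠ w₂ ∧
              openSegment ℝ (vtx n (T.src (p.2.getD j₂ (edef n))))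
                (vtx n (T.tgt (p.2.getD j₂ (edef n)))) =
              openSegment ℝ (vtx n (p.1.getD k a)) (vtx n w₂) := by
            rcases husp with h | h
            · exact ⟨T.tgt (p.2.getD j₂ (edef n)),
                by rw [← h]; exact (src_ne_tgt T _), by rw [h]⟩
            · refine ⟨T.src (p.2.getD j₂ (edef n)),
                by rw [← h]; exact (src_ne_tgt T _).symm, ?_⟩
              rw [h]
              exact openSegment_symm ℝ _ _
          obtain ⟨xe, hxe1, hxe2⟩ := hp.hT5 (k-1) hj₁l hj₁2
          obtain ⟨xf, hxf1, hxf2⟩ := hp.hT5 (k+1) hklt (by omega)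
          obtain ⟨xg, hxg1, hxg2⟩ := hp.hT5 j₂ hj₂l hj₂2
          have hd1 := hp.hT6 (k-1) (k+1) (by omega) hklt xe ⟨hxe1, hxe2⟩ xf ⟨hxf1, hxf2⟩
          have hd2 := hp.hT6 (k+1) j₂ hj₂gt hj₂l xf ⟨hxf1, hxf2⟩ xg ⟨hxg1, hxg2⟩
          have hnea : p.2.getD (k-1) (edef n) ≠ p.2.getD (k+1) (edef n) := by
            intro hc; have := getD_injOn hp.hnd hj₁l hklt hc; omega
          have hneb : p.2.getD j₂ (edef n) ≠ p.2.getD (k+1) (edef n) := by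
            intro hc; have := getD_injOn hp.hnd hj₂l hklt hc; omega
          have hncef := T.noncross _ _ hnea
          have hncgf := T.noncross _ _ hneb
          have hef : ¬ (openSegment ℝ (vtx n (p.1.getD k a)) (vtx n (p.1.getD (k-1) a)) ∩
              openSegment ℝ (vtx n (T.src (p.2.getD (k+1) (edef n))))
                (vtx n (T.tgt (p.2.getD (k+1) (edef n))))).Nonempty := by
            rw [← hchord1]; exact hncef
          have hgf : ¬ (openSegment ℝ (vtx n (p.1.getD k a)) (vtx n w₂) ∩
              openSegment ℝ (vtx n (T.src (p.2.getD (k+1) (edef n))))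
                (vtx n (T.tgt (p.2.getD (k+1) (edef n))))).Nonempty := by
            rw [← hchord2]; exact hncgf
          have hne3 := even_edge_vertex_ne hp hab hklt (by omega)
          have hG := middle_chord_endpoint
            (ha := n2_vtx n a) (hb := n2_vtx n b)
            (hu := n2_vtx n (p.1.getD k a))
            (he₂ := n2_vtx n (p.1.getD (k-1) a))
            (hg₂ := n2_vtx n w₂)
            (hf₁ := n2_vtx n (T.src (p.2.getD (k+1) (edef n))))
            (hf₂ := n2_vtx n (T.tgt (p.2.getD (k+1) (edef n))))
            (hab := vtx_ne hab)
            (hue := vtx_ne (samePair_ne hj (src_ne_tgt T _)).symm)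
            (hug := vtx_ne hw₂ne)
            (hf := vtx_ne (src_ne_tgt T _))
            (haf₁ := vtx_ne (Ne.symm hne3.1))
            (haf₂ := vtx_ne (Ne.symm hne3.2.2.1))
            (hbf₁ := vtx_ne (Ne.symm hne3.2.1))
            (hbf₂ := vtx_ne (Ne.symm hne3.2.2.2))
            (hef := hef) (hgf := hgf)
            (hxe := hchord1 ▸ hxe1) (hxe' := hxe2)
            (hxf := hxf1) (hxf' := hxf2)
            (hxg := hchord2 ▸ hxg1) (hxg' := hxg2)
            (hd1 := hd1) (hd2 := hd2)
          rcases hG with h | h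
          · exact hfinal (Or.inl (vtx_inj h).symm)
          · exact hfinal (Or.inr (vtx_inj h).symm)
  apply List.ext_getElem hlen
  intro k h₁ h₂
  have hkey := key k h₁
  rwa [List.getD_eq_getElem _ _ h₁, List.getD_eq_getElem _ _ h₂] at hkey


/-! ### exponents and recovery of the path from its monomial -/

def expE (n : ℕ) (T : Triangulation n) (a b : Fin (n+3)) (p : PathData n) :
    Fin (2*n+3) →₀ ℕ :=
  (∑ i ∈ oddsF p.2, Finsupp.single i 1) + ∑ i ∈ Dset n T a b \ evensF p.2, Finsupp.single i 1

lemma monoP_eq_monomial' (p : PathData n) :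
    monoP n T a b p = MvPolynomial.monomial (expE n T a b p) 1 := monoP_eq_monomial p

lemma sets_eq_of_exp_eq {p q : PathData n} (hp : PathAnat n T a b p) (hq : PathAnat n T a b q)
    (hab : a ≠ b) (hnadj : ¬ Adj n a b)
    (h : expE n T a b p = expE n T a b q) :
    oddsF p.2 = oddsF q.2 ∧ evensF p.2 = evensF q.2 := by
  have hsubp := evensF_subset_Dset hp hab hnadj
  have hsubq := evensF_subset_Dset hq hab hnadj
  have key : ∀ i : Fin (2*n+3),
      ((if i ∈ oddsF p.2 then 1 else 0) + (if i ∈ Dset n T a b \ evensF p.2 then 1 else 0) : ℕ)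
      = (if i ∈ oddsF q.2 then 1 else 0) +
        (if i ∈ Dset n T a b \ evensF q.2 then 1 else 0) := by
    intro i
    have hi := congrArg (fun f : Fin (2*n+3) →₀ ℕ => f i) h
    simpa only [expE, Finsupp.add_apply, expv_apply] using hi
  have main : ∀ i : Fin (2*n+3),
      (i ∈ oddsF p.2 ↔ i ∈ oddsF q.2) ∧ (i ∈ evensF p.2 ↔ i ∈ evensF q.2) := by
    intro i
    have hk := key i
    simp only [Finset.mem_sdiff] at hk
    have hd1 : ¬(i ∈ oddsF p.2 ∧ i ∈ evensF p.2) :=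
      fun ⟨x, y⟩ => odds_evens_disjoint hp.hnd x y
    have hd2 : ¬(i ∈ oddsF q.2 ∧ i ∈ evensF q.2) :=
      fun ⟨x, y⟩ => odds_evens_disjoint hq.hnd x y
    have hs1 : i ∈ evensF p.2 → i ∈ Dset n T a b := fun x => hsubp x
    have hs2 : i ∈ evensF q.2 → i ∈ Dset n T a b := fun x => hsubq x
    by_cases h1 : i ∈ oddsF p.2 <;> by_cases h2 : i ∈ evensF p.2 <;>
      by_cases h3 : i ∈ oddsF q.2 <;> by_cases h4 : i ∈ evensF q.2 <;>
      by_cases h5 : i ∈ Dset n T a b <;>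
      simp_all <;> omega
  constructor
  · ext i; exact (main i).1
  · ext i; exact (main i).2

lemma path_eq_of_exp_eq {p q : PathData n} (hp : PathAnat n T a b p) (hq : PathAnat n T a b q)
    (hab : a ≠ b) (hnadj : ¬ Adj n a b)
    (h : expE n T a b p = expE n T a b q) : p = q := by
  obtain ⟨hO, hE⟩ := sets_eq_of_exp_eq hp hq hab hnadj h
  have hes := es_eq_of_sets_eq hp hq hab hO hE
  have hvs := vs_eq_of_es_eq hp hq hes
  exact Prod.ext hvs hes

/-! ### the field computation -/

lemma X_ne_zero (i : Fin (2*n+3)) : X n i ≠ 0 := by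
  unfold X
  rw [map_ne_zero_iff _ (IsFractionRing.injective (MvPolynomial (Fin (2*n+3)) ℚ) (F n))]
  exact MvPolynomial.X_ne_zero i

lemma D_mul_pathX {p : PathData n} (hp : PathAnat n T a b p)
    (hab : a ≠ b) (hnadj : ¬ Adj n a b) :
    (∏ i ∈ Dset n T a b, X n i) * pathX n p.2 =
      algebraMap (MvPolynomial (Fin (2*n+3)) ℚ) (F n) (monoP n T a b p) := by
  have h0 : (∏ i ∈ oddsF p.2, X n i)
      = ∏ k ∈ (Finset.range p.2.length).filter (fun k => k % 2 = 0),
          X n (p.2.getD k (edef n)) := by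
    rw [oddsF, pos0]
    apply Finset.prod_image
    intro x hx y hy hxy
    rw [Finset.mem_coe, Finset.mem_filter, Finset.mem_range] at hx hy
    exact getD_injOn hp.hnd hx.1 hy.1 hxy
  have h1 : (∏ i ∈ evensF p.2, X n i)
      = ∏ k ∈ (Finset.range p.2.length).filter (fun k => k % 2 = 1),
          X n (p.2.getD k (edef n)) := by
    rw [evensF, pos1]
    apply Finset.prod_image
    intro x hx y hy hxy
    rw [Finset.mem_coe, Finset.mem_filter, Finset.mem_range] at hx hy
    exact getD_injOn hp.hnd hx.1 hy.1 hxy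
  have hsub := evensF_subset_Dset hp hab hnadj
  have hD : (∏ i ∈ Dset n T a b \ evensF p.2, X n i) * (∏ i ∈ evensF p.2, X n i)
      = ∏ i ∈ Dset n T a b, X n i := Finset.prod_sdiff hsub
  have hEne : (∏ i ∈ evensF p.2, X n i) ≠ 0 :=
    Finset.prod_ne_zero_iff.2 (fun i _ => X_ne_zero i)
  have hRHS : algebraMap (MvPolynomial (Fin (2*n+3)) ℚ) (F n) (monoP n T a b p)
      = (∏ i ∈ oddsF p.2, X n i) * (∏ i ∈ Dset n T a b \ evensF p.2, X n i) := by
    rw [monoP, map_mul, map_prod, map_prod]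
    rfl
  rw [hRHS, pathX, ← h0, ← h1, ← hD]
  field_simp

end TPComb

/-- Positivity, Corollary 1. -/
theorem sum_TPaths_positivity
    (n : ℕ) (hn : 1 ≤ n) (T : Triangulation n) (a b : Fin (n + 3))
    (hab : a ≠ b) (hnadj : ¬ Adj n a b) :
    ∃ P : MvPolynomial (Fin (2 * n + 3)) ℚ,
      (∀ m : Fin (2 * n + 3) →₀ ℕ, P.coeff m = 0 ∨ P.coeff m = 1) ∧
      (∏ i ∈ Finset.univ.filter (fun i : Fin (2 * n + 3) => i.val < n ∧ ECross n T i a b),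
          X n i) * (∑ᶠ α ∈ TPaths n T a b, pathX n α.2) =
        algebraMap (MvPolynomial (Fin (2 * n + 3)) ℚ) (F n) P := by
  classical
  have hfin : (TPaths n T a b).Finite := TPComb.tpaths_finite
  refine ⟨∑ p ∈ hfin.toFinset, TPComb.monoP n T a b p, ?_, ?_⟩
  · intro m
    rw [MvPolynomial.coeff_sum]
    have hco : ∀ p ∈ hfin.toFinset, (TPComb.monoP n T a b p).coeff m
        = if TPComb.expE n T a b p = m then (1:ℚ) else 0 := by
      intro p _
      rw [TPComb.monoP_eq_monomial', MvPolynomial.coeff_monomial]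
    rw [Finset.sum_congr rfl hco, Finset.sum_boole]
    have hcard : (hfin.toFinset.filter (fun p => TPComb.expE n T a b p = m)).card ≤ 1 := by
      apply Finset.card_le_one.2
      intro p hpmem q hqmem
      rw [Finset.mem_filter] at hpmem hqmem
      have hp := TPComb.isTPath_anat (hfin.mem_toFinset.1 hpmem.1)
      have hq := TPComb.isTPath_anat (hfin.mem_toFinset.1 hqmem.1)
      exact TPComb.path_eq_of_exp_eq hp hq hab hnadj (hpmem.2.trans hqmem.2.symm)
    rcases Nat.le_one_iff_eq_zero_or_eq_one.1 hcard with h | h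
    · left; rw [h]; norm_num
    · right; rw [h]; norm_num
  · have hsum : ∑ᶠ α ∈ TPaths n T a b, pathX n α.2 = ∑ p ∈ hfin.toFinset, pathX n p.2 := by
      rw [← finsum_mem_coe_finset, hfin.coe_toFinset]
    rw [hsum, Finset.mul_sum, map_sum]
    apply Finset.sum_congr rfl
    intro p hpPF
    exact TPComb.D_mul_pathX (TPComb.isTPath_anat (hfin.mem_toFinset.1 hpPF)) hab hnadj
end
end
end
end
end
end
end
end

section
/- Let a and b be distinct vertices of P and let α, α' ∈ 𝒫_T(a,b) with α ≠ α'. Then x(α) ≠ x(α') in F. (Lemma 1: the map α ↦ x(α) is injective on 𝒫_T(a,b).) -/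
open scoped BigOperators Classical

namespace L1

local notation "E2" => EuclideanSpace ℝ (Fin 2)

lemma vtx0 (n : ℕ) (k : Fin (n+3)) : vtx n k 0 = Real.cos (2 * Real.pi * k / (n + 3)) := rfl
lemma vtx1 (n : ℕ) (k : Fin (n+3)) : vtx n k 1 = Real.sin (2 * Real.pi * k / (n + 3)) := rfl

lemma norm_vtx (n : ℕ) (k : Fin (n+3)) : ‖vtx n k‖ = 1 := by
  rw [EuclideanSpace.norm_eq]
  rw [Fin.sum_univ_two, vtx0, vtx1]
  rw [Real.norm_eq_abs, Real.norm_eq_abs, sq_abs, sq_abs]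
  rw [add_comm, Real.sin_sq_add_cos_sq, Real.sqrt_one]

lemma vtx_inj (n : ℕ) : Function.Injective (vtx n) := by
  intro j k h
  have hc : Real.cos (2 * Real.pi * j / (n + 3)) = Real.cos (2 * Real.pi * k / (n + 3)) := by
    have := congrArg (fun x : E2 => x 0) h; simpa [vtx0] using this
  have hs : Real.sin (2 * Real.pi * j / (n + 3)) = Real.sin (2 * Real.pi * k / (n + 3)) := by
    have := congrArg (fun x : E2 => x 1) h; simpa [vtx1] using this
  set θj : ℝ := 2 * Real.pi * j / (n + 3) with hθj
  set θk : ℝ := 2 * Real.pi * k / (n + 3) with hθk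
  have hexp : Complex.exp (θj * Complex.I) = Complex.exp (θk * Complex.I) := by
    rw [Complex.exp_mul_I, Complex.exp_mul_I]
    rw [← Complex.ofReal_cos, ← Complex.ofReal_cos, ← Complex.ofReal_sin, ← Complex.ofReal_sin]
    rw [hc, hs]
  obtain ⟨m, hm⟩ := Complex.exp_eq_exp_iff_exists_int.1 hexp
  have him := congrArg Complex.im hm
  simp [Complex.add_im, Complex.mul_im] at him
  -- him : θj = θk + m * (2 * π)  (hopefully)
  have hπ : (0:ℝ) < Real.pi := Real.pi_pos
  have hn3 : (0:ℝ) < (n:ℝ) + 3 := by positivity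
  have hjk : (j:ℝ) = (k:ℝ) + m * (n + 3) := by
    have h1 : 2 * Real.pi * j / (n + 3) = 2 * Real.pi * k / (n + 3) + m * (2 * Real.pi) := him
    field_simp at h1
    nlinarith [h1]
  have hj3 : (j:ℕ) < n + 3 := j.isLt
  have hk3 : (k:ℕ) < n + 3 := k.isLt
  have hZ : (j.val : ℤ) = (k.val : ℤ) + m * ((n:ℤ) + 3) := by exact_mod_cast hjk
  have hm0 : m = 0 := by
    rcases lt_trichotomy m 0 with h | h | h
    · exfalso
      have : m ≤ -1 := by omega
      have hj0 : (0:ℤ) ≤ (j.val:ℤ) := by positivity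
      have hkk : (k.val:ℤ) < (n:ℤ) + 3 := by exact_mod_cast hk3
      nlinarith
    · exact h
    · exfalso
      have : 1 ≤ m := by omega
      have hjj : (j.val:ℤ) < (n:ℤ) + 3 := by exact_mod_cast hj3
      have hk0 : (0:ℤ) ≤ (k.val:ℤ) := by positivity
      nlinarith
  apply Fin.ext
  have : (j.val : ℤ) = k.val := by rw [hZ, hm0]; ring
  exact_mod_cast this

/-- the linear functional whose kernel is the line through A and B -/
def lf (A B x : E2) : ℝ := (B 0 - A 0) * (x 1 - A 1) - (B 1 - A 1) * (x 0 - A 0)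

lemma lf_A (A B : E2) : lf A B A = 0 := by simp [lf]
lemma lf_B (A B : E2) : lf A B B = 0 := by simp [lf]; ring

lemma lf_comb (A B x y : E2) (c d : ℝ) (h : c + d = 1) :
    lf A B (c • x + d • y) = c * lf A B x + d * lf A B y := by
  have hd : d = 1 - c := by linarith
  subst hd
  simp only [lf, PiLp.add_apply, PiLp.smul_apply, smul_eq_mul]
  ring

lemma e2_ext {x y : E2} (h0 : x 0 = y 0) (h1 : x 1 = y 1) : x = y := by
  ext i
  fin_cases i <;> assumption

lemma exists_param (A B x : E2) (hAB : A ≠ B) (h : lf A B x = 0) :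
    ∃ t : ℝ, x = (1-t) • A + t • B := by
  have hd : B 0 - A 0 ≠ 0 ∨ B 1 - A 1 ≠ 0 := by
    by_contra hc
    push_neg at hc
    exact hAB (e2_ext (by linarith [hc.1]) (by linarith [hc.2])).symm
  rcases hd with hd | hd
  · refine ⟨(x 0 - A 0) / (B 0 - A 0), e2_ext ?_ ?_⟩ <;>
      simp only [PiLp.add_apply, PiLp.smul_apply, smul_eq_mul]
    · field_simp
      ring
    · simp only [lf] at h
      field_simp
      nlinarith [h]
  · refine ⟨(x 1 - A 1) / (B 1 - A 1), e2_ext ?_ ?_⟩ <;>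
      simp only [PiLp.add_apply, PiLp.smul_apply, smul_eq_mul]
    · simp only [lf] at h
      field_simp
      nlinarith [h]
    · field_simp
      ring

lemma norm_openSegment_lt {x y z : E2} (hx : ‖x‖ ≤ 1) (hy : ‖y‖ ≤ 1) (hxy : x ≠ y)
    (hz : z ∈ openSegment ℝ x y) : ‖z‖ < 1 := by
  obtain ⟨c, d, hc, hd, hcd, rfl⟩ := hz
  have h := strictConvex_closedBall ℝ (0:E2) 1
  have hxm : x ∈ Metric.closedBall (0:E2) 1 := by simpa [Metric.mem_closedBall, dist_zero_right] using hx
  have hym : y ∈ Metric.closedBall (0:E2) 1 := by simpa [Metric.mem_closedBall, dist_zero_right] using hy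
  have := h hxm hym hxy hc hd hcd
  rw [interior_closedBall _ one_ne_zero] at this
  simpa [Metric.mem_ball, dist_zero_right] using this

lemma trichotomy (A B x : E2) (hA : ‖A‖ = 1) (hB : ‖B‖ = 1) (hAB : A ≠ B) (t : ℝ)
    (hx : x = (1-t) • A + t • B) (hn : ‖x‖ ≤ 1) :
    x = A ∨ x = B ∨ x ∈ openSegment ℝ A B := by
  rcases lt_trichotomy t 0 with ht | ht | ht
  · exfalso
    have h1t : (0:ℝ) < 1 - t := by linarith
    have hxB : x ≠ B := by
      intro hxB
      apply hAB
      rw [hxB] at hx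
      have h2 : (1-t) • A = (1-t) • B := by
        linear_combination (norm := module) hx.symm
      exact smul_right_injective E2 (by linarith) h2
    have hmem : A ∈ openSegment ℝ x B := by
      refine ⟨1/(1-t), -t/(1-t), by positivity, div_pos (by linarith) h1t, ?_, ?_⟩
      · field_simp
        ring
      · rw [hx]
        match_scalars <;> field_simp <;> ring
    have := norm_openSegment_lt hn (le_of_eq hB) hxB hmem
    linarith [this, hA.ge]
  · left
    rw [hx, ht]
    simp
  · rcases lt_trichotomy t 1 with ht1 | ht1 | ht1
    · right; right
      exact ⟨1-t, t, by linarith, ht, by ring, hx.symm⟩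
    · right; left
      rw [hx, ht1]
      simp
    · exfalso
      have ht0 : (0:ℝ) < t := by linarith
      have hxA : x ≠ A := by
        intro hxA
        apply hAB
        rw [hxA] at hx
        have h2 : t • A = t • B := by
          linear_combination (norm := module) hx
        exact smul_right_injective E2 (by linarith) h2
      have hmem : B ∈ openSegment ℝ x A := by
        refine ⟨1/t, (t-1)/t, by positivity, ?_, ?_, ?_⟩
        · have : (0:ℝ) < t - 1 := by linarith
          positivity
        · field_simp
          ring
        · rw [hx]
          match_scalars <;> field_simp <;> ring
      have := norm_openSegment_lt hn (le_of_eq hA) hxA hmem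
      linarith [this, hB.ge]

lemma lf_zero_of_mem {A B z : E2} (hz : z ∈ openSegment ℝ A B) : lf A B z = 0 := by
  obtain ⟨c, d, hc, hd, hcd, rfl⟩ := hz
  rw [lf_comb A B A B c d hcd, lf_A, lf_B]
  ring

lemma mem_open_ab {A B x : E2} (hA : ‖A‖ = 1) (hB : ‖B‖ = 1) (hAB : A ≠ B)
    (hlf : lf A B x = 0) (hn : ‖x‖ < 1) : x ∈ openSegment ℝ A B := by
  obtain ⟨t, ht⟩ := exists_param A B x hAB hlf
  rcases trichotomy A B x hA hB hAB t ht hn.le with h | h | h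
  · exact absurd (h ▸ hn) (by rw [hA]; simp)
  · exact absurd (h ▸ hn) (by rw [hB]; simp)
  · exact h

lemma cross_of_signs {A B U V : E2} (hA : ‖A‖ = 1) (hB : ‖B‖ = 1) (hAB : A ≠ B)
    (hU : ‖U‖ = 1) (hV : ‖V‖ = 1)
    (hop : lf A B U * lf A B V < 0) :
    (openSegment ℝ U V ∩ openSegment ℝ A B).Nonempty := by
  have hUV : U ≠ V := by
    intro h
    rw [h] at hop
    nlinarith
  set p := lf A B U with hp
  set q := lf A B V with hq
  have hpq : p - q ≠ 0 := by
    intro h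
    have : p = q := by linarith
    rw [this] at hop
    nlinarith
  set t := p / (p - q) with htdef
  have ht0 : 0 < t ∧ t < 1 := by
    rcases lt_trichotomy p 0 with h | h | h
    · have hq0 : 0 < q := by nlinarith
      constructor
      · apply div_pos_of_neg_of_neg h
        linarith
      · rw [div_lt_one_of_neg (by linarith)]
        linarith
    · exfalso
      rw [h] at hop
      nlinarith
    · have hq0 : q < 0 := by nlinarith
      constructor
      · apply div_pos h
        linarith
      · rw [div_lt_one (by linarith)]
        linarith
  set z := (1-t) • U + t • V with hz
  have hzmem : z ∈ openSegment ℝ U V := ⟨1-t, t, by linarith [ht0.2], ht0.1, by ring, rfl⟩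
  have hzlf : lf A B z = 0 := by
    rw [hz, lf_comb A B U V (1-t) t (by ring), ← hp, ← hq, htdef]
    field_simp
    ring
  have hzn : ‖z‖ < 1 := norm_openSegment_lt hU.le hV.le hUV hzmem
  exact ⟨z, hzmem, mem_open_ab hA hB hAB hzlf hzn⟩

lemma signs_of_cross {A B U V : E2} (h : (openSegment ℝ U V ∩ openSegment ℝ A B).Nonempty) :
    lf A B U * lf A B V < 0 ∨ (lf A B U = 0 ∧ lf A B V = 0) := by
  obtain ⟨z, hzUV, hzAB⟩ := h
  have hz0 : lf A B z = 0 := lf_zero_of_mem hzAB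
  obtain ⟨c, d, hc, hd, hcd, rfl⟩ := hzUV
  rw [lf_comb A B U V c d hcd] at hz0
  by_cases hU0 : lf A B U = 0
  · right
    refine ⟨hU0, ?_⟩
    rw [hU0] at hz0
    simp at hz0
    rcases hz0 with h | h
    · exact absurd h (by linarith)
    · exact h
  · left
    have hV0 : lf A B V = -(c / d) * lf A B U := by
      field_simp
      linarith
    rw [hV0]
    have h1 : 0 < c / d := div_pos hc hd
    have h2 : 0 < lf A B U * lf A B U := by
      rcases lt_or_gt_of_ne hU0 with h | h
      · exact mul_pos_of_neg_of_neg h h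
      · exact mul_pos h h
    nlinarith

variable {n : ℕ}

lemma vtx_ne {a b : Fin (n+3)} (hab : a ≠ b) : vtx n a ≠ vtx n b :=
  fun h => hab (vtx_inj n h)

/-- a vertex on the line spanned by two distinct vertices must be one of them -/
lemma vertex_line {a b u : Fin (n+3)} (hab : a ≠ b)
    (h : lf (vtx n a) (vtx n b) (vtx n u) = 0) : u = a ∨ u = b := by
  obtain ⟨t, ht⟩ := exists_param _ _ _ (vtx_ne hab) h
  rcases trichotomy _ _ _ (norm_vtx n a) (norm_vtx n b) (vtx_ne hab) t ht (norm_vtx n u).le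
    with h | h | h
  · exact Or.inl (vtx_inj n h)
  · exact Or.inr (vtx_inj n h)
  · exact absurd (norm_openSegment_lt (norm_vtx n a).le (norm_vtx n b).le (vtx_ne hab) h)
      (by rw [norm_vtx]; simp)

/-- a degenerate segment cannot cross the open segment ab -/
lemma not_self_cross {a b u : Fin (n+3)} (hab : a ≠ b)
    (h : (openSegment ℝ (vtx n u) (vtx n u) ∩ openSegment ℝ (vtx n a) (vtx n b)).Nonempty) :
    False := by
  obtain ⟨z, hz1, hz2⟩ := h
  rw [openSegment_same, Set.mem_singleton_iff] at hz1
  have hlt := norm_openSegment_lt (norm_vtx n a).le (norm_vtx n b).le (vtx_ne hab) hz2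
  rw [hz1, norm_vtx] at hlt
  linarith

/-- if the edge (u,v) crosses the open segment ab and u ∈ {a,b}, then v ∈ {a,b} -/
lemma X1 {a b u v : Fin (n+3)} (hab : a ≠ b)
    (h : (openSegment ℝ (vtx n u) (vtx n v) ∩ openSegment ℝ (vtx n a) (vtx n b)).Nonempty)
    (hu : u = a ∨ u = b) : v = a ∨ v = b := by
  rcases signs_of_cross h with hs | hs
  · exfalso
    rcases hu with hu | hu
    · rw [hu, lf_A] at hs
      simp at hs
    · rw [hu, lf_B] at hs
      simp at hs
  · exact vertex_line hab hs.2

/-- endpoints of a crossing pair that is not {a,b} avoid a and b -/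
lemma endpoints_ne {a b u v : Fin (n+3)} (hab : a ≠ b)
    (h : (openSegment ℝ (vtx n u) (vtx n v) ∩ openSegment ℝ (vtx n a) (vtx n b)).Nonempty)
    (hpair : ¬((u = a ∧ v = b) ∨ (u = b ∧ v = a))) :
    u ≠ a ∧ u ≠ b ∧ v ≠ a ∧ v ≠ b := by
  have hvu : (openSegment ℝ (vtx n v) (vtx n u) ∩ openSegment ℝ (vtx n a) (vtx n b)).Nonempty := by
    rwa [openSegment_symm] at h
  have key : ∀ w z : Fin (n+3),
      (openSegment ℝ (vtx n w) (vtx n z) ∩ openSegment ℝ (vtx n a) (vtx n b)).Nonempty →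
      ¬((w = a ∧ z = b) ∨ (w = b ∧ z = a)) → w ≠ a ∧ w ≠ b := by
    intro w z hwz hp
    constructor
    · intro hwa
      rcases X1 hab hwz (Or.inl hwa) with hz | hz
      · rw [hwa, hz] at hwz
        exact not_self_cross hab hwz
      · exact hp (Or.inl ⟨hwa, hz⟩)
    · intro hwb
      rcases X1 hab hwz (Or.inr hwb) with hz | hz
      · exact hp (Or.inr ⟨hwb, hz⟩)
      · rw [hwb, hz] at hwz
        exact not_self_cross hab hwz
  have h1 := key u v h hpair
  have h2 := key v u hvu (by tauto)
  exact ⟨h1.1, h1.2, h2.1, h2.2⟩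

/-- opposite sides for a crossing pair with endpoints off the line -/
lemma opp_signs {a b u v : Fin (n+3)} (hab : a ≠ b)
    (h : (openSegment ℝ (vtx n u) (vtx n v) ∩ openSegment ℝ (vtx n a) (vtx n b)).Nonempty)
    (hpair : ¬((u = a ∧ v = b) ∨ (u = b ∧ v = a))) :
    lf (vtx n a) (vtx n b) (vtx n u) * lf (vtx n a) (vtx n b) (vtx n v) < 0 := by
  rcases signs_of_cross h with hs | hs
  · exact hs
  · exfalso
    obtain ⟨h1, h2, h3, h4⟩ := endpoints_ne hab h hpair
    rcases vertex_line hab hs.1 with h | h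
    · exact h1 h
    · exact h2 h

lemma cross_of_opp {a b u v : Fin (n+3)} (hab : a ≠ b)
    (hop : lf (vtx n a) (vtx n b) (vtx n u) * lf (vtx n a) (vtx n b) (vtx n v) < 0) :
    (openSegment ℝ (vtx n u) (vtx n v) ∩ openSegment ℝ (vtx n a) (vtx n b)).Nonempty :=
  cross_of_signs (norm_vtx n a) (norm_vtx n b) (vtx_ne hab) (norm_vtx n u) (norm_vtx n v) hop

/-! ### order lemma -/

lemma eq_of_perm_of_pairwise {α : Type*} {R : α → α → Prop} (l : List α) :
    ∀ (l' : List α), l.Perm l' → l.Pairwise R → l'.Pairwise R →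
    (∀ x ∈ l, ∀ y ∈ l, R x y → R y x → False) → l = l' := by
  induction l with
  | nil => intro l' hp _ _ _; exact hp.nil_eq
  | cons a t ih =>
    intro l' hp h1 h2 anti
    cases l' with
    | nil => exact absurd hp.symm.nil_eq (by simp)
    | cons c t' =>
      by_cases hac : a = c
      · subst hac
        have hp' := hp.cons_inv
        rw [ih t' hp' (List.pairwise_cons.1 h1).2 (List.pairwise_cons.1 h2).2 ?_]
        intro x hx y hy hr hr'
        exact anti x (List.mem_cons_of_mem _ hx) y (List.mem_cons_of_mem _ hy) hr hr'
      · exfalso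
        have hc : c ∈ t := by
          have : c ∈ a :: t := hp.symm.subset List.mem_cons_self
          rcases List.mem_cons.1 this with h | h
          · exact absurd h.symm hac
          · exact h
        have ha : a ∈ t' := by
          have : a ∈ c :: t' := hp.subset List.mem_cons_self
          rcases List.mem_cons.1 this with h | h
          · exact absurd h hac
          · exact h
        exact anti a List.mem_cons_self c (List.mem_cons_of_mem _ hc)
          ((List.pairwise_cons.1 h1).1 c hc) ((List.pairwise_cons.1 h2).1 a ha)

/-! ### algebra -/

lemma prod_X_multiset (N : ℕ) (m : Multiset (Fin N)) :
    (m.map (MvPolynomial.X : Fin N → MvPolynomial (Fin N) ℚ)).prod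
      = MvPolynomial.monomial (Multiset.toFinsupp m) 1 := by
  induction m using Multiset.induction_on with
  | empty => simp
  | cons a s ih =>
    rw [Multiset.map_cons, Multiset.prod_cons, ih,
      show (MvPolynomial.X a : MvPolynomial (Fin N) ℚ)
        = MvPolynomial.monomial (Finsupp.single a 1) 1 from rfl,
      MvPolynomial.monomial_mul, one_mul]
    congr 1
    rw [← Multiset.singleton_add, map_add, Multiset.toFinsupp_singleton]

lemma prod_X_inj (N : ℕ) {m m' : Multiset (Fin N)}
    (h : (m.map (MvPolynomial.X : Fin N → MvPolynomial (Fin N) ℚ)).prod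
      = (m'.map (MvPolynomial.X : Fin N → MvPolynomial (Fin N) ℚ)).prod) : m = m' := by
  rw [prod_X_multiset, prod_X_multiset] at h
  have h2 := MvPolynomial.monomial_left_injective (one_ne_zero (α := ℚ)) h
  exact Multiset.toFinsupp.injective h2

lemma ms_cancel {α : Type*} [DecidableEq α] {A D A' D' : Multiset α} (h : A + D' = A' + D)
    (h1 : ∀ x, ¬(x ∈ A ∧ x ∈ D)) (h2 : ∀ x, ¬(x ∈ A' ∧ x ∈ D')) : A = A' ∧ D = D' := by
  constructor <;>
  · ext x
    have hc := congrArg (Multiset.count x) h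
    simp only [Multiset.count_add] at hc
    have m1 := h1 x
    have m2 := h2 x
    rw [← Multiset.count_pos, ← Multiset.count_pos] at m1
    rw [← Multiset.count_pos, ← Multiset.count_pos] at m2
    omega

/-- positions of parity `r` in `l`, as edge values. -/
def posList (n : ℕ) (l : List (Fin (2*n+3))) (r : ℕ) : List (Fin (2*n+3)) :=
  ((List.range l.length).filter (fun k => decide (k % 2 = r))).map (fun k => l.getD k (edef n))

lemma finset_to_list {β : Type*} [CommMonoid β] (m : ℕ) (p : ℕ → Prop) [DecidablePred p]
    (f : ℕ → β) :
    ∏ k ∈ (Finset.range m).filter p, f k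
      = (((List.range m).filter (fun b => decide (p b))).map f).prod := by
  rw [Finset.prod_eq_multiset_prod, Finset.filter_val, Finset.range_val, ← Multiset.coe_range,
    Multiset.filter_coe, Multiset.map_coe, Multiset.prod_coe]

lemma pathX_eq (n : ℕ) (l : List (Fin (2*n+3))) :
    pathX n l = (algebraMap (MvPolynomial (Fin (2*n+3)) ℚ) (F n))
        (((posList n l 0).map MvPolynomial.X).prod)
      * ((algebraMap (MvPolynomial (Fin (2*n+3)) ℚ) (F n))
        (((posList n l 1).map MvPolynomial.X).prod))⁻¹ := by
  rw [pathX, finset_to_list, finset_to_list, posList, posList, List.map_map, List.map_map]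
  rw [← List.prod_hom _ (algebraMap (MvPolynomial (Fin (2*n+3)) ℚ) (F n)),
    ← List.prod_hom _ (algebraMap (MvPolynomial (Fin (2*n+3)) ℚ) (F n))]
  rw [List.map_map, List.map_map]
  rfl

lemma posList_prod_ne_zero (n : ℕ) (l : List (Fin (2*n+3))) (r : ℕ) :
    (((posList n l r).map MvPolynomial.X).prod : MvPolynomial (Fin (2*n+3)) ℚ) ≠ 0 := by
  rw [← Multiset.prod_coe, ← Multiset.map_coe]
  apply Multiset.prod_ne_zero
  intro h0
  obtain ⟨i, _, hi⟩ := Multiset.mem_map.1 h0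
  exact MvPolynomial.X_ne_zero i hi

lemma posList_disjoint (n : ℕ) (l : List (Fin (2*n+3))) (hnd : l.Nodup) :
    ∀ x, ¬(x ∈ (↑(posList n l 0) : Multiset (Fin (2*n+3))) ∧
      x ∈ (↑(posList n l 1) : Multiset (Fin (2*n+3)))) := by
  rintro x ⟨h0, h1⟩
  rw [Multiset.mem_coe] at h0 h1
  obtain ⟨j, hj, hjx⟩ := List.mem_map.1 h0
  obtain ⟨k, hk, hkx⟩ := List.mem_map.1 h1
  rw [List.mem_filter, List.mem_range] at hj hk
  have hj2 : j % 2 = 0 := of_decide_eq_true hj.2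
  have hk2 : k % 2 = 1 := of_decide_eq_true hk.2
  have hx : l.getD j (edef n) = l.getD k (edef n) := by rw [hjx, hkx]
  rw [List.getD_eq_getElem _ _ hj.1, List.getD_eq_getElem _ _ hk.1] at hx
  have := (List.Nodup.getElem_inj_iff hnd).1 hx
  omega

lemma multiset_eqs (n : ℕ) (es es' : List (Fin (2*n+3))) (hnd : es.Nodup) (hnd' : es'.Nodup)
    (h : pathX n es = pathX n es') :
    (↑(posList n es 0) : Multiset (Fin (2*n+3))) = ↑(posList n es' 0) ∧
    (↑(posList n es 1) : Multiset (Fin (2*n+3))) = ↑(posList n es' 1) := by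
  have inj := IsFractionRing.injective (MvPolynomial (Fin (2*n+3)) ℚ) (F n)
  rw [pathX_eq, pathX_eq] at h
  have hP1z : (algebraMap (MvPolynomial (Fin (2*n+3)) ℚ) (F n))
      (((posList n es 1).map MvPolynomial.X).prod) ≠ 0 := by
    intro hz
    exact posList_prod_ne_zero n es 1 (inj (by rw [hz, map_zero]))
  have hQ1z : (algebraMap (MvPolynomial (Fin (2*n+3)) ℚ) (F n))
      (((posList n es' 1).map MvPolynomial.X).prod) ≠ 0 := by
    intro hz
    exact posList_prod_ne_zero n es' 1 (inj (by rw [hz, map_zero]))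
  rw [← div_eq_mul_inv, ← div_eq_mul_inv, div_eq_div_iff hP1z hQ1z] at h
  have hpoly : (((posList n es 0).map MvPolynomial.X).prod : MvPolynomial (Fin (2*n+3)) ℚ)
      * ((posList n es' 1).map MvPolynomial.X).prod
      = ((posList n es' 0).map MvPolynomial.X).prod * ((posList n es 1).map MvPolynomial.X).prod :=
    inj (by rw [map_mul, map_mul]; exact h)
  have hms : (↑(posList n es 0) + ↑(posList n es' 1) : Multiset (Fin (2*n+3)))
      = ↑(posList n es' 0) + ↑(posList n es 1) := by
    apply prod_X_inj (2*n+3)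
    rw [Multiset.map_add, Multiset.prod_add, Multiset.map_add, Multiset.prod_add,
      Multiset.map_coe, Multiset.map_coe, Multiset.map_coe, Multiset.map_coe,
      Multiset.prod_coe, Multiset.prod_coe, Multiset.prod_coe, Multiset.prod_coe]
    exact hpoly
  exact ms_cancel hms (posList_disjoint n es hnd) (posList_disjoint n es' hnd')

/-! ### graph lemmas -/

lemma edge_ne (n : ℕ) (T : Triangulation n) (i : Fin (2*n+3)) : T.src i ≠ T.tgt i := by
  by_cases h : i.val < n
  · exact (T.diag i h).1
  · have hb := T.bdry i (le_of_not_gt h)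
    intro he
    have h3 : (T.tgt i).val < n + 3 := (T.tgt i).isLt
    rcases hb with h1 | h1 <;> rw [he] at h1 <;>
    · rcases Nat.lt_or_ge ((T.tgt i).val + 1) (n+3) with h4 | h4
      · rw [Nat.mod_eq_of_lt h4] at h1
        omega
      · have h5 : (T.tgt i).val + 1 = n + 3 := by omega
        rw [h5, Nat.mod_self] at h1
        omega

lemma joins_ne {n : ℕ} {T : Triangulation n} {i : Fin (2*n+3)} {u v : Fin (n+3)}
    (h : Joins n T i u v) : u ≠ v := by
  rcases h with ⟨h1, h2⟩ | ⟨h1, h2⟩ <;>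
    · intro he
      apply edge_ne n T i
      rw [h1, h2, he]

lemma joins_symm {n : ℕ} {T : Triangulation n} {i : Fin (2*n+3)} {u v : Fin (n+3)}
    (h : Joins n T i u v) : Joins n T i v u := by
  rcases h with ⟨h1, h2⟩ | ⟨h1, h2⟩
  · exact Or.inr ⟨h1, h2⟩
  · exact Or.inl ⟨h1, h2⟩

lemma joins_pair_det {n : ℕ} {T : Triangulation n} {i : Fin (2*n+3)} {u v w z : Fin (n+3)}
    (h1 : Joins n T i u v) (h2 : Joins n T i w z) : (u = w ∧ v = z) ∨ (u = z ∧ v = w) := by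
  rcases h1 with ⟨a1, a2⟩ | ⟨a1, a2⟩ <;> rcases h2 with ⟨b1, b2⟩ | ⟨b1, b2⟩
  · exact Or.inl ⟨a1.symm.trans b1, a2.symm.trans b2⟩
  · exact Or.inr ⟨a1.symm.trans b1, a2.symm.trans b2⟩
  · exact Or.inr ⟨a2.symm.trans b2, a1.symm.trans b1⟩
  · exact Or.inl ⟨a2.symm.trans b2, a1.symm.trans b1⟩

lemma joins_right_unique {n : ℕ} {T : Triangulation n} {i : Fin (2*n+3)} {u v w : Fin (n+3)}
    (h1 : Joins n T i u v) (h2 : Joins n T i u w) : v = w := by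
  rcases joins_pair_det h1 h2 with ⟨e1, e2⟩ | ⟨e1, e2⟩
  · exact e2
  · exact e2.trans e1

lemma joins_index_unique {n : ℕ} {T : Triangulation n} {i j : Fin (2*n+3)} {u v : Fin (n+3)}
    (h1 : Joins n T i u v) (h2 : Joins n T j u v) : i = j := by
  apply T.inj
  rcases h1 with ⟨a1, a2⟩ | ⟨a1, a2⟩ <;> rcases h2 with ⟨b1, b2⟩ | ⟨b1, b2⟩
  · exact Or.inl ⟨a1.trans b1.symm, a2.trans b2.symm⟩
  · exact Or.inr ⟨a1.trans b2.symm, a2.trans b1.symm⟩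
  · exact Or.inr ⟨a1.trans b2.symm, a2.trans b1.symm⟩
  · exact Or.inl ⟨a1.trans b1.symm, a2.trans b2.symm⟩

lemma crossPts_eq {n : ℕ} {T : Triangulation n} {i : Fin (2*n+3)} {u v a b : Fin (n+3)}
    (h : Joins n T i u v) :
    crossPts n T i a b
      = openSegment ℝ (vtx n u) (vtx n v) ∩ openSegment ℝ (vtx n a) (vtx n b) := by
  rcases h with ⟨h1, h2⟩ | ⟨h1, h2⟩
  · rw [crossPts, h1, h2]
  · rw [crossPts, h1, h2, openSegment_symm]

lemma ecross_iff {n : ℕ} {T : Triangulation n} {i : Fin (2*n+3)} {a b : Fin (n+3)} :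
    ECross n T i a b ↔ (crossPts n T i a b).Nonempty := Iff.rfl

lemma head_getD {α : Type*} {l : List α} {x : α} (h : l.head? = some x) (d : α) :
    l.getD 0 d = x := by
  cases l with
  | nil => simp at h
  | cons y t =>
    simp at h
    simp [h]

lemma last_getD {α : Type*} {l : List α} {x : α} {m : ℕ} (h : l.getLast? = some x)
    (hm : l.length = m + 1) (d : α) : l.getD m d = x := by
  rw [List.getLast?_eq_getElem?, hm] at h
  have hm' : m < l.length := by omega
  rw [show m + 1 - 1 = m from rfl, List.getElem?_eq_getElem hm'] at h
  rw [List.getD_eq_getElem _ _ hm']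
  exact Option.some.inj h

lemma nodup_getD_inj {α : Type*} {l : List α} (hnd : l.Nodup) {i j : ℕ} (d : α)
    (hi : i < l.length) (hj : j < l.length) (h : l.getD i d = l.getD j d) :
    i = j := by
  rw [List.getD_eq_getElem _ _ hi, List.getD_eq_getElem _ _ hj] at h
  exact (List.Nodup.getElem_inj_iff hnd).1 h

lemma map_pointwise {α β : Type*} : ∀ (l : List α) (f g : α → β),
    l.map f = l.map g → ∀ x ∈ l, f x = g x := by
  intro l f g h x hx
  induction l with
  | nil => simp at hx
  | cons y t ih =>
    simp only [List.map_cons, List.cons.injEq] at h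
    rcases List.mem_cons.1 hx with rfl | hx'
    · exact h.1
    · exact ih h.2 hx'

lemma filter_parity_length : ∀ l : List ℕ,
    (l.filter (fun k => decide (k % 2 = 0))).length
      + (l.filter (fun k => decide (k % 2 = 1))).length = l.length := by
  intro l
  induction l with
  | nil => simp
  | cons x t ih =>
    rcases Nat.mod_two_eq_zero_or_one x with h | h <;>
      simp [List.filter_cons, h] <;> omega

lemma mem_posList {n : ℕ} {l : List (Fin (2*n+3))} {r : ℕ} {x : Fin (2*n+3)} :
    x ∈ posList n l r ↔ ∃ m, m < l.length ∧ m % 2 = r ∧ l.getD m (edef n) = x := by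
  simp [posList, List.mem_map, List.mem_filter, List.mem_range]
  constructor
  · rintro ⟨m, ⟨h1, h2⟩, h3⟩
    exact ⟨m, h1, h2, h3⟩
  · rintro ⟨m, h1, h2, h3⟩
    exact ⟨m, ⟨h1, h2⟩, h3⟩

end L1

set_option maxHeartbeats 4000000 in
theorem L1.lemma1_main
    (n : ℕ) (hn : 1 ≤ n) (T : Triangulation n) (a b : Fin (n + 3)) (hab : a ≠ b) :
    ∀ α ∈ TPaths n T a b, ∀ α' ∈ TPaths n T a b, α ≠ α' →
      pathX n α.2 ≠ pathX n α'.2 := by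
  intro α hα α' hα' hne heq
  apply hne
  obtain ⟨hlen, hhead, hlast, hT2, hnd, hodd, hT5, hT6⟩ := hα
  obtain ⟨hlen', hhead', hlast', hT2', hnd', hodd', hT5', hT6'⟩ := hα'
  obtain ⟨h0, h1⟩ := L1.multiset_eqs n α.2 α'.2 hnd hnd' heq
  set es := α.2 with hes
  set es' := α'.2 with hes'
  set vs := α.1 with hvs
  set vs' := α'.1 with hvs'
  set L := es.length with hL
  -- lengths are equal
  have hLL : es'.length = L := by
    have c0 := congrArg Multiset.card h0
    have c1 := congrArg Multiset.card h1
    rw [Multiset.coe_card, Multiset.coe_card] at c0 c1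
    simp only [L1.posList, List.length_map] at c0 c1
    have p1 := L1.filter_parity_length (List.range es.length)
    have p2 := L1.filter_parity_length (List.range es'.length)
    rw [List.length_range] at p1 p2
    omega
  have hV0 : vs.getD 0 a = a := L1.head_getD hhead a
  have hV0' : vs'.getD 0 a = a := L1.head_getD hhead' a
  have hVL : vs.getD L a = b := L1.last_getD hlast hlen a
  have hVL' : vs'.getD L a = b := by
    have := L1.last_getD hlast' hlen' a
    rwa [hLL] at this
  -- the crossing sublists are equal as lists
  have hppl : L1.posList n es 1 = L1.posList n es' 1 := by
    have hperm : (L1.posList n es 1).Perm (L1.posList n es' 1) := Multiset.coe_eq_coe.1 h1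
    have hpair1 : (L1.posList n es 1).Pairwise (fun x y =>
        ∀ p ∈ crossPts n T x a b, ∀ q ∈ crossPts n T y a b,
          dist (vtx n a) p < dist (vtx n a) q) := by
      rw [L1.posList, List.pairwise_map]
      apply List.Pairwise.sublist List.filter_sublist
      rw [List.pairwise_iff_getElem]
      intro i j hi hj hij
      rw [List.getElem_range, List.getElem_range]
      intro x hx y hy
      exact hT6 i j hij (by simpa using hj) x hx y hy
    have hpair2 : (L1.posList n es' 1).Pairwise (fun x y =>
        ∀ p ∈ crossPts n T x a b, ∀ q ∈ crossPts n T y a b,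
          dist (vtx n a) p < dist (vtx n a) q) := by
      rw [L1.posList, List.pairwise_map]
      apply List.Pairwise.sublist List.filter_sublist
      rw [List.pairwise_iff_getElem]
      intro i j hi hj hij
      rw [List.getElem_range, List.getElem_range]
      intro x hx y hy
      exact hT6' i j hij (by simpa using hj) x hx y hy
    apply L1.eq_of_perm_of_pairwise _ _ hperm hpair1 hpair2
    intro x hx y hy hxy hyx
    obtain ⟨mx, hmx, hmx2, hmxe⟩ := L1.mem_posList.1 hx
    obtain ⟨my, hmy, hmy2, hmye⟩ := L1.mem_posList.1 hy
    have cx : (crossPts n T x a b).Nonempty := by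
      rw [← hmxe]
      exact hT5 mx hmx hmx2
    have cy : (crossPts n T y a b).Nonempty := by
      rw [← hmye]
      exact hT5 my hmy hmy2
    obtain ⟨px, hpx⟩ := cx
    obtain ⟨py, hpy⟩ := cy
    have := hxy px hpx py hpy
    have := hyx py hpy px hpx
    linarith
  have hcrossEq : ∀ m, m < L → m % 2 = 1 → es.getD m (edef n) = es'.getD m (edef n) := by
    intro m hm hm2
    have hppl2 : ((List.range L).filter (fun k => decide (k % 2 = 1))).map
          (fun k => es.getD k (edef n))
        = ((List.range L).filter (fun k => decide (k % 2 = 1))).map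
          (fun k => es'.getD k (edef n)) := by
      have e1 : L1.posList n es 1 = ((List.range L).filter (fun k => decide (k % 2 = 1))).map
          (fun k => es.getD k (edef n)) := by rw [L1.posList]
      have e2 : L1.posList n es' 1 = ((List.range L).filter (fun k => decide (k % 2 = 1))).map
          (fun k => es'.getD k (edef n)) := by rw [L1.posList, hLL]
      rw [← e1, ← e2, hppl]
    exact L1.map_pointwise _ _ _ hppl2 m
      (List.mem_filter.2 ⟨List.mem_range.2 hm, by simp [hm2]⟩)
  -- the main induction
  have key : ∀ k : ℕ, (k ≤ L → vs.getD k a = vs'.getD k a) ∧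
      (k < L → es.getD k (edef n) = es'.getD k (edef n)) := by
    intro k
    induction k using Nat.strong_induction_on with
    | _ k ih =>
    have hVcomp : k ≤ L → vs.getD k a = vs'.getD k a := by
      intro hkL
      cases k with
      | zero => rw [hV0, hV0']
      | succ m =>
        have hmL : m < L := by omega
        have hEm := (ih m (by omega)).2 hmL
        have hVm := (ih m (by omega)).1 (by omega)
        have hJm := hT2 m hmL
        have hJm' := hT2' m (by omega)
        rw [← hEm, ← hVm] at hJm'
        exact L1.joins_right_unique hJm hJm'
    refine ⟨hVcomp, ?_⟩
    intro hkL
    rcases Nat.mod_two_eq_zero_or_one k with hk2 | hk2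
    swap
    · exact hcrossEq k hkL hk2
    by_contra hne2
    have hVk := hVcomp (le_of_lt hkL)
    -- E' k occurs in es at an even position M0 ≥ k+2
    have hmem : es'.getD k (edef n) ∈ L1.posList n es 0 := by
      rw [← Multiset.mem_coe, h0, Multiset.mem_coe]
      exact L1.mem_posList.2 ⟨k, by omega, hk2, rfl⟩
    obtain ⟨M0, hM0L, hM0p, hM0x⟩ := L1.mem_posList.1 hmem
    have hM0k : k + 2 ≤ M0 := by
      rcases lt_trichotomy M0 k with h | h | h
      · exfalso
        have hEM := (ih M0 h).2 (by omega)
        rw [hEM] at hM0x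
        have := L1.nodup_getD_inj hnd' (edef n) (by omega) (by omega) hM0x
        omega
      · exfalso
        rw [h] at hM0x
        exact hne2 hM0x
      · omega
    have hk1L : k + 1 < L := by omega
    have hCeq : es'.getD (k+1) (edef n) = es.getD (k+1) (edef n) :=
      (hcrossEq (k+1) hk1L (by omega)).symm
    have hJe := hT2 k hkL
    have hJe' := hT2' k (by omega)
    rw [← hVk] at hJe'
    have huv : vs.getD (k+1) a ≠ vs'.getD (k+1) a := by
      intro h
      rw [← h] at hJe'
      exact hne2 (L1.joins_index_unique hJe hJe')
    have hJC := hT2 (k+1) hk1L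
    have hJC' := hT2' (k+1) (by omega)
    rw [hCeq] at hJC'
    have hpd := L1.joins_pair_det hJC hJC'
    rcases hpd with ⟨e1, e2⟩ | ⟨e1, e2⟩
    · exact huv e1
    have hJCuv : Joins n T (es.getD (k+1) (edef n)) (vs.getD (k+1) a) (vs'.getD (k+1) a) := by
      rw [← e2]
      exact hJC
    have hCne : (crossPts n T (es.getD (k+1) (edef n)) a b).Nonempty :=
      hT5 (k+1) hk1L (by omega)
    have hCseg : crossPts n T (es.getD (k+1) (edef n)) a b
        = openSegment ℝ (vtx n (vs.getD (k+1) a)) (vtx n (vs'.getD (k+1) a))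
          ∩ openSegment ℝ (vtx n a) (vtx n b) := L1.crossPts_eq hJCuv
    have hCpair : ¬((vs.getD (k+1) a = a ∧ vs'.getD (k+1) a = b) ∨
        (vs.getD (k+1) a = b ∧ vs'.getD (k+1) a = a)) := by
      intro hp
      by_cases hk0 : k = 0
      · subst hk0
        rw [hV0] at hJe
        rcases hp with ⟨hu, hv⟩ | ⟨hu, hv⟩
        · exact (L1.joins_ne hJe) hu.symm
        · have h1 : Joins n T (es.getD 0 (edef n)) a b := by
            rw [hu] at hJe
            exact hJe
          have h2 : Joins n T (es.getD 1 (edef n)) a b := by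
            have := hJCuv
            rw [hu, hv] at this
            exact L1.joins_symm this
          have := L1.joins_index_unique h1 h2
          have := L1.nodup_getD_inj hnd (edef n) (by omega) (by omega) this
          omega
      · have hDcross : ECross n T (es.getD (k-1) (edef n)) a b := hT5 (k-1) (by omega) (by omega)
        have hDC : es.getD (k-1) (edef n) ≠ es.getD (k+1) (edef n) := by
          intro h
          have := L1.nodup_getD_inj hnd (edef n) (by omega) hk1L h
          omega
        apply T.noncross _ _ hDC
        have hseg : openSegment ℝ (vtx n (T.src (es.getD (k+1) (edef n))))
            (vtx n (T.tgt (es.getD (k+1) (edef n))))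
            = openSegment ℝ (vtx n a) (vtx n b) := by
          rcases hJCuv with ⟨c1, c2⟩ | ⟨c1, c2⟩ <;> rcases hp with ⟨hu, hv⟩ | ⟨hu, hv⟩ <;>
            rw [c1, c2, hu, hv] <;> first | rfl | exact openSegment_symm ℝ _ _
        obtain ⟨z, hz1, hz2⟩ := hDcross
        exact ⟨z, hz1, hseg ▸ hz2⟩
    have hnoab : ∀ m, m < L → m % 2 = 1 → ∀ w z : Fin (n+3),
        Joins n T (es.getD m (edef n)) w z →
        ¬((w = a ∧ z = b) ∨ (w = b ∧ z = a)) := by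
      intro m hm hm2 w z hj hp
      by_cases hmk : m = k + 1
      · subst hmk
        rcases L1.joins_pair_det hj hJCuv with ⟨e1', e2'⟩ | ⟨e1', e2'⟩
        · subst e1'
          subst e2'
          exact hCpair hp
        · subst e1'
          subst e2'
          rcases hp with ⟨f1, f2⟩ | ⟨f1, f2⟩
          · exact hCpair (Or.inr ⟨f2, f1⟩)
          · exact hCpair (Or.inl ⟨f2, f1⟩)
      · have hDC : es.getD m (edef n) ≠ es.getD (k+1) (edef n) := by
          intro h
          exact hmk (L1.nodup_getD_inj hnd (edef n) hm hk1L h)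
        apply T.noncross _ _ hDC
        obtain ⟨z1, hz1, hz2⟩ := hCne
        refine ⟨z1, ?_, hz1⟩
        have hseg : openSegment ℝ (vtx n (T.src (es.getD m (edef n))))
            (vtx n (T.tgt (es.getD m (edef n))))
            = openSegment ℝ (vtx n a) (vtx n b) := by
          rcases hj with ⟨c1, c2⟩ | ⟨c1, c2⟩ <;> rcases hp with ⟨hu, hv⟩ | ⟨hu, hv⟩ <;>
            rw [c1, c2, hu, hv] <;> first | rfl | exact openSegment_symm ℝ _ _
        rw [hseg]
        exact hz2
    have hCends := L1.endpoints_ne hab (by rw [← hCseg]; exact hCne) hCpair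
    by_cases hk0 : k = 0
    · -- the start-of-path case: the walk would have to return to a
      subst hk0
      rw [hV0] at hJe hJe'
      have hJM := hT2 M0 hM0L
      rw [hM0x] at hJM
      have hpd2 := L1.joins_pair_det hJM hJe'
      have hJD' : Joins n T (es.getD (M0-1) (edef n)) (vs.getD (M0-1) a) (vs.getD M0 a) := by
        have h' := hT2 (M0-1) (by omega)
        rwa [show M0 - 1 + 1 = M0 by omega] at h'
      have hD'cross : ECross n T (es.getD (M0-1) (edef n)) a b := hT5 (M0-1) (by omega) (by omega)
      have hD'pair := hnoab (M0-1) (by omega) (by omega) _ _ hJD'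
      have hendsD' := L1.endpoints_ne hab (by rw [← L1.crossPts_eq hJD']; exact hD'cross) hD'pair
      rcases hpd2 with ⟨f1, f2⟩ | ⟨f1, f2⟩
      · exact hendsD'.2.2.1 f1
      rcases Nat.lt_or_ge (M0+1) L with hM1 | hM1
      · have hJN : Joins n T (es.getD (M0+1) (edef n)) (vs.getD (M0+1) a) (vs.getD (M0+2) a) :=
          hT2 (M0+1) hM1
        have hNpair := hnoab (M0+1) hM1 (by omega) _ _ hJN
        have hendsN := L1.endpoints_ne hab
          (by rw [← L1.crossPts_eq hJN]; exact hT5 (M0+1) hM1 (by omega)) hNpair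
        exact hendsN.1 f2
      · have hM1L : M0 + 1 = L := by omega
        rw [← hM1L] at hVL
        rw [f2] at hVL
        exact hab hVL
    · -- the interior case: sign analysis
      have hJD : Joins n T (es.getD (k-1) (edef n)) (vs.getD (k-1) a) (vs.getD k a) := by
        have h' := hT2 (k-1) (by omega)
        rwa [show k - 1 + 1 = k by omega] at h'
      have hDpair := hnoab (k-1) (by omega) (by omega) _ _ hJD
      have hendsD := L1.endpoints_ne hab
        (by rw [← L1.crossPts_eq hJD]; exact hT5 (k-1) (by omega) (by omega)) hDpair
      have hfp : L1.lf (vtx n a) (vtx n b) (vtx n (vs.getD k a)) ≠ 0 := by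
        intro h
        rcases L1.vertex_line hab h with h' | h'
        · exact hendsD.2.2.1 h'
        · exact hendsD.2.2.2 h'
      have hop := L1.opp_signs hab (by rw [← hCseg]; exact hCne) hCpair
      have hu0 : L1.lf (vtx n a) (vtx n b) (vtx n (vs.getD (k+1) a)) ≠ 0 := by
        intro h
        rw [h, zero_mul] at hop
        exact lt_irrefl 0 hop
      have hv0 : L1.lf (vtx n a) (vtx n b) (vtx n (vs'.getD (k+1) a)) ≠ 0 := by
        intro h
        rw [h, mul_zero] at hop
        exact lt_irrefl 0 hop
      have hcase : L1.lf (vtx n a) (vtx n b) (vtx n (vs.getD k a))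
            * L1.lf (vtx n a) (vtx n b) (vtx n (vs'.getD (k+1) a)) < 0 ∨
          L1.lf (vtx n a) (vtx n b) (vtx n (vs.getD k a))
            * L1.lf (vtx n a) (vtx n b) (vtx n (vs.getD (k+1) a)) < 0 := by
        rcases lt_or_gt_of_ne hfp with hp' | hp' <;> rcases lt_or_gt_of_ne hv0 with hv' | hv'
        · right
          have hu' : 0 < L1.lf (vtx n a) (vtx n b) (vtx n (vs.getD (k+1) a)) := by nlinarith
          exact mul_neg_of_neg_of_pos hp' hu'
        · left
          exact mul_neg_of_neg_of_pos hp' hv'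
        · left
          exact mul_neg_of_pos_of_neg hp' hv'
        · right
          have hu' : L1.lf (vtx n a) (vtx n b) (vtx n (vs.getD (k+1) a)) < 0 := by nlinarith
          exact mul_neg_of_pos_of_neg hp' hu'
      obtain ⟨xC, hxC⟩ := hCne
      rcases hcase with hpv | hpu
      · -- the edge T_{i'_k} = {p, v} crosses M, contradiction with (T6)
        have he'cross : (crossPts n T (es'.getD k (edef n)) a b).Nonempty := by
          rw [L1.crossPts_eq hJe']
          exact L1.cross_of_opp hab hpv
        obtain ⟨ye, hye⟩ := he'cross
        have t1 := hT6 (k+1) M0 (by omega) hM0L xC hxC ye (by rw [hM0x]; exact hye)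
        have t2 := hT6' k (k+1) (by omega) (by omega) ye hye xC (by rw [hCeq]; exact hxC)
        linarith [dist_nonneg (x := vtx n a) (y := xC)]
      · -- the edge T_{i_k} = {p, u} crosses M, contradiction with (T6)
        have hecross : (crossPts n T (es.getD k (edef n)) a b).Nonempty := by
          rw [L1.crossPts_eq hJe]
          exact L1.cross_of_opp hab hpu
        obtain ⟨ye, hye⟩ := hecross
        have hmem2 : es.getD k (edef n) ∈ L1.posList n es' 0 := by
          rw [← Multiset.mem_coe, ← h0, Multiset.mem_coe]
          exact L1.mem_posList.2 ⟨k, hkL, hk2, rfl⟩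
        obtain ⟨M1, hM1L, hM1p, hM1x⟩ := L1.mem_posList.1 hmem2
        have hM1k : k + 2 ≤ M1 := by
          rcases lt_trichotomy M1 k with h | h | h
          · exfalso
            have hEM := (ih M1 h).2 (by omega)
            rw [← hEM] at hM1x
            have := L1.nodup_getD_inj hnd (edef n) (by omega) hkL hM1x
            omega
          · exfalso
            rw [h] at hM1x
            exact hne2 hM1x.symm
          · omega
        have t1 := hT6' (k+1) M1 (by omega) hM1L xC (by rw [hCeq]; exact hxC)
          ye (by rw [hM1x]; exact hye)
        have t2 := hT6 k (k+1) (by omega) hk1L ye hye xC hxC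
        linarith
  -- conclude α = α'
  have hlist2 : es = es' := by
    apply List.ext_getElem (by omega)
    intro i h1 h2
    have := (key i).2 h1
    rwa [List.getD_eq_getElem _ _ h1, List.getD_eq_getElem _ _ h2] at this
  have hlist1 : vs = vs' := by
    apply List.ext_getElem (by omega)
    intro i h1 h2
    have := (key i).1 (by omega)
    rwa [List.getD_eq_getElem _ _ h1, List.getD_eq_getElem _ _ h2] at this
  rw [hes, hes'] at hlist2
  rw [hvs, hvs'] at hlist1
  exact Prod.ext hlist1 hlist2

/-- Lemma 1: `α ↦ x(α)` is injective on `𝒫_T(a,b)`. -/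
theorem pathX_injOn_TPaths
    (n : ℕ) (hn : 1 ≤ n) (T : Triangulation n) (a b : Fin (n + 3)) (hab : a ≠ b) :
    ∀ α ∈ TPaths n T a b, ∀ α' ∈ TPaths n T a b, α ≠ α' →
      pathX n α.2 ≠ pathX n α'.2 :=
  L1.lemma1_main n hn T a b hab
end

section
/- In the setup, if an edge T_i ∈ T has a as an endpoint, then T_i crosses neither the segment L nor the segment L'. (Lemma 2.3(b).) -/
open scoped BigOperators Classical

noncomputable section Helpers
open scoped InnerProductSpace

lemma vtx_zero (n : ℕ) (k : Fin (n+3)) : vtx n k 0 = Real.cos (2 * Real.pi * k / (n + 3)) := rfl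
lemma vtx_one (n : ℕ) (k : Fin (n+3)) : vtx n k 1 = Real.sin (2 * Real.pi * k / (n + 3)) := rfl

lemma norm_vtx (n : ℕ) (k : Fin (n+3)) : ‖vtx n k‖ = 1 := by
  rw [EuclideanSpace.norm_eq]
  simp [Fin.sum_univ_two, vtx_zero, vtx_one, Real.norm_eq_abs, sq_abs,
    Real.cos_sq_add_sin_sq]

lemma vtx_injective (n : ℕ) {k l : Fin (n+3)} (h : vtx n k = vtx n l) : k = l := by
  have h0 : Real.cos (2 * Real.pi * k / (n + 3)) = Real.cos (2 * Real.pi * l / (n + 3)) := by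
    rw [← vtx_zero, ← vtx_zero, h]
  have h1 : Real.sin (2 * Real.pi * k / (n + 3)) = Real.sin (2 * Real.pi * l / (n + 3)) := by
    rw [← vtx_one, ← vtx_one, h]
  set x := 2 * Real.pi * k / (n + 3) with hx
  set y := 2 * Real.pi * l / (n + 3) with hy
  have hcos : Real.cos (x - y) = 1 := by
    rw [Real.cos_sub, h0, h1]
    exact Real.cos_sq_add_sin_sq _ ▸ by nlinarith [Real.sin_sq_add_cos_sq y]
  have hpi := Real.pi_pos
  have hk : (k : ℝ) < (n : ℝ) + 3 := by
    have := k.isLt; push_cast; exact_mod_cast this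
  have hl : (l : ℝ) < (n : ℝ) + 3 := by
    have := l.isLt; push_cast; exact_mod_cast this
  have hk0 : (0:ℝ) ≤ (k:ℝ) := Nat.cast_nonneg _
  have hl0 : (0:ℝ) ≤ (l:ℝ) := Nat.cast_nonneg _
  have hn3 : (0:ℝ) < (n:ℝ) + 3 := by positivity
  have hxb : 0 ≤ x ∧ x < 2 * Real.pi := by
    constructor
    · positivity
    · rw [hx, div_lt_iff₀ hn3]; nlinarith
  have hyb : 0 ≤ y ∧ y < 2 * Real.pi := by
    constructor
    · positivity
    · rw [hy, div_lt_iff₀ hn3]; nlinarith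
  have hxy : x = y := by
    have := Real.cos_eq_one_iff_of_lt_of_lt (x := x - y) (by linarith [hxb.1, hxb.2, hyb.1, hyb.2]) (by linarith [hxb.1, hxb.2, hyb.1, hyb.2]) |>.mp hcos
    linarith
  have : (k:ℝ) = (l:ℝ) := by
    rw [hx, hy] at hxy
    field_simp at hxy
    exact_mod_cast hxy
  exact Fin.ext (by exact_mod_cast this)

section chord
variable {p q : EuclideanSpace ℝ (Fin 2)}

lemma combo_norm_sq (hp : ‖p‖ = 1) (hq : ‖q‖ = 1) (t : ℝ) :
    ‖(1 - t) • p + t • q‖ ^ 2 = 1 + 2 * t * (1 - t) * (⟪p, q⟫_ℝ - 1) := by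
  have hpp : ⟪p, p⟫_ℝ = 1 := by rw [real_inner_self_eq_norm_sq, hp]; norm_num
  have hqq : ⟪q, q⟫_ℝ = 1 := by rw [real_inner_self_eq_norm_sq, hq]; norm_num
  have : ‖(1 - t) • p + t • q‖ ^ 2 = ⟪(1 - t) • p + t • q, (1 - t) • p + t • q⟫_ℝ :=
    (real_inner_self_eq_norm_sq _).symm
  rw [this, inner_add_left, inner_add_right, inner_add_right, real_inner_smul_left,
    real_inner_smul_left, real_inner_smul_left, real_inner_smul_left, real_inner_smul_right,
    real_inner_smul_right, real_inner_smul_right, real_inner_smul_right,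
    hpp, hqq, real_inner_comm q p]
  ring

lemma inner_lt_one (hp : ‖p‖ = 1) (hq : ‖q‖ = 1) (hne : p ≠ q) : ⟪p, q⟫_ℝ < 1 :=
  (inner_lt_one_iff_real_of_norm_eq_one hp hq).mpr hne

lemma chord_mem (hp : ‖p‖ = 1) (hq : ‖q‖ = 1) (hne : p ≠ q) {t : ℝ}
    (h : ‖(1 - t) • p + t • q‖ = 1) : t = 0 ∨ t = 1 := by
  have h2 := combo_norm_sq hp hq t
  rw [h] at h2
  have hi := inner_lt_one hp hq hne
  have : t * (1 - t) = 0 := by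
    rcases mul_eq_zero.mp (by nlinarith : 2 * t * (1 - t) * (⟪p, q⟫_ℝ - 1) = 0) with h' | h'
    · rcases mul_eq_zero.mp h' with h'' | h''
      · rcases mul_eq_zero.mp h'' with h3 | h3
        · norm_num at h3
        · rw [h3]; ring
      · rw [h'']; ring
    · exfalso; linarith
  rcases mul_eq_zero.mp this with h' | h'
  · exact Or.inl h'
  · exact Or.inr (by linarith)

lemma chord_interior (hp : ‖p‖ = 1) (hq : ‖q‖ = 1) (hne : p ≠ q) {t : ℝ}
    (h : ‖(1 - t) • p + t • q‖ < 1) : 0 < t ∧ t < 1 := by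
  have h2 := combo_norm_sq hp hq t
  have hi := inner_lt_one hp hq hne
  have hn : (0:ℝ) ≤ ‖(1 - t) • p + t • q‖ := norm_nonneg _
  have hlt : ‖(1 - t) • p + t • q‖ ^ 2 < 1 := by nlinarith
  have htt : 0 < t * (1 - t) := by nlinarith
  constructor <;> nlinarith

lemma chord_lt (hp : ‖p‖ = 1) (hq : ‖q‖ = 1) (hne : p ≠ q) {t : ℝ}
    (h0 : 0 < t) (h1 : t < 1) : ‖(1 - t) • p + t • q‖ < 1 := by
  have h2 := combo_norm_sq hp hq t
  have hi := inner_lt_one hp hq hne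
  have hn : (0:ℝ) ≤ ‖(1 - t) • p + t • q‖ := norm_nonneg _
  have ht : 0 < t * (1 - t) := mul_pos h0 (by linarith)
  nlinarith [mul_pos ht (show (0:ℝ) < 1 - ⟪p, q⟫_ℝ by linarith)]

end chord

lemma eq_of_coords {p q : EuclideanSpace ℝ (Fin 2)} (h0 : p 0 = q 0) (h1 : p 1 = q 1) :
    p = q := by
  apply (WithLp.equiv 2 (Fin 2 → ℝ)).injective
  funext i
  fin_cases i <;> assumption

lemma coord_add (p q : EuclideanSpace ℝ (Fin 2)) (i : Fin 2) : (p + q) i = p i + q i := rfl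
lemma coord_smul (r : ℝ) (p : EuclideanSpace ℝ (Fin 2)) (i : Fin 2) : (r • p) i = r * p i := rfl

def lf (c d p : EuclideanSpace ℝ (Fin 2)) : ℝ :=
  (d 0 - c 0) * (p 1 - c 1) - (d 1 - c 1) * (p 0 - c 0)

lemma lf_aff (c d : EuclideanSpace ℝ (Fin 2)) (r : ℝ) (p q : EuclideanSpace ℝ (Fin 2)) :
    lf c d ((1 - r) • p + r • q) = (1 - r) * lf c d p + r * lf c d q := by
  simp only [lf, coord_add, coord_smul]
  ring

lemma lf_c (c d : EuclideanSpace ℝ (Fin 2)) : lf c d c = 0 := by simp only [lf]; ring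
lemma lf_d (c d : EuclideanSpace ℝ (Fin 2)) : lf c d d = 0 := by simp only [lf]; ring

lemma line2 {c d p : EuclideanSpace ℝ (Fin 2)} (hcd : c ≠ d)
    (h : lf c d p = 0) :
    ∃ u : ℝ, p = (1 - u) • c + u • d := by
  rw [lf] at h
  have hne : c 0 ≠ d 0 ∨ c 1 ≠ d 1 := by
    by_contra h'
    push_neg at h'
    exact hcd (eq_of_coords h'.1 h'.2)
  rcases hne with hne | hne
  · have hd0 : d 0 - c 0 ≠ 0 := sub_ne_zero.mpr (Ne.symm hne)
    refine ⟨(p 0 - c 0) / (d 0 - c 0), eq_of_coords ?_ ?_⟩ <;>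
      simp only [coord_add, coord_smul]
    · field_simp
      ring
    · have h2 : (p 0 - c 0) / (d 0 - c 0) * (d 1 - c 1) = p 1 - c 1 := by
        rw [div_mul_eq_mul_div, div_eq_iff hd0]
        linear_combination -h
      linear_combination -h2
  · have hd1 : d 1 - c 1 ≠ 0 := sub_ne_zero.mpr (Ne.symm hne)
    refine ⟨(p 1 - c 1) / (d 1 - c 1), eq_of_coords ?_ ?_⟩ <;>
      simp only [coord_add, coord_smul]
    · have h2 : (p 1 - c 1) / (d 1 - c 1) * (d 0 - c 0) = p 0 - c 0 := by
        rw [div_mul_eq_mul_div, div_eq_iff hd1]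
        linear_combination h
      linear_combination -h2
    · field_simp
      ring

lemma mem_os {p q y : EuclideanSpace ℝ (Fin 2)} :
    y ∈ openSegment ℝ p q ↔ ∃ t : ℝ, 0 < t ∧ t < 1 ∧ (1 - t) • p + t • q = y := by
  rw [openSegment_eq_image]
  simp only [Set.mem_image, Set.mem_Ioo]
  exact ⟨fun ⟨t, ⟨h0, h1⟩, ht⟩ => ⟨t, h0, h1, ht⟩, fun ⟨t, h0, h1, ht⟩ => ⟨t, ⟨h0, h1⟩, ht⟩⟩

lemma core (a e c d b : EuclideanSpace ℝ (Fin 2))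
    (ha : ‖a‖ = 1) (hb : ‖b‖ = 1) (hc : ‖c‖ = 1) (hd : ‖d‖ = 1)
    (hac : a ≠ c) (had : a ≠ d) (hcd : c ≠ d)
    (hM : (openSegment ℝ a b ∩ openSegment ℝ c d).Nonempty)
    (hnc : ¬ (openSegment ℝ a e ∩ openSegment ℝ c d).Nonempty) :
    ¬ (openSegment ℝ a e ∩ openSegment ℝ c b).Nonempty := by
  rintro ⟨y, hy1, hy2⟩
  have faff : ∀ (r : ℝ) (p q : EuclideanSpace ℝ (Fin 2)),
      lf c d ((1 - r) • p + r • q) = (1 - r) * lf c d p + r * lf c d q := lf_aff c d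
  have hfc : lf c d c = 0 := lf_c c d
  have hfd : lf c d d = 0 := lf_d c d
  have hfa : lf c d a ≠ 0 := by
    intro h0
    rcases line2 hcd h0 with ⟨u, hu⟩
    rcases chord_mem hc hd hcd (by rw [← hu]; exact ha) with h | h
    · apply hac; rw [hu, h]; norm_num
    · apply had; rw [hu, h]; norm_num
  obtain ⟨x, hx1, hx2⟩ := hM
  obtain ⟨t, ht0, ht1, hxt⟩ := mem_os.mp hx1
  have hfx : lf c d x = 0 := by
    obtain ⟨u, hu0, hu1, hxu⟩ := mem_os.mp hx2
    rw [← hxu, faff, hfc, hfd]; ring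
  have hfab : lf c d a * lf c d b < 0 := by
    have h1 : (1 - t) * lf c d a + t * lf c d b = 0 := by rw [← faff, hxt, hfx]
    have h2 : (1 - t) * (lf c d a * lf c d a) + t * (lf c d a * lf c d b) = 0 := by linear_combination lf c d a * h1
    nlinarith [h2, mul_self_pos.mpr hfa, ht0, ht1]
  obtain ⟨s, hs0, hs1, hys⟩ := mem_os.mp hy2
  have hfy : lf c d y = s * lf c d b := by rw [← hys, faff, hfc]; ring
  have hfay : lf c d a * lf c d y < 0 := by rw [hfy]; nlinarith [hfab, hs0]
  have hcb : c ≠ b := by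
    intro h
    have hb0 : lf c d b = 0 := by rw [← h]; exact hfc
    rw [hb0] at hfab; nlinarith
  have hyn : ‖y‖ < 1 := by rw [← hys]; exact chord_lt hc hb hcb hs0 hs1
  have hden : lf c d a - lf c d y ≠ 0 := by
    intro h0
    have he : lf c d y = lf c d a := by linarith
    rw [he] at hfay
    nlinarith [mul_self_nonneg (lf c d a)]
  obtain ⟨r, hrr0, hrr1, hrfz⟩ : ∃ r : ℝ, 0 < r ∧ r < 1 ∧ (1 - r) * lf c d a + r * lf c d y = 0 := by
    refine ⟨lf c d a / (lf c d a - lf c d y), ?_, ?_, by field_simp; ring⟩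
    · rcases lt_or_gt_of_ne hfa with h | h
      · have hy0 : 0 < lf c d y := by nlinarith
        have hre : lf c d a / (lf c d a - lf c d y) = (-lf c d a) / (-lf c d a + lf c d y) := by
          rw [div_eq_div_iff hden (by linarith)]; ring
        rw [hre]
        exact div_pos (by linarith) (by linarith)
      · have hy0 : lf c d y < 0 := by nlinarith
        exact div_pos (by linarith) (by linarith)
    · rcases lt_or_gt_of_ne hfa with h | h
      · have hy0 : 0 < lf c d y := by nlinarith
        have hre : lf c d a / (lf c d a - lf c d y) = (-lf c d a) / (-lf c d a + lf c d y) := by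
          rw [div_eq_div_iff hden (by linarith)]; ring
        rw [hre, div_lt_one (by linarith)]; linarith
      · have hy0 : lf c d y < 0 := by nlinarith
        rw [div_lt_one (by linarith)]; linarith
  have hfz : lf c d ((1 - r) • a + r • y) = 0 := by rw [faff]; exact hrfz
  have hzn : ‖(1 - r) • a + r • y‖ < 1 := by
    have h1 : ‖(1 - r) • a + r • y‖ ≤ (1 - r) * ‖a‖ + r * ‖y‖ := by
      refine (norm_add_le _ _).trans ?_
      rw [norm_smul, norm_smul, Real.norm_eq_abs, Real.norm_eq_abs,
        abs_of_pos (by linarith : (0:ℝ) < 1 - r), abs_of_pos hrr0]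
    rw [ha] at h1
    have h2 : r * ‖y‖ < r * 1 := mul_lt_mul_of_pos_left hyn hrr0
    linarith
  obtain ⟨u, hu⟩ := line2 hcd hfz
  have huv := chord_interior hc hd hcd (by rw [← hu]; exact hzn)
  obtain ⟨t', ht'0, ht'1, hyt'⟩ := mem_os.mp hy1
  have hz_ae : (1 - r) • a + r • y ∈ openSegment ℝ a e := by
    apply mem_os.mpr
    refine ⟨r * t', mul_pos hrr0 ht'0, ?_, ?_⟩
    · nlinarith
    · rw [← hyt']
      module
  have hz_cd : (1 - r) • a + r • y ∈ openSegment ℝ c d :=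
    mem_os.mpr ⟨u, huv.1, huv.2, hu.symm⟩
  exact hnc ⟨_, hz_ae, hz_cd⟩

lemma adj_ne {n : ℕ} {u v : Fin (n + 3)} (h : Adj n u v) : u ≠ v := by
  rintro rfl
  have hv : u.val < n + 3 := u.isLt
  rcases h with h | h <;>
  · rcases Nat.lt_or_ge (u.val + 1) (n + 3) with hlt | hge
    · rw [Nat.mod_eq_of_lt hlt] at h; omega
    · have h3 : u.val + 1 = n + 3 := by omega
      rw [h3, Nat.mod_self] at h; omega

lemma edge_ne' {n : ℕ} (T : Triangulation n) (i : Fin (2 * n + 3)) : T.src i ≠ T.tgt i := by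
  rcases Nat.lt_or_ge i.val n with h | h
  · exact (T.diag i h).1
  · exact adj_ne (T.bdry i h)

lemma joins_ne {n : ℕ} {T : Triangulation n} {i : Fin (2 * n + 3)} {u v : Fin (n + 3)}
    (hj : Joins n T i u v) : u ≠ v := by
  rcases hj with ⟨h1, h2⟩ | ⟨h1, h2⟩
  · rw [← h1, ← h2]; exact edge_ne' T i
  · rw [← h1, ← h2]; exact (edge_ne' T i).symm

lemma joins_seg {n : ℕ} {T : Triangulation n} {i : Fin (2 * n + 3)} {u v : Fin (n + 3)}
    (hj : Joins n T i u v) :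
    openSegment ℝ (vtx n (T.src i)) (vtx n (T.tgt i)) =
      openSegment ℝ (vtx n u) (vtx n v) := by
  rcases hj with ⟨h1, h2⟩ | ⟨h1, h2⟩
  · rw [h1, h2]
  · rw [h1, h2, openSegment_symm]

lemma vtx_ne {n : ℕ} {u v : Fin (n + 3)} (h : u ≠ v) : vtx n u ≠ vtx n v :=
  fun he => h (vtx_injective n he)

end Helpers

/-- Lemma 2.3(b). -/
theorem adjacent_to_a_not_cross_L
    (n : ℕ) (hn : 1 ≤ n) (T : Triangulation n) (a b c d : Fin (n + 3))
    (i0 i1 i1' : Fin (2 * n + 3))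
    (hab : a ≠ b) (hnadj : ¬ Adj n a b)
    (hM : ¬ ∃ i : Fin (2 * n + 3), Joins n T i a b)
    (hi0d : i0.val < n) (hi0M : ECross n T i0 a b)
    (hclosest : ∀ j : Fin (2 * n + 3), j.val < n → ECross n T j a b → j ≠ i0 →
      ∀ x ∈ crossPts n T i0 a b, ∀ y ∈ crossPts n T j a b,
        dist (vtx n a) x < dist (vtx n a) y)
    (hcd : Joins n T i0 c d)
    (hi1' : Joins n T i1' a c) (hi1 : Joins n T i1 a d)
    (i : Fin (2 * n + 3)) (hia : T.src i = a ∨ T.tgt i = a) :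
    ¬ ECross n T i c b ∧ ¬ ECross n T i d b := by
  obtain ⟨e, hseg⟩ : ∃ e : Fin (n + 3),
      openSegment ℝ (vtx n (T.src i)) (vtx n (T.tgt i)) =
        openSegment ℝ (vtx n a) (vtx n e) := by
    rcases hia with h | h
    · exact ⟨T.tgt i, by rw [h]⟩
    · exact ⟨T.src i, by rw [h, openSegment_symm]⟩
  have hacI : a ≠ c := joins_ne hi1'
  have hadI : a ≠ d := joins_ne hi1
  have hcdI : c ≠ d := joins_ne hcd
  have hac : vtx n a ≠ vtx n c := vtx_ne hacI
  have had : vtx n a ≠ vtx n d := vtx_ne hadI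
  have hcdP : vtx n c ≠ vtx n d := vtx_ne hcdI
  have hii0 : i ≠ i0 := by
    rintro rfl
    rcases hcd with ⟨h1, h2⟩ | ⟨h1, h2⟩ <;> rcases hia with h | h
    · exact hacI (h.symm.trans h1)
    · exact hadI (h.symm.trans h2)
    · exact hadI (h.symm.trans h1)
    · exact hacI (h.symm.trans h2)
  have hnc : ¬ (openSegment ℝ (vtx n a) (vtx n e) ∩
      openSegment ℝ (vtx n c) (vtx n d)).Nonempty := by
    have h := T.noncross i i0 hii0
    unfold Cross at h
    rwa [hseg, joins_seg hcd] at h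
  have hM : (openSegment ℝ (vtx n a) (vtx n b) ∩
      openSegment ℝ (vtx n c) (vtx n d)).Nonempty := by
    have h := hi0M
    unfold ECross Cross at h
    rw [joins_seg hcd] at h
    rwa [Set.inter_comm] at h
  constructor
  · show ¬ Cross n (T.src i) (T.tgt i) c b
    unfold Cross
    rw [hseg]
    exact core (vtx n a) (vtx n e) (vtx n c) (vtx n d) (vtx n b)
      (norm_vtx n a) (norm_vtx n b) (norm_vtx n c) (norm_vtx n d)
      hac had hcdP hM hnc
  · show ¬ Cross n (T.src i) (T.tgt i) d b
    unfold Cross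
    rw [hseg]
    refine core (vtx n a) (vtx n e) (vtx n d) (vtx n c) (vtx n b)
      (norm_vtx n a) (norm_vtx n b) (norm_vtx n d) (norm_vtx n c)
      had hac hcdP.symm ?_ ?_
    · rwa [openSegment_symm (𝕜 := ℝ) (vtx n d) (vtx n c)]
    · rwa [openSegment_symm (𝕜 := ℝ) (vtx n d) (vtx n c)]
end

section
/- In the setup, if an edge T_i ∈ T crosses M but does not cross the segment L (respectively, does not cross the segment L'), then T_i has c as an endpoint (respectively, has d as an endpoint). (Lemma 2.3(c).) -/
open scoped BigOperators Classical

set_option maxHeartbeats 1000000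

noncomputable section
namespace L23
open Real

abbrev E2 := EuclideanSpace ℝ (Fin 2)

def Odet (x y z : EuclideanSpace ℝ (Fin 2)) : ℝ :=
  (y 0 - x 0) * (z 1 - x 1) - (y 1 - x 1) * (z 0 - x 0)

lemma vtx_apply0 (n : ℕ) (k : Fin (n+3)) : vtx n k 0 = Real.cos (2 * Real.pi * k / (n + 3)) := by
  simp [vtx]

lemma vtx_apply1 (n : ℕ) (k : Fin (n+3)) : vtx n k 1 = Real.sin (2 * Real.pi * k / (n + 3)) := by
  simp [vtx]

lemma trig1 (u v : ℝ) : sin (2*u) + sin (2*v) - sin (2*u + 2*v) = 4 * sin u * sin v * sin (u+v) := by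
  rw [sin_add (2*u) (2*v), sin_add, sin_two_mul, sin_two_mul, cos_two_mul, cos_two_mul]
  linear_combination (-4*sin u*cos u)*(sin_sq_add_cos_sq v) + (-4*sin v*cos v)*(sin_sq_add_cos_sq u)

lemma sin_pos_comb {x y : ℝ} (hx : 0 < x) (hy : 0 < y) (hxy : x + y < 2*π) :
    0 < sin x + sin y - sin (x+y) := by
  have h1 : sin x + sin y - sin (x+y) = 4 * sin (x/2) * sin (y/2) * sin (x/2 + y/2) := by
    have := trig1 (x/2) (y/2)
    rw [show 2*(x/2) = x by ring, show 2*(y/2) = y by ring] at this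
    exact this
  rw [h1]
  have s1 : 0 < sin (x/2) := sin_pos_of_pos_of_lt_pi (by linarith) (by linarith)
  have s2 : 0 < sin (y/2) := sin_pos_of_pos_of_lt_pi (by linarith) (by linarith)
  have s3 : 0 < sin (x/2 + y/2) := sin_pos_of_pos_of_lt_pi (by linarith) (by linarith)
  positivity

lemma odet_formula (α β γ : ℝ) :
    (cos β - cos α) * (sin γ - sin α) - (sin β - sin α) * (cos γ - cos α)
    = sin (β - α) + sin (γ - β) - sin ((β - α) + (γ - β)) := by
  rw [sin_sub, sin_sub, show (β - α)+(γ - β) = γ - α by ring, sin_sub]; ring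

lemma convexpos (n : ℕ) (k l m : Fin (n+3)) (hkl : k.val < l.val) (hlm : l.val < m.val) :
    0 < Odet (vtx n k) (vtx n l) (vtx n m) := by
  have hN : (0:ℝ) < (n:ℝ) + 3 := by positivity
  have hπ := Real.pi_pos
  have hO : Odet (vtx n k) (vtx n l) (vtx n m)
      = sin (2*Real.pi*(l:ℝ)/((n:ℝ)+3) - 2*Real.pi*(k:ℝ)/((n:ℝ)+3))
        + sin (2*Real.pi*(m:ℝ)/((n:ℝ)+3) - 2*Real.pi*(l:ℝ)/((n:ℝ)+3))
        - sin ((2*Real.pi*(l:ℝ)/((n:ℝ)+3) - 2*Real.pi*(k:ℝ)/((n:ℝ)+3))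
            + (2*Real.pi*(m:ℝ)/((n:ℝ)+3) - 2*Real.pi*(l:ℝ)/((n:ℝ)+3))) := by
    simp only [Odet, vtx_apply0, vtx_apply1]
    exact odet_formula _ _ _
  rw [hO]
  have hkR : (k:ℝ) < (l:ℝ) := by exact_mod_cast hkl
  have hlR : (l:ℝ) < (m:ℝ) := by exact_mod_cast hlm
  have hmR : (m:ℝ) < (n:ℝ)+3 := by exact_mod_cast m.isLt
  have hk0 : (0:ℝ) ≤ (k:ℝ) := Nat.cast_nonneg _
  apply sin_pos_comb
  · rw [sub_pos, div_lt_div_iff₀ hN hN]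
    nlinarith [mul_pos (mul_pos hπ (sub_pos.2 hkR)) hN]
  · rw [sub_pos, div_lt_div_iff₀ hN hN]
    nlinarith [mul_pos (mul_pos hπ (sub_pos.2 hlR)) hN]
  · rw [show (2*Real.pi*(l:ℝ)/((n:ℝ)+3) - 2*Real.pi*(k:ℝ)/((n:ℝ)+3))
            + (2*Real.pi*(m:ℝ)/((n:ℝ)+3) - 2*Real.pi*(l:ℝ)/((n:ℝ)+3))
        = 2*Real.pi*((m:ℝ) - (k:ℝ))/((n:ℝ)+3) by ring, div_lt_iff₀ hN]
    nlinarith [mul_pos hπ (show (0:ℝ) < (n:ℝ)+3 - ((m:ℝ)-(k:ℝ)) by linarith)]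


lemma Odet_cyc (x y z : EuclideanSpace ℝ (Fin 2)) : Odet x y z = Odet y z x := by
  simp only [Odet]; ring
lemma Odet_cyc' (x y z : EuclideanSpace ℝ (Fin 2)) : Odet x y z = Odet z x y := by
  simp only [Odet]; ring
lemma Odet_swap12 (x y z : EuclideanSpace ℝ (Fin 2)) : Odet x y z = -Odet y x z := by
  simp only [Odet]; ring
lemma Odet_swap13 (x y z : EuclideanSpace ℝ (Fin 2)) : Odet x y z = -Odet z y x := by
  simp only [Odet]; ring
lemma Odet_swap23 (x y z : EuclideanSpace ℝ (Fin 2)) : Odet x y z = -Odet x z y := by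
  simp only [Odet]; ring
lemma Odet_self12 (x z : EuclideanSpace ℝ (Fin 2)) : Odet x x z = 0 := by
  simp only [Odet]; ring
lemma Odet_self13 (x y : EuclideanSpace ℝ (Fin 2)) : Odet x y x = 0 := by
  simp only [Odet]; ring
lemma Odet_self23 (x y : EuclideanSpace ℝ (Fin 2)) : Odet x y y = 0 := by
  simp only [Odet]; ring

lemma Odet_combo (x y u v : EuclideanSpace ℝ (Fin 2)) (a b : ℝ) (hab : a + b = 1) :
    Odet x y (a • u + b • v) = a * Odet x y u + b * Odet x y v := by
  have hb : b = 1 - a := by linarith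
  subst hb
  simp only [Odet, PiLp.add_apply, PiLp.smul_apply, smul_eq_mul]
  ring

lemma odet_ne_zero (n : ℕ) (k l m : Fin (n+3)) (hkl : k ≠ l) (hkm : k ≠ m) (hlm : l ≠ m) :
    Odet (vtx n k) (vtx n l) (vtx n m) ≠ 0 := by
  have h1 : ∀ a b c : Fin (n+3), a.val < b.val → b.val < c.val →
      Odet (vtx n a) (vtx n b) (vtx n c) ≠ 0 := fun a b c h h' => (convexpos n a b c h h').ne'
  rcases lt_trichotomy k.val l.val with h1kl | h1kl | h1kl
  · rcases lt_trichotomy l.val m.val with h2 | h2 | h2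
    · exact h1 k l m h1kl h2
    · exact absurd (Fin.ext h2) hlm
    · rcases lt_trichotomy k.val m.val with h3 | h3 | h3
      · rw [Odet_swap23]; simpa using h1 k m l h3 h2
      · exact absurd (Fin.ext h3) hkm
      · rw [Odet_cyc']; exact h1 m k l h3 h1kl
  · exact absurd (Fin.ext h1kl) hkl
  · rcases lt_trichotomy k.val m.val with h2 | h2 | h2
    · rw [Odet_swap12]; simpa using h1 l k m h1kl h2
    · exact absurd (Fin.ext h2) hkm
    · rcases lt_trichotomy l.val m.val with h3 | h3 | h3
      · rw [Odet_cyc]; exact h1 l m k h3 h2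
      · exact absurd (Fin.ext h3) hlm
      · rw [Odet_swap13]; simpa using h1 m l k h3 h1kl

lemma exists_third (n : ℕ) (k l : Fin (n+3)) : ∃ m : Fin (n+3), m ≠ k ∧ m ≠ l := by
  have : (Finset.univ \ ({k, l} : Finset (Fin (n+3)))).Nonempty := by
    rw [← Finset.card_pos]
    have h2 : ({k, l} : Finset (Fin (n+3))).card ≤ 2 :=
      (Finset.card_insert_le _ _).trans (by simp)
    have h3 := Finset.le_card_sdiff ({k, l} : Finset (Fin (n+3))) Finset.univ
    simp only [Finset.card_univ, Fintype.card_fin] at h3 ⊢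
    omega
  obtain ⟨m, hm⟩ := this
  simp only [Finset.mem_sdiff, Finset.mem_univ, Finset.mem_insert, Finset.mem_singleton,
    true_and] at hm
  push_neg at hm
  exact ⟨m, hm.1, hm.2⟩

lemma vtx_ne (n : ℕ) {k l : Fin (n+3)} (h : k ≠ l) : vtx n k ≠ vtx n l := by
  obtain ⟨m, hmk, hml⟩ := exists_third n k l
  intro hv
  exact odet_ne_zero n k l m h (Ne.symm hmk) (Ne.symm hml) (by rw [hv, Odet_self12])

def nxt (n : ℕ) (k : Fin (n+3)) : Fin (n+3) := ⟨(k.val+1) % (n+3), Nat.mod_lt _ (by omega)⟩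

lemma adjpos (n : ℕ) (k m : Fin (n+3)) (h1 : m ≠ k) (h2 : m ≠ nxt n k) :
    0 < Odet (vtx n k) (vtx n (nxt n k)) (vtx n m) := by
  have hk := k.isLt
  have hm := m.isLt
  by_cases hw : k.val + 1 < n + 3
  · have hnxt : (nxt n k).val = k.val + 1 := Nat.mod_eq_of_lt hw
    have hm1 : m.val ≠ k.val := fun hc => h1 (Fin.ext hc)
    have hm2 : m.val ≠ k.val + 1 := fun hc => h2 (Fin.ext (by rw [hnxt]; exact hc))
    rcases lt_or_gt_of_ne hm1 with h | h
    · rw [Odet_cyc']; exact convexpos n m k (nxt n k) h (by omega)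
    · exact convexpos n k (nxt n k) m (by omega) (by omega)
  · have hkv : k.val = n + 2 := by omega
    have hnxt : (nxt n k).val = 0 := by simp [nxt, hkv]
    have hm1 : m.val ≠ n + 2 := fun hc => h1 (Fin.ext (by rw [hkv]; exact hc))
    have hm2 : m.val ≠ 0 := fun hc => h2 (Fin.ext (by rw [hnxt]; exact hc))
    rw [Odet_cyc]
    exact convexpos n (nxt n k) m k (by omega) (by omega)



lemma Odet_sum (a b c x : E2) : Odet b c x + Odet c a x + Odet a b x = Odet a b c := by
  simp only [Odet]; ring
lemma Odet_recon0 (a b c x : E2) :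
    Odet b c x * a 0 + Odet c a x * b 0 + Odet a b x * c 0 = Odet a b c * x 0 := by
  simp only [Odet]; ring
lemma Odet_recon1 (a b c x : E2) :
    Odet b c x * a 1 + Odet c a x * b 1 + Odet a b x * c 1 = Odet a b c * x 1 := by
  simp only [Odet]; ring
lemma Odet_recon (a b c x : E2) (j : Fin 2) :
    Odet b c x * a j + Odet c a x * b j + Odet a b x * c j = Odet a b c * x j := by
  obtain ⟨jv, hj⟩ := j
  interval_cases jv
  · exact Odet_recon0 a b c x
  · exact Odet_recon1 a b c x

lemma mem_oseg (X Y q : E2) (a b : ℝ) (ha : 0 < a) (hb : 0 < b) (hab : a + b = 1)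
    (h : ∀ j, a * X j + b * Y j = q j) : q ∈ openSegment ℝ X Y :=
  ⟨a, b, ha, hb, hab, PiLp.ext fun j => by
    simpa [PiLp.add_apply, PiLp.smul_apply] using h j⟩

lemma mem_seg (X Y q : E2) (a b : ℝ) (ha : 0 ≤ a) (hb : 0 ≤ b) (hab : a + b = 1)
    (h : ∀ j, a * X j + b * Y j = q j) : q ∈ segment ℝ X Y :=
  ⟨a, b, ha, hb, hab, PiLp.ext fun j => by
    simpa [PiLp.add_apply, PiLp.smul_apply] using h j⟩

lemma oseg_coords {X Y q : E2} (h : q ∈ openSegment ℝ X Y) :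
    ∃ a b : ℝ, 0 < a ∧ 0 < b ∧ a + b = 1 ∧ ∀ j, a * X j + b * Y j = q j := by
  obtain ⟨a, b, ha, hb, hab, hEq⟩ := h
  exact ⟨a, b, ha, hb, hab, fun j => by
    rw [← hEq]; simp [PiLp.add_apply, PiLp.smul_apply]⟩


lemma core (C D U V B p0 p : E2) (ε : ℝ)
    (hp0CD : p0 ∈ openSegment ℝ C D)
    (hpUV : p ∈ openSegment ℝ U V)
    (hpPB : p ∈ openSegment ℝ p0 B)
    (hΔ : 0 < ε * Odet p0 B C)
    (hγU : 0 < ε * Odet p0 B U)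
    (h1 : U ∈ openSegment ℝ C D → U = C)
    (h2 : C ∈ openSegment ℝ U V → U = C)
    (h3 : ∀ x, x ∈ openSegment ℝ U V → x ∈ openSegment ℝ C D → False)
    (h4 : ∀ x, x ∈ openSegment ℝ U V → x ∈ openSegment ℝ B C → False)
    (h5 : ∀ Q, Q ∈ segment ℝ C D → U ∈ openSegment ℝ B Q → U = C) :
    U = C := by
  obtain ⟨ca, cb, hca, hcb, hcab, hcj⟩ := oseg_coords hp0CD
  obtain ⟨pa, pb, hpa, hpb, hpab, hpj⟩ := oseg_coords hpUV
  obtain ⟨ma, mb, hma, hmb, hmab, hmj⟩ := oseg_coords hpPB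
  have hcb' : cb = 1 - ca := by linarith
  have hpb' : pb = 1 - pa := by linarith
  have hmb' : mb = 1 - ma := by linarith
  subst hcb' hpb' hmb'
  set Δ : ℝ := ε * Odet p0 B C with hΔdef
  set A1 : ℝ := ε * Odet B C U with hA1def
  set B1 : ℝ := ε * Odet C p0 U with hB1def
  set G1 : ℝ := ε * Odet p0 B U with hG1def
  have hΔ0 : Δ ≠ 0 := ne_of_gt hΔ
  have hsum : A1 + B1 + G1 = Δ := by
    rw [hA1def, hB1def, hG1def, hΔdef]; linear_combination ε * Odet_sum p0 B C U
  have hrecU : ∀ j, A1 * p0 j + B1 * B j + G1 * C j = Δ * U j := fun j => by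
    rw [hA1def, hB1def, hG1def, hΔdef]; linear_combination ε * Odet_recon p0 B C U j
  have hαp : ε * Odet B C p = ma * Δ := by
    rw [hΔdef]
    have h' : Odet B C p = ma * Odet B C p0 := by
      simp only [Odet]; rw [← hmj 0, ← hmj 1]; ring
    rw [h']
    have h'' : Odet B C p0 = Odet p0 B C := by simp only [Odet]; ring
    rw [h'']; ring
  have hβp : ε * Odet C p0 p = (1 - ma) * Δ := by
    rw [hΔdef]
    have h' : Odet C p0 p = (1-ma) * Odet C p0 B := by
      simp only [Odet]; rw [← hmj 0, ← hmj 1]; ring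
    rw [h']
    have h'' : Odet C p0 B = Odet p0 B C := by simp only [Odet]; ring
    rw [h'']; ring
  have hγp : ε * Odet p0 B p = 0 := by
    have h' : Odet p0 B p = 0 := by
      simp only [Odet]; rw [← hmj 0, ← hmj 1]; ring
    rw [h']; ring
  have hαppos : 0 < ε * Odet B C p := by rw [hαp]; exact mul_pos hma hΔ
  have hβppos : 0 < ε * Odet C p0 p := by rw [hβp]; exact mul_pos (by linarith) hΔ
  -- helpers
  have eqC : ∀ q : E2, (0:ℝ) = ε * Odet B C q → (0:ℝ) = ε * Odet C p0 q → q = C := by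
    intro q hA hB
    have hs : ε * Odet B C q + ε * Odet C p0 q + ε * Odet p0 B q = Δ := by
      rw [hΔdef]; linear_combination ε * Odet_sum p0 B C q
    have hrec : ∀ j, (ε * Odet B C q) * p0 j + (ε * Odet C p0 q) * B j
        + (ε * Odet p0 B q) * C j = Δ * q j := fun j => by
      rw [hΔdef]; linear_combination ε * Odet_recon p0 B C q j
    rw [← hA, ← hB] at hs
    have hG : ε * Odet p0 B q = Δ := by linarith
    ext j
    have h := hrec j
    rw [← hA, ← hB, hG] at h
    have := mul_left_cancel₀ hΔ0 (show Δ * C j = Δ * q j by linarith)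
    exact this.symm
  have memCD : ∀ q : E2, 0 < ε * Odet B C q → (0:ℝ) = ε * Odet C p0 q →
      0 < ε * Odet p0 B q → q ∈ openSegment ℝ C D := by
    intro q hA hB hG
    have hs : ε * Odet B C q + ε * Odet C p0 q + ε * Odet p0 B q = Δ := by
      rw [hΔdef]; linear_combination ε * Odet_sum p0 B C q
    have hrec : ∀ j, (ε * Odet B C q) * p0 j + (ε * Odet C p0 q) * B j
        + (ε * Odet p0 B q) * C j = Δ * q j := fun j => by
      rw [hΔdef]; linear_combination ε * Odet_recon p0 B C q j
    rw [← hB] at hs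
    refine mem_oseg C D q ((ε * Odet B C q * ca + ε * Odet p0 B q) / Δ)
      ((ε * Odet B C q * (1 - ca)) / Δ) ?_ ?_ ?_ ?_
    · exact div_pos (by nlinarith [mul_pos hA hca]) hΔ
    · exact div_pos (mul_pos hA (by linarith)) hΔ
    · field_simp; linarith
    · intro j
      have h := hrec j
      rw [← hB] at h
      have hc := hcj j
      field_simp
      linear_combination h + (ε * Odet B C q) * hc
  have memBC : ∀ q : E2, (0:ℝ) = ε * Odet B C q → 0 < ε * Odet C p0 q →
      0 < ε * Odet p0 B q → q ∈ openSegment ℝ B C := by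
    intro q hA hB hG
    have hs : ε * Odet B C q + ε * Odet C p0 q + ε * Odet p0 B q = Δ := by
      rw [hΔdef]; linear_combination ε * Odet_sum p0 B C q
    have hrec : ∀ j, (ε * Odet B C q) * p0 j + (ε * Odet C p0 q) * B j
        + (ε * Odet p0 B q) * C j = Δ * q j := fun j => by
      rw [hΔdef]; linear_combination ε * Odet_recon p0 B C q j
    rw [← hA] at hs
    refine mem_oseg B C q ((ε * Odet C p0 q) / Δ) ((ε * Odet p0 B q) / Δ)
      (div_pos hB hΔ) (div_pos hG hΔ) ?_ ?_
    · field_simp; linarith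
    · intro j
      have h := hrec j
      rw [← hA] at h
      field_simp
      linear_combination h
  -- the moving point
  have qexists : ∀ t : ℝ, 0 < t → t < 1 → ∃ q : E2, q ∈ openSegment ℝ U V ∧
      (ε * Odet B C q = (1-t) * (ε * Odet B C p) + t * A1)
      ∧ (ε * Odet C p0 q = (1-t) * (ε * Odet C p0 p) + t * B1)
      ∧ (ε * Odet p0 B q = (1-t) * (ε * Odet p0 B p) + t * G1) := by
    intro t ht0 ht1
    refine ⟨(1-t) • p + t • U, ?_, ?_, ?_, ?_⟩
    · refine mem_oseg U V _ ((1-t) * pa + t) ((1-t) * (1-pa)) (by nlinarith) (by nlinarith)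
        (by ring) ?_
      intro j
      simp only [PiLp.add_apply, PiLp.smul_apply, smul_eq_mul]
      linear_combination (1-t) * hpj j
    all_goals
      simp only [hA1def, hB1def, hG1def, Odet, PiLp.add_apply, PiLp.smul_apply, smul_eq_mul]
      ring
  -- main case analysis
  rcases le_or_gt 0 A1 with hA1s | hA1s <;> rcases le_or_gt 0 B1 with hB1s | hB1s
  · -- A1 ≥ 0, B1 ≥ 0
    rcases eq_or_lt_of_le hB1s with hB10 | hB10
    · rcases eq_or_lt_of_le hA1s with hA10 | hA10
      · exact eqC U hA10 hB10
      · exact h1 (memCD U hA10 hB10 hγU)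
    · -- B1 > 0 : extreme point via h5
      have hAG : 0 < A1 + G1 := by linarith
      set q1 : ℝ := (A1 * ca + G1)/(A1+G1) with hq1
      set q2 : ℝ := (A1 * (1-ca))/(A1+G1) with hq2
      set Q : E2 := q1 • C + q2 • D with hQdef
      have hQj : ∀ j, q1 * C j + q2 * D j = Q j := fun j => by
        rw [hQdef]; simp [PiLp.add_apply, PiLp.smul_apply]
      refine h5 Q (mem_seg C D Q q1 q2 ?_ ?_ ?_ hQj) ?_
      · rw [hq1]; exact div_nonneg (by nlinarith) hAG.le
      · rw [hq2]; exact div_nonneg (by nlinarith) hAG.le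
      · rw [hq1, hq2]; field_simp; ring
      · refine mem_oseg B Q U (B1/Δ) ((A1+G1)/Δ) (div_pos hB10 hΔ) (div_pos hAG hΔ) ?_ ?_
        · field_simp; linarith
        · intro j
          rw [← hQj j, hq1, hq2]
          have h := hrecU j
          have hc := hcj j
          field_simp
          linear_combination h + A1 * hc
  all_goals
    · -- at least one of A1, B1 negative
      rcases le_or_gt 0 ((ε * Odet C p0 p) * A1 - (ε * Odet B C p) * B1) with hcmp | hcmp
      · -- tβ branch : exit through line C p0
        have hB1n : B1 < 0 := by nlinarith
        set t : ℝ := (ε * Odet C p0 p) / (ε * Odet C p0 p - B1) with htdef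
        have hden : 0 < ε * Odet C p0 p - B1 := by linarith
        have ht0 : 0 < t := div_pos hβppos hden
        have ht1 : t < 1 := (div_lt_one hden).2 (by linarith)
        obtain ⟨q, hqUV, hqA, hqB, hqG⟩ := qexists t ht0 ht1
        have hqB0 : ε * Odet C p0 q = 0 := by
          rw [hqB]
          have heq : (1-t) * (ε * Odet C p0 p) + t * B1
              = ((ε * Odet C p0 p) * B1 - (ε * Odet C p0 p) * B1) / (ε * Odet C p0 p - B1) := by
            rw [htdef]; field_simp; ring
          rw [heq]; simp
        have hqG0 : 0 < ε * Odet p0 B q := by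
          rw [hqG, hγp]; nlinarith
        have hqA0 : 0 ≤ ε * Odet B C q := by
          rw [hqA]
          have heq : (1-t) * (ε * Odet B C p) + t * A1
              = ((ε * Odet C p0 p) * A1 - (ε * Odet B C p) * B1) / (ε * Odet C p0 p - B1) := by
            rw [htdef]; field_simp; ring
          rw [heq]; exact div_nonneg hcmp hden.le
        rcases eq_or_lt_of_le hqA0 with hqA1 | hqA1
        · have : q = C := eqC q hqA1 hqB0.symm
          exact h2 (this ▸ hqUV)
        · exact absurd (memCD q hqA1 hqB0.symm hqG0) (fun hm => h3 q hqUV hm)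
      · -- tα branch : exit through line B C
        have hA1n : A1 < 0 := by nlinarith
        set t : ℝ := (ε * Odet B C p) / (ε * Odet B C p - A1) with htdef
        have hden : 0 < ε * Odet B C p - A1 := by linarith
        have ht0 : 0 < t := div_pos hαppos hden
        have ht1 : t < 1 := (div_lt_one hden).2 (by linarith)
        obtain ⟨q, hqUV, hqA, hqB, hqG⟩ := qexists t ht0 ht1
        have hqA0 : ε * Odet B C q = 0 := by
          rw [hqA]
          have heq : (1-t) * (ε * Odet B C p) + t * A1
              = ((ε * Odet B C p) * A1 - (ε * Odet B C p) * A1) / (ε * Odet B C p - A1) := by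
            rw [htdef]; field_simp; ring
          rw [heq]; simp
        have hqG0 : 0 < ε * Odet p0 B q := by
          rw [hqG, hγp]; nlinarith
        have hqB0 : 0 < ε * Odet C p0 q := by
          rw [hqB]
          have heq : (1-t) * (ε * Odet C p0 p) + t * B1
              = ((ε * Odet B C p) * B1 - (ε * Odet C p0 p) * A1) / (ε * Odet B C p - A1) := by
            rw [htdef]; field_simp; ring
          rw [heq]; exact div_pos (by nlinarith) hden
        exact absurd (memBC q hqA0.symm hqB0 hqG0) (fun hm => h4 q hqUV hm)


lemma seg_coords {X Y q : E2} (h : q ∈ segment ℝ X Y) :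
    ∃ a b : ℝ, 0 ≤ a ∧ 0 ≤ b ∧ a + b = 1 ∧ ∀ j, a * X j + b * Y j = q j := by
  obtain ⟨a, b, ha, hb, hab, hEq⟩ := h
  exact ⟨a, b, ha, hb, hab, fun j => by
    rw [← hEq]; simp [PiLp.add_apply, PiLp.smul_apply]⟩

lemma Odet_affine {X Y u v q : E2} {r1 r2 : ℝ} (hr : r1 + r2 = 1)
    (hj : ∀ j, r1 * u j + r2 * v j = q j) :
    Odet X Y q = r1 * Odet X Y u + r2 * Odet X Y v := by
  have h2 : r2 = 1 - r1 := by linarith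
  subst h2
  simp only [Odet]; rw [← hj 0, ← hj 1]; ring

lemma Odet_zero_of_mem {X Y q : E2} (h : q ∈ openSegment ℝ X Y) : Odet X Y q = 0 := by
  obtain ⟨r1, r2, h1, h2, hr, hj⟩ := oseg_coords h
  rw [Odet_affine hr hj]
  have e1 : Odet X Y X = 0 := by simp only [Odet]; ring
  have e2 : Odet X Y Y = 0 := by simp only [Odet]; ring
  rw [e1, e2]; ring

lemma opp_sides {A B X Y p : E2}
    (hp1 : p ∈ openSegment ℝ X Y) (hp2 : p ∈ openSegment ℝ A B)
    (hX : Odet A B X ≠ 0) (hY : Odet A B Y ≠ 0) :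
    Odet A B X * Odet A B Y < 0 := by
  obtain ⟨r1, r2, h1, h2, hr, hj⟩ := oseg_coords hp1
  have hz : Odet A B p = 0 := Odet_zero_of_mem hp2
  rw [Odet_affine hr hj] at hz
  rcases lt_or_gt_of_ne hX with h | h
  · rcases lt_or_gt_of_ne hY with h' | h'
    · nlinarith
    · nlinarith
  · rcases lt_or_gt_of_ne hY with h' | h'
    · nlinarith
    · nlinarith

lemma between_pt {A B p0 p : E2} (hAB : A ≠ B)
    (h0 : p0 ∈ openSegment ℝ A B) (h1 : p ∈ openSegment ℝ A B)
    (hd : dist A p0 < dist A p) : p ∈ openSegment ℝ p0 B := by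
  obtain ⟨sa, sb, hsa, hsb, hsab, hsEq⟩ := h0
  obtain ⟨ta, tb, hta, htb, htab, htEq⟩ := h1
  have hv0 : p0 - A = sb • (B - A) := by
    rw [← hsEq]
    have : sa = 1 - sb := by linarith
    rw [this, sub_smul, one_smul, smul_sub]
    abel
  have hv1 : p - A = tb • (B - A) := by
    rw [← htEq]
    have : ta = 1 - tb := by linarith
    rw [this, sub_smul, one_smul, smul_sub]
    abel
  have hBA : ‖B - A‖ > 0 := by
    have : B - A ≠ 0 := sub_ne_zero_of_ne (Ne.symm hAB)
    exact norm_pos_iff.mpr this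
  have hd0 : dist A p0 = sb * ‖B - A‖ := by
    rw [dist_eq_norm, ← norm_neg, neg_sub, hv0, norm_smul, Real.norm_eq_abs,
      abs_of_pos hsb]
  have hd1 : dist A p = tb * ‖B - A‖ := by
    rw [dist_eq_norm, ← norm_neg, neg_sub, hv1, norm_smul, Real.norm_eq_abs,
      abs_of_pos htb]
  rw [hd0, hd1] at hd
  have hst : sb < tb := by
    by_contra hc; push_neg at hc
    nlinarith
  have hcoords0 : ∀ j, sa * A j + sb * B j = p0 j := fun j => by
    rw [← hsEq]; simp [PiLp.add_apply, PiLp.smul_apply]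
  have hcoords1 : ∀ j, ta * A j + tb * B j = p j := fun j => by
    rw [← htEq]; simp [PiLp.add_apply, PiLp.smul_apply]
  refine mem_oseg p0 B p (ta/sa) ((tb - sb)/sa) (div_pos hta hsa)
    (div_pos (by linarith) hsa) ?_ ?_
  · field_simp; linarith
  · intro j
    have h0j := hcoords0 j
    have h1j := hcoords1 j
    field_simp
    linear_combination (-ta) * h0j + sa * h1j + (B j * sb) * htab - (B j * tb) * hsab


lemma adj_irrefl (n : ℕ) (u : Fin (n+3)) : (u.val + 1) % (n+3) ≠ u.val := by
  intro h
  rcases Nat.lt_or_ge (u.val+1) (n+3) with h1 | h1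
  · rw [Nat.mod_eq_of_lt h1] at h; omega
  · have h2 : u.val + 1 = n + 3 := by have := u.isLt; omega
    rw [h2, Nat.mod_self] at h; omega

lemma edge_ne (n : ℕ) (T : Triangulation n) (i : Fin (2*n+3)) : T.src i ≠ T.tgt i := by
  rcases Nat.lt_or_ge i.val n with h | h
  · exact (T.diag i h).1
  · intro hc
    have h2 := T.bdry i h
    rw [hc] at h2
    rcases h2 with h2 | h2 <;> exact adj_irrefl n _ h2

lemma not_endpoint (n : ℕ) (T : Triangulation n) (i : Fin (2*n+3)) (a b u v : Fin (n+3))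
    (hab : a ≠ b) (hM : ¬ ∃ j : Fin (2*n+3), Joins n T j a b)
    (hiM : ECross n T i a b)
    (hpair : (T.src i = u ∧ T.tgt i = v) ∨ (T.src i = v ∧ T.tgt i = u)) :
    u ≠ a ∧ u ≠ b := by
  have huv : u ≠ v := by
    rcases hpair with ⟨h1, h2⟩ | ⟨h1, h2⟩
    · rw [← h1, ← h2]; exact edge_ne n T i
    · rw [← h1, ← h2]; exact (edge_ne n T i).symm
  obtain ⟨p, hp1, hp2⟩ := hiM
  have hpuv : p ∈ openSegment ℝ (vtx n u) (vtx n v) := by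
    rcases hpair with ⟨h1, h2⟩ | ⟨h1, h2⟩
    · rw [← h1, ← h2]; exact hp1
    · rw [openSegment_symm, ← h1, ← h2]; exact hp1
  obtain ⟨q1, q2, hq1, hq2, hq, hqj⟩ := oseg_coords hpuv
  have hz : Odet (vtx n a) (vtx n b) p = 0 := Odet_zero_of_mem hp2
  rw [Odet_affine hq hqj] at hz
  constructor
  · intro hua
    rw [hua] at hz huv
    have ha0 : Odet (vtx n a) (vtx n b) (vtx n a) = 0 := by simp only [Odet]; ring
    rw [ha0] at hz
    have hq2z : q2 * Odet (vtx n a) (vtx n b) (vtx n v) = 0 := by linarith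
    have hfv : Odet (vtx n a) (vtx n b) (vtx n v) = 0 := by
      rcases mul_eq_zero.mp hq2z with h' | h'
      · exact absurd h' hq2.ne'
      · exact h'
    have hvb : v = b := by
      by_contra hvb
      exact odet_ne_zero n a b v hab huv (Ne.symm hvb) hfv
    refine hM ⟨i, ?_⟩
    rcases hpair with ⟨h1, h2⟩ | ⟨h1, h2⟩
    · exact Or.inl ⟨h1.trans hua, h2.trans hvb⟩
    · exact Or.inr ⟨h1.trans hvb, h2.trans hua⟩
  · intro hub
    rw [hub] at hz huv
    have hb0 : Odet (vtx n a) (vtx n b) (vtx n b) = 0 := by simp only [Odet]; ring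
    rw [hb0] at hz
    have hq2z : q2 * Odet (vtx n a) (vtx n b) (vtx n v) = 0 := by linarith
    have hfv : Odet (vtx n a) (vtx n b) (vtx n v) = 0 := by
      rcases mul_eq_zero.mp hq2z with h' | h'
      · exact absurd h' hq2.ne'
      · exact h'
    have hva : v = a := by
      by_contra hva
      exact odet_ne_zero n a b v hab (Ne.symm hva) huv hfv
    refine hM ⟨i, ?_⟩
    rcases hpair with ⟨h1, h2⟩ | ⟨h1, h2⟩
    · exact Or.inr ⟨h1.trans hub, h2.trans hva⟩
    · exact Or.inl ⟨h1.trans hva, h2.trans hub⟩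

lemma adj_no_cross (n : ℕ) (k a b : Fin (n+3)) (ha1 : a ≠ k) (ha2 : a ≠ nxt n k)
    (hb1 : b ≠ k) (hb2 : b ≠ nxt n k) :
    ¬ (openSegment ℝ (vtx n k) (vtx n (nxt n k)) ∩
        openSegment ℝ (vtx n a) (vtx n b)).Nonempty := by
  rintro ⟨p, hp1, hp2⟩
  have hz : Odet (vtx n k) (vtx n (nxt n k)) p = 0 := Odet_zero_of_mem hp1
  obtain ⟨q1, q2, hq1, hq2, hq, hqj⟩ := oseg_coords hp2
  rw [Odet_affine hq hqj] at hz
  have hA := adjpos n k a ha1 ha2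
  have hB := adjpos n k b hb1 hb2
  nlinarith


lemma key_pt (n : ℕ) (T : Triangulation n) (a b c d u v : Fin (n + 3)) (i0 i : Fin (2*n+3))
    (ε : ℝ)
    (hpair : (T.src i = u ∧ T.tgt i = v) ∨ (T.src i = v ∧ T.tgt i = u))
    (hcdpair : (T.src i0 = c ∧ T.tgt i0 = d) ∨ (T.src i0 = d ∧ T.tgt i0 = c))
    (hcross0 : ¬ Cross n (T.src i) (T.tgt i) (T.src i0) (T.tgt i0))
    (hL : ¬ Cross n (T.src i) (T.tgt i) c b)
    (p0 p : E2)
    (hp0cd : p0 ∈ openSegment ℝ (vtx n c) (vtx n d))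
    (hp0ab : p0 ∈ openSegment ℝ (vtx n a) (vtx n b))
    (hpuv : p ∈ openSegment ℝ (vtx n u) (vtx n v))
    (hppb : p ∈ openSegment ℝ p0 (vtx n b))
    (hcd : c ≠ d) (huv : u ≠ v)
    (hcb : c ≠ b) (hdb : d ≠ b) (hub : u ≠ b)
    (hεc : 0 < ε * Odet (vtx n a) (vtx n b) (vtx n c))
    (hεu : 0 < ε * Odet (vtx n a) (vtx n b) (vtx n u))
    (hεd : ε * Odet (vtx n a) (vtx n b) (vtx n d) < 0)
    (hεv : ε * Odet (vtx n a) (vtx n b) (vtx n v) < 0) :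
    u = c := by
  by_cases huc : u = c
  · exact huc
  exfalso
  have hdu : d ≠ u := by intro h; rw [h] at hεd; linarith
  -- base change for the functional along line ab
  obtain ⟨sa, sb, hsa, hsb, hsab, hsj⟩ := oseg_coords hp0ab
  have hsb2 : sb = 1 - sa := by linarith
  rw [hsb2] at hsj
  have hbase : ∀ X : E2, Odet p0 (vtx n b) X = sa * Odet (vtx n a) (vtx n b) X := by
    intro X
    simp only [Odet]
    rw [← hsj 0, ← hsj 1]
    ring
  have hΔ : 0 < ε * Odet p0 (vtx n b) (vtx n c) := by
    rw [hbase]; nlinarith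
  have hγU : 0 < ε * Odet p0 (vtx n b) (vtx n u) := by
    rw [hbase]; nlinarith
  have h1 : vtx n u ∈ openSegment ℝ (vtx n c) (vtx n d) → vtx n u = vtx n c := by
    intro hm
    by_cases hud : u = d
    · rw [hud] at hεu; linarith
    · exact absurd (Odet_zero_of_mem hm)
        (odet_ne_zero n c d u hcd (fun h' => huc h'.symm) (Ne.symm hud))
  have h2 : vtx n c ∈ openSegment ℝ (vtx n u) (vtx n v) → vtx n u = vtx n c := by
    intro hm
    by_cases hcv : c = v
    · rw [hcv] at hεc; linarith
    · exact absurd (Odet_zero_of_mem hm)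
        (odet_ne_zero n u v c huv huc (Ne.symm hcv))
  have h3 : ∀ x, x ∈ openSegment ℝ (vtx n u) (vtx n v) →
      x ∈ openSegment ℝ (vtx n c) (vtx n d) → False := by
    intro x hx1 hx2
    refine hcross0 ⟨x, ?_, ?_⟩
    · rcases hpair with ⟨h1', h2'⟩ | ⟨h1', h2'⟩
      · rw [h1', h2']; exact hx1
      · rw [h1', h2', openSegment_symm]; exact hx1
    · rcases hcdpair with ⟨h1', h2'⟩ | ⟨h1', h2'⟩
      · rw [h1', h2']; exact hx2
      · rw [h1', h2', openSegment_symm]; exact hx2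
  have h4 : ∀ x, x ∈ openSegment ℝ (vtx n u) (vtx n v) →
      x ∈ openSegment ℝ (vtx n b) (vtx n c) → False := by
    intro x hx1 hx2
    refine hL ⟨x, ?_, ?_⟩
    · rcases hpair with ⟨h1', h2'⟩ | ⟨h1', h2'⟩
      · rw [h1', h2']; exact hx1
      · rw [h1', h2', openSegment_symm]; exact hx1
    · rw [openSegment_symm]; exact hx2
  have h5 : ∀ Q, Q ∈ segment ℝ (vtx n c) (vtx n d) →
      vtx n u ∈ openSegment ℝ (vtx n b) Q → vtx n u = vtx n c := by
    intro Q hQ hUQ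
    exfalso
    obtain ⟨r1, r2, hr1, hr2, hr, hrj⟩ := seg_coords hQ
    obtain ⟨w1, w2, hw1, hw2, hw, hwj⟩ := oseg_coords hUQ
    have hψu : Odet (vtx n u) (vtx n (nxt n u)) (vtx n u) = 0 := by
      simp only [Odet]; ring
    have hch : ∀ m : Fin (n+3), m ≠ u →
        0 ≤ Odet (vtx n u) (vtx n (nxt n u)) (vtx n m) ∧
        (Odet (vtx n u) (vtx n (nxt n u)) (vtx n m) = 0 → m = nxt n u) := by
      intro m hm
      by_cases hmn : m = nxt n u
      · refine ⟨le_of_eq ?_, fun _ => hmn⟩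
        rw [hmn]; simp only [Odet]; ring
      · have h' := adjpos n u m hm hmn
        exact ⟨h'.le, fun h0 => absurd h0 h'.ne'⟩
    have hψQ : Odet (vtx n u) (vtx n (nxt n u)) Q
        = r1 * Odet (vtx n u) (vtx n (nxt n u)) (vtx n c)
          + r2 * Odet (vtx n u) (vtx n (nxt n u)) (vtx n d) := Odet_affine hr hrj
    have hψU : Odet (vtx n u) (vtx n (nxt n u)) (vtx n u)
        = w1 * Odet (vtx n u) (vtx n (nxt n u)) (vtx n b)
          + w2 * Odet (vtx n u) (vtx n (nxt n u)) Q := Odet_affine hw hwj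
    have hcC := hch c (fun h' => huc h'.symm)
    have hcD := hch d hdu
    have hcB := hch b (Ne.symm hub)
    have hψQ0 : 0 ≤ Odet (vtx n u) (vtx n (nxt n u)) Q := by
      rw [hψQ]; nlinarith [hcC.1, hcD.1]
    rw [hψu] at hψU
    have hb0 : Odet (vtx n u) (vtx n (nxt n u)) (vtx n b) = 0 := by nlinarith [hcB.1]
    have hq0 : Odet (vtx n u) (vtx n (nxt n u)) Q = 0 := by nlinarith [hcB.1]
    have hbn : b = nxt n u := hcB.2 hb0
    have hψc : 0 < Odet (vtx n u) (vtx n (nxt n u)) (vtx n c) := by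
      rcases eq_or_lt_of_le hcC.1 with h0 | h0
      · exact absurd (hcC.2 h0.symm) (fun hc' => hcb (hc'.trans hbn.symm))
      · exact h0
    rw [hψQ] at hq0
    have hr10 : r1 = 0 := by nlinarith [hcD.1]
    have hr21 : r2 = 1 := by linarith
    rw [hr10, hr21] at hq0
    have hd0 : Odet (vtx n u) (vtx n (nxt n u)) (vtx n d) = 0 := by linarith
    exact hdb ((hcD.2 hd0).trans hbn.symm)
  exact vtx_ne n huc (core (vtx n c) (vtx n d) (vtx n u) (vtx n v) (vtx n b) p0 p ε
    hp0cd hpuv hppb hΔ hγU h1 h2 h3 h4 h5)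


lemma key (n : ℕ) (T : Triangulation n) (a b c d : Fin (n + 3)) (i0 i : Fin (2 * n + 3))
    (hab : a ≠ b)
    (hM : ¬ ∃ j : Fin (2 * n + 3), Joins n T j a b)
    (hi0d : i0.val < n) (hi0M : ECross n T i0 a b)
    (hclosest : ∀ j : Fin (2 * n + 3), j.val < n → ECross n T j a b → j ≠ i0 →
      ∀ x ∈ crossPts n T i0 a b, ∀ y ∈ crossPts n T j a b,
        dist (vtx n a) x < dist (vtx n a) y)
    (hcd : Joins n T i0 c d)
    (hiM : ECross n T i a b) (hL : ¬ ECross n T i c b) :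
    T.src i = c ∨ T.tgt i = c := by
  by_cases hii0 : i = i0
  · subst hii0
    rcases hcd with ⟨h1, h2⟩ | ⟨h1, h2⟩
    · exact Or.inl h1
    · exact Or.inr h2
  have hcdpair : (T.src i0 = c ∧ T.tgt i0 = d) ∨ (T.src i0 = d ∧ T.tgt i0 = c) := hcd
  have hne_s := not_endpoint n T i a b (T.src i) (T.tgt i) hab hM hiM (Or.inl ⟨rfl, rfl⟩)
  have hne_t := not_endpoint n T i a b (T.tgt i) (T.src i) hab hM hiM (Or.inr ⟨rfl, rfl⟩)
  have hne_c := not_endpoint n T i0 a b c d hab hM hi0M hcdpair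
  have hne_d := not_endpoint n T i0 a b d c hab hM hi0M (by tauto)
  have hidiag : i.val < n := by
    by_contra hge
    push_neg at hge
    have hadj := T.bdry i hge
    obtain ⟨p, hp1, hp2⟩ := hiM
    rcases hadj with hA | hA
    · have htg : T.tgt i = nxt n (T.src i) := Fin.ext (by simp [nxt, hA])
      refine adj_no_cross n (T.src i) a b (Ne.symm hne_s.1) ?_ (Ne.symm hne_s.2) ?_
        ⟨p, ?_, hp2⟩
      · rw [← htg]; exact Ne.symm hne_t.1
      · rw [← htg]; exact Ne.symm hne_t.2
      · rw [← htg]; exact hp1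
    · have hsr : T.src i = nxt n (T.tgt i) := Fin.ext (by simp [nxt, hA])
      refine adj_no_cross n (T.tgt i) a b (Ne.symm hne_t.1) ?_ (Ne.symm hne_t.2) ?_
        ⟨p, ?_, hp2⟩
      · rw [← hsr]; exact Ne.symm hne_s.1
      · rw [← hsr]; exact Ne.symm hne_s.2
      · rw [← hsr, openSegment_symm]; exact hp1
  obtain ⟨p0, hp01, hp02⟩ := hi0M
  have hiM' := hiM
  obtain ⟨p, hp1, hp2⟩ := hiM
  have hdist := hclosest i hidiag hiM' hii0 p0 ⟨hp01, hp02⟩ p ⟨hp1, hp2⟩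
  have hppb : p ∈ openSegment ℝ p0 (vtx n b) :=
    between_pt (vtx_ne n hab) hp02 hp2 hdist
  have hp0cd : p0 ∈ openSegment ℝ (vtx n c) (vtx n d) := by
    rcases hcdpair with ⟨h1, h2⟩ | ⟨h1, h2⟩
    · rw [← h1, ← h2]; exact hp01
    · rw [openSegment_symm, ← h1, ← h2]; exact hp01
  have hcdne : c ≠ d := by
    rcases hcdpair with ⟨h1, h2⟩ | ⟨h1, h2⟩
    · rw [← h1, ← h2]; exact edge_ne n T i0
    · rw [← h1, ← h2]; exact (edge_ne n T i0).symm
  have hstne : T.src i ≠ T.tgt i := edge_ne n T i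
  have fC0 : Odet (vtx n a) (vtx n b) (vtx n c) ≠ 0 :=
    odet_ne_zero n a b c hab (Ne.symm hne_c.1) (Ne.symm hne_c.2)
  have fD0 : Odet (vtx n a) (vtx n b) (vtx n d) ≠ 0 :=
    odet_ne_zero n a b d hab (Ne.symm hne_d.1) (Ne.symm hne_d.2)
  have fS0 : Odet (vtx n a) (vtx n b) (vtx n (T.src i)) ≠ 0 :=
    odet_ne_zero n a b (T.src i) hab (Ne.symm hne_s.1) (Ne.symm hne_s.2)
  have fT0 : Odet (vtx n a) (vtx n b) (vtx n (T.tgt i)) ≠ 0 :=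
    odet_ne_zero n a b (T.tgt i) hab (Ne.symm hne_t.1) (Ne.symm hne_t.2)
  have hfCD := opp_sides hp0cd hp02 fC0 fD0
  have hfST := opp_sides hp1 hp2 fS0 fT0
  have hnc := T.noncross i i0 hii0
  have hpts : p ∈ openSegment ℝ (vtx n (T.tgt i)) (vtx n (T.src i)) := by
    rw [openSegment_symm]; exact hp1
  rcases lt_or_gt_of_ne fC0 with hfc | hfc
  · rcases lt_or_gt_of_ne fS0 with hfs | hfs
    · left
      exact key_pt n T a b c d (T.src i) (T.tgt i) i0 i (-1) (Or.inl ⟨rfl, rfl⟩) hcdpair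
        hnc hL p0 p hp0cd hp02 hp1 hppb hcdne hstne hne_c.2 hne_d.2 hne_s.2
        (by linarith) (by linarith) (by nlinarith) (by nlinarith)
    · right
      exact key_pt n T a b c d (T.tgt i) (T.src i) i0 i (-1) (Or.inr ⟨rfl, rfl⟩) hcdpair
        hnc hL p0 p hp0cd hp02 hpts hppb hcdne (Ne.symm hstne) hne_c.2 hne_d.2 hne_t.2
        (by linarith) (by nlinarith) (by nlinarith) (by nlinarith)
  · rcases lt_or_gt_of_ne fS0 with hfs | hfs
    · right
      exact key_pt n T a b c d (T.tgt i) (T.src i) i0 i 1 (Or.inr ⟨rfl, rfl⟩) hcdpair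
        hnc hL p0 p hp0cd hp02 hpts hppb hcdne (Ne.symm hstne) hne_c.2 hne_d.2 hne_t.2
        (by linarith) (by nlinarith) (by nlinarith) (by nlinarith)
    · left
      exact key_pt n T a b c d (T.src i) (T.tgt i) i0 i 1 (Or.inl ⟨rfl, rfl⟩) hcdpair
        hnc hL p0 p hp0cd hp02 hp1 hppb hcdne hstne hne_c.2 hne_d.2 hne_s.2
        (by linarith) (by linarith) (by nlinarith) (by nlinarith)


end L23
end

/-- Lemma 2.3(c). -/
theorem cross_M_not_cross_L_implies_endpoint
    (n : ℕ) (hn : 1 ≤ n) (T : Triangulation n) (a b c d : Fin (n + 3))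
    (i0 i1 i1' : Fin (2 * n + 3))
    (hab : a ≠ b) (hnadj : ¬ Adj n a b)
    (hM : ¬ ∃ i : Fin (2 * n + 3), Joins n T i a b)
    (hi0d : i0.val < n) (hi0M : ECross n T i0 a b)
    (hclosest : ∀ j : Fin (2 * n + 3), j.val < n → ECross n T j a b → j ≠ i0 →
      ∀ x ∈ crossPts n T i0 a b, ∀ y ∈ crossPts n T j a b,
        dist (vtx n a) x < dist (vtx n a) y)
    (hcd : Joins n T i0 c d)
    (hi1' : Joins n T i1' a c) (hi1 : Joins n T i1 a d)
    (i : Fin (2 * n + 3)) (hiM : ECross n T i a b) :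
    (¬ ECross n T i c b → T.src i = c ∨ T.tgt i = c) ∧
    (¬ ECross n T i d b → T.src i = d ∨ T.tgt i = d) := by
  have part : ∀ c' d' : Fin (n+3), Joins n T i0 c' d' →
      (¬ ECross n T i c' b → T.src i = c' ∨ T.tgt i = c') := by
    intro c' d' hcd' hL
    exact L23.key n T a b c' d' i0 i hab hM hi0d hi0M hclosest hcd' hiM hL
  refine ⟨part c d hcd, part d c ?_⟩
  rcases hcd with ⟨h1, h2⟩ | ⟨h1, h2⟩
  · exact Or.inr ⟨h1, h2⟩
  · exact Or.inl ⟨h1, h2⟩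
end
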